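/- arXiv:2603.19663 — 7 statements merged into one kernel-verified Lean document; each statement's English description precedes it below -/
import Mathlib

section
/- Let N ≥ 1 be an integer, D_u, D_v > 0, q > 1, −N/2 ≤ κ < 0, and set σ = 1/(4 D_u (q−1)). Suppose 0 < λ < 2 N σ D_v − κ, and let θ : [0,∞) → ℝ be a positive C² solution on all of [0,∞) of D_v θ'' + (4σ D_v + 1/2) r θ' + D_v (N−1) θ'/r + (4σ² D_v + σ) r² θ + (2 N σ D_v − κ) θ = λ θ^q with θ(0) = 1, θ'(0) = 0. Then θ is decreasing on [0,∞) and lim_{r→∞} θ(r) = 0. -/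
open Real Set Filter
open Topology

set_option maxHeartbeats 2000000 in
/-- For the transformed profile equation (with `σ = 1/(4Dᵤ(q−1))`)
`Dᵥ θ'' + (4σDᵥ + 1/2) r θ' + Dᵥ(N−1)θ'/r + (4σ²Dᵥ + σ) r² θ + (2NσDᵥ − κ) θ = λ θ^q`
on `(0,∞)` with `θ(0)=1`, `θ'(0)=0`, `−N/2 ≤ κ < 0` and `0 < λ < 2NσDᵥ − κ`,
any globally defined positive C² solution `θ` is decreasing on `[0,∞)` and
tends to `0` at infinity. -/
theorem stmt9
    (N : ℕ) (hN : 1 ≤ N) (Du Dv q κ lam σ : ℝ)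
    (hDu : 0 < Du) (hDv : 0 < Dv) (hq : 1 < q)
    (hκ₁ : -(N : ℝ) / 2 ≤ κ) (hκ₂ : κ < 0)
    (hσ : σ = 1 / (4 * Du * (q - 1)))
    (hlam : 0 < lam) (hlam' : lam < 2 * N * σ * Dv - κ)
    (θ dθ ddθ : ℝ → ℝ)
    (hpos : ∀ r ∈ Ici (0:ℝ), 0 < θ r)
    (hθ' : ∀ r ∈ Ici (0:ℝ), HasDerivWithinAt θ (dθ r) (Ici 0) r)
    (hθ'' : ∀ r ∈ Ici (0:ℝ), HasDerivWithinAt dθ (ddθ r) (Ici 0) r)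
    (hODE : ∀ r ∈ Ioi (0:ℝ),
      Dv * ddθ r + (4 * σ * Dv + 1/2) * r * dθ r + Dv * ((N : ℝ) - 1) * dθ r / r
        + (4 * σ ^ 2 * Dv + σ) * r ^ 2 * θ r + (2 * N * σ * Dv - κ) * θ r
          = lam * θ r ^ q)
    (hθ0 : θ 0 = 1) (hdθ0 : dθ 0 = 0) :
    AntitoneOn θ (Ici 0) ∧ Tendsto θ atTop (nhds 0) := by
  have hq1 : (0:ℝ) < q - 1 := sub_pos.mpr hq
  have hσpos : 0 < σ := by rw [hσ]; positivity
  set β : ℝ := 4*σ + 1/(2*Dv) with hβdef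
  have hβ : 0 < β := by positivity
  set c : ℝ := 2*N*σ*Dv - κ with hcdef
  have hc : 0 < c := lt_trans hlam hlam'
  set a : ℝ := 4*σ^2*Dv + σ with hadef
  have ha : 0 < a := by positivity
  set ρ : ℝ → ℝ := fun r => r^(N-1) * Real.exp (β*r^2/2) with hρdef
  set g : ℝ → ℝ := fun r => ρ r * dθ r with hgdef
  have hρpos : ∀ r : ℝ, 0 < r → 0 < ρ r := by
    intro r hr; exact mul_pos (pow_pos hr _) (Real.exp_pos _)
  have hpowkey : ∀ r : ℝ, ((N-1:ℕ):ℝ) * r^(N-2) * r = ((N-1:ℕ):ℝ) * r^(N-1) := by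
    intro r
    match N, hN with
    | 1, _ => simp
    | (n+2), _ =>
        simp only [show n+2-2 = n from rfl, show n+2-1 = n+1 from rfl, pow_succ]; ring
  have hcast : ((N-1:ℕ):ℝ) = (N:ℝ) - 1 := by
    rw [Nat.cast_sub hN]; norm_num
  have hρderiv : ∀ r : ℝ, HasDerivAt ρ
      (((N-1:ℕ):ℝ)*r^(N-2)*Real.exp (β*r^2/2) + r^(N-1)*(β*r)*Real.exp (β*r^2/2)) r := by
    intro r
    have h1 : HasDerivAt (fun r : ℝ => r^(N-1)) (((N-1:ℕ):ℝ)*r^(N-1-1)) r := hasDerivAt_pow _ _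
    have h2 : HasDerivAt (fun r : ℝ => β*r^2/2) (β*r) r := by
      have := ((hasDerivAt_pow 2 r).const_mul β).div_const 2
      exact this.congr_deriv (by push_cast; ring)
    have h3 : HasDerivAt (fun r : ℝ => Real.exp (β*r^2/2)) (Real.exp (β*r^2/2) * (β*r)) r := h2.exp
    have := h1.mul h3
    refine this.congr_deriv ?_
    have : N - 1 - 1 = N - 2 := by omega
    rw [this]; ring
  have hg' : ∀ r ∈ Ioi (0:ℝ), HasDerivWithinAt g
      (ρ r / Dv * (lam * θ r ^ q - c * θ r - a * r^2 * θ r)) (Ici 0) r := by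
    intro r hr
    have hr0 : (0:ℝ) < r := hr
    have hrne : r ≠ 0 := ne_of_gt hr0
    have hd := ((hρderiv r).hasDerivWithinAt).mul (hθ'' r (le_of_lt hr0))
    refine hd.congr_deriv ?_
    have hode := hODE r hr
    have hQ : ((N-1:ℕ):ℝ) * r^(N-2) = ((N:ℝ)-1) * r^(N-1) / r := by
      rw [eq_div_iff hrne, ← hcast]; exact hpowkey r
    have hsub : lam * θ r ^ q - c * θ r - a * r^2 * θ r
        = Dv * ddθ r + (4*σ*Dv + 1/2) * r * dθ r + Dv*((N:ℝ)-1)*dθ r/r := by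
      linarith [hode]
    simp only [hρdef]
    rw [hQ, hsub, hβdef]
    generalize Real.exp ((4*σ + 1/(2*Dv))*r^2/2) = E
    field_simp
    ring
  have hcontθ : ContinuousOn θ (Ici 0) := fun r hr => (hθ' r hr).continuousWithinAt
  have hcontdθ : ContinuousOn dθ (Ici 0) := fun r hr => (hθ'' r hr).continuousWithinAt
  have hcontρ : Continuous ρ := by
    simp only [hρdef]; fun_prop
  have hcontg : ContinuousOn g (Ici 0) := hcontρ.continuousOn.mul hcontdθ
  have hg0 : g 0 = 0 := by simp [hgdef, hdθ0]
  set F : ℝ → ℝ := fun r => lam * θ r ^ q - c * θ r - a * r^2 * θ r with hFdef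
  have hFneg : ∀ r ∈ Ioi (0:ℝ), θ r ≤ 1 → F r < 0 := by
    intro r hr h1
    have hθr : 0 < θ r := hpos r (mem_Ici.mpr (le_of_lt hr))
    have h2 : θ r ^ q ≤ θ r := by
      have := Real.rpow_le_rpow_of_exponent_ge hθr h1 (le_of_lt hq)
      rwa [Real.rpow_one] at this
    have h3 : lam * θ r ^ q ≤ lam * θ r := by
      exact mul_le_mul_of_nonneg_left h2 (le_of_lt hlam)
    have h4 : 0 < a * r^2 * θ r := mul_pos (mul_pos ha (pow_pos hr 2)) hθr
    have h5 : lam * θ r < c * θ r := by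
      have := mul_lt_mul_of_pos_right hlam' hθr
      linarith
    simp only [hFdef]; linarith
  -- main monotonicity engine
  have hgneg : ∀ b : ℝ, 0 < b → (∀ s ∈ Ioc (0:ℝ) b, F s < 0) → ∀ s ∈ Ioc (0:ℝ) b, g s < 0 := by
    intro b hb hF s hs
    have hanti : StrictAntiOn g (Icc 0 b) := by
      apply strictAntiOn_of_deriv_neg (convex_Icc 0 b)
        (hcontg.mono (Icc_subset_Ici_self))
      intro x hx
      rw [interior_Icc] at hx
      have hx0 : 0 < x := hx.1
      have hda : HasDerivAt g (ρ x / Dv * F x) x :=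
        (hg' x hx0).hasDerivAt (Ici_mem_nhds hx0)
      rw [hda.deriv]
      exact mul_neg_of_pos_of_neg (div_pos (hρpos x hx0) hDv) (hF x ⟨hx0, le_of_lt hx.2⟩)
    have := hanti ⟨le_refl 0, le_of_lt hb⟩ ⟨le_of_lt hs.1, hs.2⟩ hs.1
    rwa [hg0] at this
  have hdθneg : ∀ b : ℝ, 0 < b → (∀ s ∈ Ioc (0:ℝ) b, F s < 0) → ∀ s ∈ Ioc (0:ℝ) b, dθ s < 0 := by
    intro b hb hF s hs
    have hg := hgneg b hb hF s hs
    have hρ := hρpos s hs.1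
    by_contra h
    simp only [hgdef] at hg
    nlinarith [mul_nonneg hρ.le (not_lt.mp h)]
  have hθle : ∀ b : ℝ, 0 < b → (∀ s ∈ Ioc (0:ℝ) b, F s < 0) → ∀ s ∈ Icc (0:ℝ) b, θ s ≤ 1 := by
    intro b hb hF s hs
    have hanti : AntitoneOn θ (Icc 0 b) := by
      apply antitoneOn_of_deriv_nonpos (convex_Icc 0 b) (hcontθ.mono Icc_subset_Ici_self)
      · intro x hx
        rw [interior_Icc] at hx
        exact ((hθ' x (le_of_lt hx.1)).hasDerivAt (Ici_mem_nhds hx.1)).differentiableAt.differentiableWithinAt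
      · intro x hx
        rw [interior_Icc] at hx
        rw [((hθ' x (le_of_lt hx.1)).hasDerivAt (Ici_mem_nhds hx.1)).deriv]
        exact le_of_lt (hdθneg b hb hF x ⟨hx.1, le_of_lt hx.2⟩)
    have := hanti ⟨le_refl 0, le_of_lt hb⟩ hs hs.1
    rwa [hθ0] at this
  -- continuity of F
  have hcontF : ContinuousOn F (Ici 0) := by
    intro x hx
    have h1 : ContinuousWithinAt (fun r => θ r ^ q) (Ici 0) x :=
      (hcontθ x hx).rpow_const (Or.inl (hpos x hx).ne')
    simp only [hFdef]
    exact ((h1.const_mul lam).sub ((hcontθ x hx).const_mul c)).sub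
      ((((continuousWithinAt_id.pow 2).const_mul a).mul (hcontθ x hx)))
  -- Part A : θ ≤ 1 everywhere on [0, ∞)
  have hA : ∀ r ∈ Ici (0:ℝ), θ r ≤ 1 := by
    by_contra hcon
    push_neg at hcon
    obtain ⟨r₀, hr₀, hθr₀⟩ := hcon
    set B : Set ℝ := {r : ℝ | 0 ≤ r ∧ 1 < θ r} with hBdef
    have hBne : B.Nonempty := ⟨r₀, hr₀, hθr₀⟩
    have hBbdd : BddBelow B := ⟨0, fun x hx => hx.1⟩
    set t : ℝ := sInf B with htdef
    have ht0 : 0 ≤ t := le_csInf hBne (fun x hx => hx.1)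
    have htle : ∀ s, 0 ≤ s → s < t → θ s ≤ 1 := by
      intro s hs hst
      by_contra h
      exact (notMem_of_lt_csInf hst hBbdd) ⟨hs, lt_of_not_ge h⟩
    have hθt : θ t ≤ 1 := by
      rcases eq_or_lt_of_le ht0 with h | h
      · rw [← h, hθ0]
      · have hcw : Tendsto θ (𝓝[Ico 0 t] t) (𝓝 (θ t)) :=
          (hcontθ t ht0).mono Ico_subset_Ici_self
        rw [nhdsWithin_Ico_eq_nhdsLT h] at hcw
        apply le_of_tendsto hcw
        filter_upwards [eventually_mem_nhdsWithin, eventually_nhdsWithin_of_eventually_nhds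
          (eventually_gt_nhds (by linarith : (0:ℝ) < t))] with s hs1 hs2
        exact htle s (le_of_lt hs2) hs1
    have hFt : F t < 0 := by
      rcases eq_or_lt_of_le ht0 with h | h
      · simp only [hFdef, ← h, hθ0, Real.one_rpow]
        norm_num
        linarith
      · exact hFneg t h hθt
    -- F < 0 on a right-neighborhood
    have hev : {r : ℝ | F r < 0} ∈ 𝓝[Ici 0] t := by
      have := (hcontF t ht0).tendsto
      exact this (Iio_mem_nhds hFt)
    rw [Metric.mem_nhdsWithin_iff] at hev
    obtain ⟨ε, hε, hball⟩ := hev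
    set b : ℝ := t + ε/2 with hbdef
    have hbt : t < b := by simp only [hbdef]; linarith
    have hb0 : 0 < b := lt_of_le_of_lt ht0 hbt
    have hFb : ∀ s ∈ Ioc (0:ℝ) b, F s < 0 := by
      intro s hs
      rcases le_or_gt s t with h | h
      · rcases eq_or_lt_of_le h with h' | h'
        · rw [h']; exact hFt
        · exact hFneg s hs.1 (htle s (le_of_lt hs.1) h')
      · apply hball
        constructor
        · rw [Metric.mem_ball, Real.dist_eq, abs_of_pos (by linarith)]
          have := hs.2
          simp only [hbdef] at this
          linarith
        · exact le_of_lt hs.1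
    obtain ⟨s, hsB, hsb⟩ := (csInf_lt_iff hBbdd hBne).mp (lt_of_eq_of_lt htdef.symm hbt)
    exact absurd (hθle b hb0 hFb s ⟨hsB.1, le_of_lt hsb⟩) (not_le.mpr hsB.2)
  -- global consequences
  have hFall : ∀ s ∈ Ioi (0:ℝ), F s < 0 := fun s hs => hFneg s hs (hA s (mem_Ici.mpr (le_of_lt hs)))
  have hdθall : ∀ s ∈ Ioi (0:ℝ), dθ s < 0 := by
    intro s hs
    exact hdθneg s hs (fun x hx => hFall x hx.1) s ⟨hs, le_refl s⟩
  have hAnti : AntitoneOn θ (Ici 0) := by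
    apply antitoneOn_of_deriv_nonpos (convex_Ici 0) hcontθ
    · intro x hx
      rw [interior_Ici] at hx
      exact ((hθ' x (mem_Ici.mpr (le_of_lt hx))).hasDerivAt (Ici_mem_nhds hx)).differentiableAt.differentiableWithinAt
    · intro x hx
      rw [interior_Ici] at hx
      rw [((hθ' x (mem_Ici.mpr (le_of_lt hx))).hasDerivAt (Ici_mem_nhds hx)).deriv]
      exact le_of_lt (hdθall x hx)
  refine ⟨hAnti, ?_⟩
  -- Part B : the limit
  set ψ : ℝ → ℝ := fun r => θ (max r 0) with hψdef
  have hψanti : Antitone ψ := fun r s hrs =>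
    hAnti (le_max_right r 0) (le_max_right s 0) (max_le_max hrs (le_refl 0))
  have hψbdd : BddBelow (range ψ) := by
    refine ⟨0, ?_⟩
    rintro x ⟨r, rfl⟩
    exact (hpos _ (le_max_right r 0)).le
  set L : ℝ := ⨅ r, ψ r with hLdef
  have hψtend : Tendsto ψ atTop (𝓝 L) := tendsto_atTop_ciInf hψanti hψbdd
  have heq : θ =ᶠ[atTop] ψ := by
    filter_upwards [eventually_ge_atTop (0:ℝ)] with r hr
    simp [hψdef, max_eq_left hr]
  have hθtend : Tendsto θ atTop (𝓝 L) := hψtend.congr' heq.symm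
  have hL0 : 0 ≤ L := by
    apply ge_of_tendsto hθtend
    filter_upwards [eventually_ge_atTop (0:ℝ)] with r hr
    exact (hpos r hr).le
  have hLge : ∀ r ∈ Ici (0:ℝ), L ≤ θ r := by
    intro r hr
    have : L ≤ ψ r := ciInf_le hψbdd r
    simpa [hψdef, max_eq_left (mem_Ici.mp hr)] using this
  clear_value ψ L
  suffices hLz : L = 0 by rwa [hLz] at hθtend
  by_contra hLne
  have hL : 0 < L := lt_of_le_of_ne hL0 (Ne.symm hLne)
  set K : ℝ := (lam + a*L*N/β)/Dv with hKdef
  have hK : 0 < K := by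
    apply div_pos _ hDv
    have : 0 ≤ a*L*N/β := by positivity
    linarith
  set c₀ : ℝ := a*L/(Dv*β) with hc₀def
  have hc₀ : 0 < c₀ := by positivity
  clear_value K c₀
  set H : ℝ → ℝ := fun r => g r + c₀ * (r * ρ r) - (K/β) * ρ r with hHdef
  -- derivative of r * ρ r
  have hφderiv : ∀ r : ℝ, HasDerivAt (fun r => r * ρ r) (ρ r * ((N:ℝ) + β*r^2)) r := by
    intro r
    have h1 := (hasDerivAt_id r).mul (hρderiv r)
    refine h1.congr_deriv ?_
    have hkey := hpowkey r
    rw [hcast] at hkey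
    simp only [hρdef, id_eq, hcast]
    linear_combination (Real.exp (β*r^2/2)) * hkey
  -- H is antitone on [1, ∞)
  have hHanti : AntitoneOn H (Ici 1) := by
    have hIci : Ici (1:ℝ) ⊆ Ici 0 := Ici_subset_Ici.mpr zero_le_one
    have hder : ∀ x ∈ Ioi (1:ℝ), HasDerivAt H
        (ρ x / Dv * F x + c₀ * (ρ x * ((N:ℝ) + β*x^2))
          - (K/β) * (((N-1:ℕ):ℝ)*x^(N-2)*Real.exp (β*x^2/2) + x^(N-1)*(β*x)*Real.exp (β*x^2/2))) x := by
      intro x hx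
      have hx0 : (0:ℝ) < x := lt_trans zero_lt_one hx
      have h1 : HasDerivAt g (ρ x / Dv * F x) x :=
        (hg' x hx0).hasDerivAt (Ici_mem_nhds hx0)
      exact (h1.add ((hφderiv x).const_mul c₀)).sub ((hρderiv x).const_mul (K/β))
    have hcontH : ContinuousOn H (Ici 1) := by
      apply ContinuousOn.sub
      · exact (hcontg.mono hIci).add
          (continuous_const.mul (continuous_id.mul hcontρ)).continuousOn
      · exact (continuous_const.mul hcontρ).continuousOn
    apply antitoneOn_of_deriv_nonpos (convex_Ici 1) hcontH
    · intro x hx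
      rw [interior_Ici] at hx
      exact (hder x hx).differentiableAt.differentiableWithinAt
    · intro x hx
      rw [interior_Ici] at hx
      rw [(hder x hx).deriv]
      have hx1 : (1:ℝ) ≤ x := le_of_lt hx
      have hx0 : (0:ℝ) < x := lt_trans zero_lt_one hx
      have hθx : 0 < θ x := hpos x hx0.le
      have hθx1 : θ x ≤ 1 := hA x hx0.le
      have hLx : L ≤ θ x := hLge x hx0.le
      have hρx : 0 < ρ x := hρpos x hx0
      -- bound on F
      have hFb : F x ≤ lam - a*L*x^2 := by
        have hθq : θ x ^ q ≤ 1 := Real.rpow_le_one hθx.le hθx1 (by linarith)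
        have h1 : lam * θ x ^ q ≤ lam := by nlinarith
        have h2 : 0 ≤ c * θ x := by positivity
        have h3 : a*L*x^2 ≤ a*x^2*θ x := by
          nlinarith [mul_nonneg (mul_nonneg ha.le (sq_nonneg x)) (sub_nonneg.mpr hLx)]
        simp only [hFdef]; linarith
      -- lower bound on ρ'
      have hρ'ge : β*x*ρ x ≤ ((N-1:ℕ):ℝ)*x^(N-2)*Real.exp (β*x^2/2)
          + x^(N-1)*(β*x)*Real.exp (β*x^2/2) := by
        have h1 : 0 ≤ ((N-1:ℕ):ℝ)*x^(N-2)*Real.exp (β*x^2/2) := by positivity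
        have h2 : β*x*ρ x = x^(N-1)*(β*x)*Real.exp (β*x^2/2) := by
          simp only [hρdef]; ring
        linarith
      have t1 : ρ x/Dv * F x ≤ ρ x/Dv*(lam - a*L*x^2) :=
        mul_le_mul_of_nonneg_left hFb (by positivity)
      have t2 : (K/β)*(β*x*ρ x) ≤ (K/β)*(((N-1:ℕ):ℝ)*x^(N-2)*Real.exp (β*x^2/2)
          + x^(N-1)*(β*x)*Real.exp (β*x^2/2)) :=
        mul_le_mul_of_nonneg_left hρ'ge (by positivity)
      have hid : ρ x/Dv*(lam - a*L*x^2) + c₀*(ρ x*((N:ℝ)+β*x^2)) - (K/β)*(β*x*ρ x)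
          = K*ρ x*(1 - x) := by
        simp only [hKdef, hc₀def]
        field_simp
        ring
      have hfin : K*ρ x*(1 - x) ≤ 0 := by
        nlinarith [mul_nonneg (mul_nonneg hK.le hρx.le) (sub_nonneg.mpr hx1)]
      linarith
  -- extract linear decay of dθ
  clear_value β
  set e₀ : ℝ := Real.exp (β/2) with he₀def
  have he₀ : 0 < e₀ := Real.exp_pos _
  have hρge : ∀ r : ℝ, 1 ≤ r → e₀ ≤ ρ r := by
    intro r hr
    have h1 : (1:ℝ) ≤ r^(N-1) := one_le_pow₀ hr
    have h2 : e₀ ≤ Real.exp (β*r^2/2) := by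
      rw [he₀def, Real.exp_le_exp]
      have h3 : (1:ℝ) ≤ r^2 := one_le_pow₀ hr
      have h4 : β*1 ≤ β*r^2 := mul_le_mul_of_nonneg_left h3 hβ.le
      linarith
    calc e₀ = 1 * e₀ := (one_mul _).symm
    _ ≤ r^(N-1) * Real.exp (β*r^2/2) := by
        apply mul_le_mul h1 h2 he₀.le (by positivity)
    _ = ρ r := rfl
  clear_value H
  set M : ℝ := |H 1|/e₀ + K/β with hMdef
  have hdθb : ∀ r : ℝ, 1 ≤ r → dθ r ≤ M - c₀*r := by
    intro r hr
    have hr0 : (0:ℝ) < r := lt_of_lt_of_le zero_lt_one hr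
    have hρr : 0 < ρ r := hρpos r hr0
    have hH1 : H r ≤ H 1 := hHanti (self_mem_Ici) hr hr
    have hgr : ρ r * dθ r ≤ H 1 - c₀*(r*ρ r) + (K/β)*ρ r := by
      simp only [hHdef, hgdef] at hH1 ⊢
      linarith
    have habs : H 1 ≤ (|H 1|/e₀) * ρ r := by
      have h1 : (|H 1|/e₀) * e₀ ≤ (|H 1|/e₀) * ρ r :=
        mul_le_mul_of_nonneg_left (hρge r hr) (by positivity)
      rw [div_mul_cancel₀ _ he₀.ne'] at h1
      exact le_trans (le_abs_self _) h1
    have : ρ r * dθ r ≤ ρ r * (M - c₀*r) := by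
      simp only [hMdef]
      calc ρ r * dθ r ≤ H 1 - c₀*(r*ρ r) + (K/β)*ρ r := hgr
      _ ≤ (|H 1|/e₀) * ρ r - c₀*(r*ρ r) + (K/β)*ρ r := by linarith
      _ = ρ r * ((|H 1|/e₀ + K/β) - c₀*r) := by ring
    exact (mul_le_mul_iff_of_pos_left hρr).mp this
  set R : ℝ := max 1 ((M+1)/c₀) with hRdef
  have hR1 : (1:ℝ) ≤ R := le_max_left _ _
  have hR0 : (0:ℝ) ≤ R := le_trans zero_le_one hR1
  have hdθR : ∀ r : ℝ, R ≤ r → dθ r ≤ -1 := by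
    intro r hr
    have hr1 : (1:ℝ) ≤ r := le_trans hR1 hr
    have h1 : (M+1)/c₀ ≤ r := le_trans (le_max_right _ _) hr
    have h2 : M + 1 ≤ c₀ * r := by
      rw [div_le_iff₀ hc₀] at h1
      linarith
    linarith [hdθb r hr1]
  have hanti2 : AntitoneOn (fun r => θ r + r) (Ici R) := by
    apply antitoneOn_of_deriv_nonpos (convex_Ici R)
      ((hcontθ.mono (Ici_subset_Ici.mpr hR0)).add continuous_id.continuousOn)
    · intro x hx
      rw [interior_Ici] at hx
      have hx0 : (0:ℝ) < x := lt_of_le_of_lt hR0 hx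
      exact (((hθ' x hx0.le).hasDerivAt (Ici_mem_nhds hx0)).add
        (hasDerivAt_id x)).differentiableAt.differentiableWithinAt
    · intro x hx
      rw [interior_Ici] at hx
      have hx0 : (0:ℝ) < x := lt_of_le_of_lt hR0 hx
      rw [(((hθ' x hx0.le).hasDerivAt (Ici_mem_nhds hx0)).add (hasDerivAt_id x)).deriv]
      have := hdθR x hx.le
      simpa using by linarith
  have hθR : 0 < θ R := hpos R hR0
  set r₁ : ℝ := R + θ R + 1 with hr₁def
  have hr₁R : R ≤ r₁ := by simp only [hr₁def]; linarith
  have := hanti2 self_mem_Ici hr₁R hr₁R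
  have hr₁pos := hpos r₁ (le_trans hR0 hr₁R)
  simp only [hr₁def] at this hr₁pos
  linarith
end

section
/- Let N ≥ 1 be an integer, D_u, D_v > 0, q > 1 and κ < −N/2, and set ρ(r) = r^{N−1} e^{r²/(4D_v)}. There exists ε > 0 such that for every 0 < λ < ε there is no positive C² function φ : [0,∞) → ℝ with φ(0) = 1, φ'(0) = 0 solving D_v (ρ φ')' = κ ρ φ + λ ρ e^{−r²/(4D_u)} φ^q on (0,∞); in fact for such λ the solution of the initial value problem reaches 0 at some finite point. -/
open Real Set Filter Topology

private lemma key_ineq (N Dv δ m a r2 : ℝ) (hN1 : 1 ≤ N) (hDv : 0 < Dv) (hδ : 0 < δ)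
    (hm : m = -N/2 - δ/2) (haδ : a*δ = 2*N*Dv*δ + 4*N*Dv)
    (h0 : 0 ≤ r2) (hr2 : r2 ≤ a) :
    0 ≤ (-(2*Dv) * (N * 1) - (a * (N * 1) - (N+2) * r2)/2) - m * (a - r2) := by
  subst hm
  have hs0 : (0:ℝ) ≤ a - r2 := by linarith
  have hsa : a - r2 ≤ a := by linarith
  have h1 : a*δ^2 = 2*N*Dv*δ^2 + 4*N*Dv*δ := by linear_combination δ * haδ
  by_contra hX
  push_neg at hX
  have hXδ : (-(2*Dv) * (N * 1) - (a * (N * 1) - (N+2) * r2)/2 -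
      (-N/2 - δ/2) * (a - r2)) * δ < 0 := mul_neg_of_neg_of_pos hX hδ
  have hint2 : Dv ≤ N*Dv := le_mul_of_one_le_left hDv.le hN1
  rcases le_or_gt 2 δ with hc | hc
  · have hint1 : (0:ℝ) ≤ (a - r2) * δ * (δ - 2) :=
      mul_nonneg (mul_nonneg hs0 hδ.le) (by linarith)
    nlinarith [haδ, h1, hint1, hint2, hXδ]
  · have hnn : (0:ℝ) ≤ δ * (2 - δ) := by nlinarith
    have hint3 := mul_le_mul_of_nonneg_right hsa hnn
    have hint4 : (0:ℝ) ≤ N*Dv*δ^2 :=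
      mul_nonneg (mul_nonneg (by linarith) hDv.le) (sq_nonneg δ)
    nlinarith [haδ, h1, hint3, hint4, hXδ]


set_option maxHeartbeats 3000000 in
/-- For the self-similar profile equation with `κ < −N/2` and `q > 1`,
there exists `ε > 0` such that for every `0 < λ < ε` there is no positive C² solution
on all of `[0,∞)` of `Dᵥ (ρ φ')' = κ ρ φ + λ ρ e^{-r²/(4Dᵤ)} φ^q`,
`ρ(r) = r^{N-1} e^{r²/(4Dᵥ)}`, `φ(0)=1`, `φ'(0)=0` (the solution of the initial value
problem reaches `0` at some finite point). -/
theorem stmt10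
    (N : ℕ) (hN : 1 ≤ N) (Du Dv κ q : ℝ)
    (hDu : 0 < Du) (hDv : 0 < Dv) (hq : 1 < q) (hκ : κ < -(N : ℝ) / 2)
    (ρ : ℝ → ℝ) (hρ : ∀ r : ℝ, ρ r = r ^ (N - 1) * Real.exp (r ^ 2 / (4 * Dv))) :
    ∃ ε > 0, ∀ lam : ℝ, 0 < lam → lam < ε →
      ¬ ∃ φ dφ : ℝ → ℝ,
          (∀ r ∈ Ici (0:ℝ), 0 < φ r) ∧
          (∀ r ∈ Ici (0:ℝ), HasDerivWithinAt φ (dφ r) (Ici 0) r) ∧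
          (∀ r ∈ Ioi (0:ℝ), HasDerivAt (fun s => Dv * (ρ s * dφ s))
            (κ * ρ r * φ r + lam * ρ r * Real.exp (-(r ^ 2) / (4 * Du)) * φ r ^ q) r) ∧
          φ 0 = 1 ∧ dφ 0 = 0 := by
  have hN1 : (1:ℝ) ≤ N := by exact_mod_cast hN
  refine ⟨-(N : ℝ)/2 - κ, by linarith, ?_⟩
  rintro lam hlam0 hlamε ⟨φ, dφ, hφpos, hφderiv, hODE, hφ0, hdφ0⟩
  obtain ⟨δ, hδ_def⟩ : ∃ x : ℝ, x = -(N : ℝ)/2 - κ - lam := ⟨_, rfl⟩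
  have hδ : 0 < δ := by rw [hδ_def]; linarith
  obtain ⟨m, hm_def⟩ : ∃ x : ℝ, x = -(N:ℝ)/2 - δ/2 := ⟨_, rfl⟩
  have hmneg : m < 0 := by rw [hm_def]; linarith
  obtain ⟨a, ha_def⟩ : ∃ x : ℝ, x = 2*N*Dv*(1 + 2/δ) := ⟨_, rfl⟩
  have ha : 0 < a := by
    have h1 : (0:ℝ) < 2*N*Dv := by nlinarith
    have h2 : (0:ℝ) < 1 + 2/δ := by positivity
    rw [ha_def]; exact mul_pos h1 h2
  have haδ : a*δ = 2*N*Dv*δ + 4*N*Dv := by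
    rw [ha_def]; field_simp; ring
  obtain ⟨R, hR_def⟩ : ∃ x : ℝ, x = Real.sqrt a := ⟨_, rfl⟩
  have hR : 0 < R := by rw [hR_def]; exact Real.sqrt_pos.mpr ha
  have hR2 : R^2 = a := by rw [hR_def]; exact Real.sq_sqrt ha.le
  obtain ⟨B, hB_def⟩ : ∃ x : ℝ, x = (1 + δ/(2*lam)) ^ (q⁻¹) := ⟨_, rfl⟩
  have hbase : 1 < 1 + δ/(2*lam) := by
    have := div_pos hδ (by linarith : (0:ℝ) < 2*lam); linarith
  have hB1 : 1 < B := by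
    rw [hB_def]
    exact Real.one_lt_rpow_iff_of_pos (by linarith) |>.mpr (Or.inl ⟨hbase, by positivity⟩)
  have hBq : B ^ q = 1 + δ/(2*lam) := by
    rw [hB_def, ← Real.rpow_mul (by linarith), inv_mul_cancel₀ (by linarith : q ≠ 0),
      Real.rpow_one]
  have hlamBq : lam * B^q = lam + δ/2 := by rw [hBq]; field_simp
  -- functions
  obtain ⟨ψ, hψ_def⟩ : ∃ f : ℝ → ℝ, f = fun r => (a - r^2) * Real.exp (-r^2/(4*Dv)) := ⟨_, rfl⟩
  obtain ⟨dψ, hdψ_def⟩ : ∃ f : ℝ → ℝ, f = fun r => (-(2*r) - (a - r^2) * r/(2*Dv)) * Real.exp (-r^2/(4*Dv)) := ⟨_, rfl⟩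
  obtain ⟨P, hP_def⟩ : ∃ f : ℝ → ℝ, f = fun r => -(2*Dv) * r^N - (a * r^N - r^(N+2))/2 := ⟨_, rfl⟩
  obtain ⟨dP, hdP_def⟩ : ∃ f : ℝ → ℝ, f = fun r =>
    -(2*Dv) * ((N:ℝ) * r^(N-1)) - (a * ((N:ℝ) * r^(N-1)) - ((N:ℝ)+2) * r^(N+1))/2 := ⟨_, rfl⟩
  -- derivative facts
  have hψd : ∀ r : ℝ, HasDerivAt ψ (dψ r) r := by
    intro r
    rw [hψ_def]
    have h1 : HasDerivAt (fun x : ℝ => a - x^2) (-(2*r)) r := by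
      simpa using ((hasDerivAt_pow 2 r).const_sub a)
    have h2 : HasDerivAt (fun x : ℝ => Real.exp (-x^2/(4*Dv)))
        (Real.exp (-r^2/(4*Dv)) * (-(2*r)/(4*Dv))) r := by
      have h3 : HasDerivAt (fun x : ℝ => -x^2/(4*Dv)) (-(2*r)/(4*Dv)) r := by
        simpa using ((hasDerivAt_pow 2 r).neg.div_const (4*Dv))
      simpa [mul_comm] using h3.exp
    have := h1.mul h2
    refine this.congr_deriv ?_
    simp only [hdψ_def]
    field_simp
    ring
  have hPd : ∀ r : ℝ, HasDerivAt P (dP r) r := by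
    intro r
    rw [hP_def]
    have h1 := hasDerivAt_pow N r
    have h2 := hasDerivAt_pow (N+2) r
    have h3 := ((h1.const_mul (-(2*Dv))).sub (((h1.const_mul a).sub h2).div_const 2))
    rw [show N+2-1 = N+1 from rfl] at h3
    refine h3.congr_deriv ?_
    simp only [hdP_def]
    push_cast
    ring
  have hpow1 : ∀ r : ℝ, r^(N-1) * r = r^N := by
    intro r; rw [← pow_succ]; congr 1; omega
  have hpow3 : ∀ r : ℝ, r^(N-1) * r^3 = r^(N+2) := by
    intro r; rw [← pow_add]; congr 1; omega
  have hEE : ∀ r : ℝ, Real.exp (r^2/(4*Dv)) * Real.exp (-r^2/(4*Dv)) = 1 := by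
    intro r
    rw [← Real.exp_add, show r^2/(4*Dv) + -r^2/(4*Dv) = 0 by ring, Real.exp_zero]
  have hρψ : ∀ r : ℝ, ρ r * ψ r = r^(N-1) * (a - r^2) := by
    intro r
    rw [hρ r]
    simp only [hψ_def]
    linear_combination (r^(N-1) * (a - r^2)) * hEE r
  have hID : ∀ r : ℝ, Dv * (ρ r * dψ r) = P r := by
    intro r
    rw [hρ r]
    simp only [hdψ_def, hP_def]
    rw [← hpow1 r, ← hpow3 r, show -r^2/(4*Dv) = -(r^2/(4*Dv)) by ring, Real.exp_neg]
    have hE := Real.exp_ne_zero (r^2/(4*Dv))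
    field_simp

  -- basic positivity / continuity facts
  have hρpos : ∀ r : ℝ, 0 < r → 0 < ρ r := by
    intro r hr; rw [hρ r]; positivity
  have hφcont : ContinuousOn φ (Ici 0) := fun x hx => (hφderiv x hx).continuousWithinAt
  have hφd : ∀ r : ℝ, 0 < r → HasDerivAt φ (dφ r) r := fun r hr =>
    (hφderiv r hr.le).hasDerivAt (Ici_mem_nhds hr)
  have hψcont : Continuous ψ := by
    rw [hψ_def]; fun_prop
  have hPcont : Continuous P := by
    rw [hP_def]; fun_prop
  have hψpos : ∀ r : ℝ, 0 ≤ r → r < R → 0 < ψ r := by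
    intro r h0 hrR
    have h2 : r^2 < a := by
      rw [← hR2]; exact pow_lt_pow_left₀ hrR h0 (by norm_num)
    have h3 := Real.exp_pos (-r^2/(4*Dv))
    simp only [hψ_def]
    exact mul_pos (by linarith) h3
  have hψnn : ∀ r : ℝ, 0 ≤ r → r ≤ R → 0 ≤ ψ r := by
    intro r h0 hrR
    have h2 : r^2 ≤ a := by
      rw [← hR2]; exact pow_le_pow_left₀ h0 hrR 2
    have h3 := Real.exp_pos (-r^2/(4*Dv))
    simp only [hψ_def]
    exact mul_nonneg (by linarith) h3.le
  -- supersolution inequality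
  have hsuper : ∀ r : ℝ, 0 ≤ r → r ≤ R → m * (ρ r * ψ r) ≤ dP r := by
    intro r h0 hrR
    rw [hρψ r]
    simp only [hdP_def]
    have hr2 : r^2 ≤ a := by
      rw [← hR2]; exact pow_le_pow_left₀ h0 hrR 2
    have hrp : (0:ℝ) ≤ r^(N-1) := pow_nonneg h0 _
    have hrpow : r^(N+1) = r^(N-1) * r^2 := by rw [← pow_add]; congr 1; omega
    rw [hrpow]
    have hs0 : (0:ℝ) ≤ a - r^2 := by linarith
    have hs2a : a - r^2 ≤ a := by nlinarith [sq_nonneg r]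
    have key := key_ineq (N:ℝ) Dv δ m a (r^2) hN1 hDv hδ hm_def haδ (by positivity) hr2
    linarith [mul_nonneg hrp key]
  -- nonlinear term estimate
  have hGlt : ∀ r : ℝ, 0 < r → φ r ≤ B →
      κ * ρ r * φ r + lam * ρ r * Real.exp (-(r^2)/(4*Du)) * φ r ^ q < m * (ρ r * φ r) := by
    intro r hr hφB
    have hρr := hρpos r hr
    have hφp := hφpos r hr.le
    have hexp : Real.exp (-(r^2)/(4*Du)) < 1 := by
      rw [Real.exp_lt_one_iff]
      have : 0 < r^2 := by positivity
      have h4 : 0 < 4*Du := by linarith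
      exact div_neg_of_neg_of_pos (by linarith) h4
    have hq0 : 0 < φ r ^ q := Real.rpow_pos_of_pos hφp q
    have hrpow : φ r ^ q ≤ B^q * φ r := by
      have e1 : φ r ^ q = φ r ^ (q-1) * φ r := by
        rw [← Real.rpow_add_one (ne_of_gt hφp)]
        norm_num
      have e2 : φ r ^ (q-1) ≤ B ^ (q-1) :=
        Real.rpow_le_rpow hφp.le hφB (by linarith)
      have e3 : B ^ (q-1) ≤ B ^ q :=
        Real.rpow_le_rpow_of_exponent_le hB1.le (by linarith)
      rw [e1]
      have := mul_le_mul_of_nonneg_right (e2.trans e3) hφp.le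
      linarith
    have t1 : lam * ρ r * Real.exp (-(r^2)/(4*Du)) * φ r ^ q < lam * ρ r * φ r ^ q := by
      have := mul_lt_mul_of_pos_left hexp (mul_pos (mul_pos hlam0 hρr) hq0)
      linarith [this]
    have t2 : lam * ρ r * φ r ^ q ≤ lam * ρ r * (B^q * φ r) := by
      have := mul_le_mul_of_nonneg_left hrpow (mul_pos hlam0 hρr).le
      linarith [this]
    have t3 : κ * ρ r * φ r + lam * ρ r * (B^q * φ r) = m * (ρ r * φ r) := by
      have hmval : m = κ + lam + δ/2 := by rw [hm_def, hδ_def]; ring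
      rw [hmval]; linear_combination (ρ r * φ r) * hlamBq
    linarith [t1, t2, t3]
  -- pointwise derivative sign for W
  have hW'neg : ∀ r : ℝ, 0 < r → r < R → φ r ≤ B →
      (κ * ρ r * φ r + lam * ρ r * Real.exp (-(r^2)/(4*Du)) * φ r ^ q) * ψ r - φ r * dP r < 0 := by
    intro r hr hrR hφB
    have h1 := hGlt r hr hφB
    have h2 := hsuper r hr.le hrR.le
    have hψp := hψpos r hr.le hrR
    have hφp := hφpos r hr.le
    linarith [mul_lt_mul_of_pos_right h1 hψp, mul_le_mul_of_nonneg_left h2 hφp.le]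
  -- derivative of W
  have hWd : ∀ r : ℝ, 0 < r → HasDerivAt (fun x => Dv * (ρ x * dφ x) * ψ x - φ x * P x)
      ((κ * ρ r * φ r + lam * ρ r * Real.exp (-(r^2)/(4*Du)) * φ r ^ q) * ψ r - φ r * dP r) r := by
    intro r hr
    have h1 := (hODE r (mem_Ioi.mpr hr)).mul (hψd r)
    have h2 := (hφd r hr).mul (hPd r)
    have h3 := h1.sub h2
    refine h3.congr_deriv ?_
    rw [← hID r]
    ring

  -- named functions F and W
  obtain ⟨F, hF_def⟩ : ∃ f : ℝ → ℝ, f = fun s => Dv * (ρ s * dφ s) := ⟨_, rfl⟩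
  obtain ⟨W, hW_def⟩ : ∃ f : ℝ → ℝ,
      f = fun x => Dv * (ρ x * dφ x) * ψ x - φ x * P x := ⟨_, rfl⟩
  have hWF : ∀ x : ℝ, W x = F x * ψ x - φ x * P x := by
    intro x; rw [hW_def, hF_def]
  have hODE' : ∀ r : ℝ, 0 < r → HasDerivAt F
      (κ * ρ r * φ r + lam * ρ r * Real.exp (-(r^2)/(4*Du)) * φ r ^ q) r := by
    intro r hr; rw [hF_def]
    exact hODE r (mem_Ioi.mpr hr)
  have hFcont : ∀ x : ℝ, 0 < x → ContinuousAt F x := fun x hx => (hODE' x hx).continuousAt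
  have hWd' : ∀ r : ℝ, 0 < r → HasDerivAt W
      ((κ * ρ r * φ r + lam * ρ r * Real.exp (-(r^2)/(4*Du)) * φ r ^ q) * ψ r - φ r * dP r) r := by
    intro r hr; rw [hW_def]; exact hWd r hr
  have hWcont : ∀ s t : ℝ, 0 < s → ContinuousOn W (Icc s t) := by
    intro s t hs
    have e1 : ContinuousOn F (Icc s t) := fun x hx =>
      (hFcont x (lt_of_lt_of_le hs hx.1)).continuousWithinAt
    have e2 : ContinuousOn φ (Icc s t) :=
      hφcont.mono (fun z hz => le_trans hs.le hz.1)
    have : ContinuousOn (fun x => F x * ψ x - φ x * P x) (Icc s t) :=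
      (e1.mul hψcont.continuousOn).sub (e2.mul hPcont.continuousOn)
    intro x hx
    have := this x hx
    simpa only [← hWF] using this
  -- step (i): strict decrease of W
  have hWstrict : ∀ s t : ℝ, 0 < s → s < t → t ≤ R →
      (∀ x : ℝ, 0 < x → x < t → φ x ≤ B) → W t < W s := by
    intro s t hs hst htR hBt
    have hanti : StrictAntiOn W (Icc s t) := by
      apply strictAntiOn_of_deriv_neg (convex_Icc s t) (hWcont s t hs)
      intro x hx
      rw [interior_Icc] at hx
      have hx0 : 0 < x := hs.trans hx.1
      rw [(hWd' x hx0).deriv]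
      exact hW'neg x hx0 (lt_of_lt_of_le hx.2 htR) (hBt x hx0 hx.2)
    exact hanti (left_mem_Icc.mpr hst.le) (right_mem_Icc.mpr hst.le) hst
  -- tendsto of φ at 0+
  have hφtend : Tendsto φ (𝓝[>] (0:ℝ)) (𝓝 1) := by
    have h1 : ContinuousWithinAt φ (Ici 0) 0 := hφcont 0 self_mem_Ici
    have h2 : Tendsto φ (𝓝[Ioi 0] (0:ℝ)) (𝓝 (φ 0)) :=
      h1.mono (Ioi_subset_Ici (le_refl (0:ℝ)))
    rwa [hφ0] at h2
  -- choice of s₂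
  obtain ⟨s₂, hs₂0, hs₂1, hs₂R, hs₂B⟩ : ∃ s₂ : ℝ, 0 < s₂ ∧ s₂ ≤ 1 ∧ s₂ < R ∧
      ∀ x : ℝ, 0 < x → x ≤ s₂ → φ x ≤ B := by
    have h1 : ContinuousWithinAt φ (Ici 0) 0 := hφcont 0 self_mem_Ici
    have h1' : Tendsto φ (𝓝[Ici 0] (0:ℝ)) (𝓝 (φ 0)) := h1
    rw [hφ0] at h1'
    have h2 : ∀ᶠ x in 𝓝[Ici 0] (0:ℝ), φ x < B := h1'.eventually_lt_const hB1
    rw [eventually_nhdsWithin_iff, Metric.eventually_nhds_iff] at h2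
    obtain ⟨c, hc0, hc⟩ := h2
    refine ⟨min (c/2) (min 1 (R/2)), by positivity, ?_, ?_, ?_⟩
    · exact min_le_of_right_le (min_le_left _ _)
    · calc min (c/2) (min 1 (R/2)) ≤ R/2 := min_le_of_right_le (min_le_right _ _)
        _ < R := by linarith
    · intro x hx0 hxle
      have hd : dist x 0 < c := by
        rw [Real.dist_eq, sub_zero, abs_of_pos hx0]
        calc x ≤ min (c/2) (min 1 (R/2)) := hxle
          _ ≤ c/2 := min_le_left _ _
          _ < c := by linarith
      exact (hc hd hx0.le).le
  -- G negative near zero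
  have hGneg : ∀ x : ℝ, 0 < x → φ x ≤ B →
      κ * ρ x * φ x + lam * ρ x * Real.exp (-(x^2)/(4*Du)) * φ x ^ q < 0 := by
    intro x hx hB'
    have h1 := hGlt x hx hB'
    have h2 : m * (ρ x * φ x) < 0 :=
      mul_neg_of_neg_of_pos hmneg (mul_pos (hρpos x hx) (hφpos x hx.le))
    linarith
  -- F strictly decreasing on (0, s₂]
  have hFanti : ∀ u v : ℝ, 0 < u → u < v → v ≤ s₂ → F v < F u := by
    intro u v hu huv hv
    have hanti : StrictAntiOn F (Icc u v) := by
      apply strictAntiOn_of_deriv_neg (convex_Icc u v)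
        (fun x hx => (hFcont x (lt_of_lt_of_le hu hx.1)).continuousWithinAt)
      intro x hx
      rw [interior_Icc] at hx
      have hx0 : 0 < x := hu.trans hx.1
      rw [(hODE' x hx0).deriv]
      exact hGneg x hx0 (hs₂B x hx0 (le_trans hx.2.le hv))
    exact hanti (left_mem_Icc.mpr huv.le) (right_mem_Icc.mpr huv.le) huv
  -- ρ bounded on (0,1]
  have hρle : ∀ x : ℝ, 0 < x → x ≤ 1 → ρ x ≤ Real.exp (1/(4*Dv)) := by
    intro x h0 h1
    rw [hρ x]
    have e1 : x^(N-1) ≤ 1 := pow_le_one₀ h0.le h1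
    have e2 : Real.exp (x^2/(4*Dv)) ≤ Real.exp (1/(4*Dv)) := by
      apply Real.exp_le_exp.mpr
      have h2 : x^2 ≤ 1 := by nlinarith
      have h3 : (0:ℝ) < 4*Dv := by linarith
      gcongr
    calc x^(N-1) * Real.exp (x^2/(4*Dv)) ≤ 1 * Real.exp (1/(4*Dv)) :=
        mul_le_mul e1 e2 (Real.exp_pos _).le zero_le_one
      _ = Real.exp (1/(4*Dv)) := one_mul _
  -- F is nonpositive near zero
  have hF0 : ∀ x : ℝ, 0 < x → x ≤ s₂ → F x ≤ 0 := by
    by_contra hcon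
    push_neg at hcon
    obtain ⟨x₀, hx₀0, hx₀s, hx₀F⟩ := hcon
    obtain ⟨c, hc_def⟩ : ∃ c : ℝ, c = F x₀ / (Dv * Real.exp (1/(4*Dv))) := ⟨_, rfl⟩
    have hc0 : 0 < c := by
      rw [hc_def]
      exact div_pos hx₀F (by positivity)
    have hdφc : ∀ x : ℝ, 0 < x → x < x₀ → c ≤ dφ x := by
      intro x hx hxx₀
      have hFx : F x₀ < F x := hFanti x x₀ hx hxx₀ hx₀s
      have hρx := hρpos x hx
      have hρxle := hρle x hx (le_trans hxx₀.le (le_trans hx₀s hs₂1))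
      have hFeq : F x = Dv * (ρ x * dφ x) := by rw [hF_def]
      have hdφpos : 0 < dφ x := by nlinarith [mul_pos hDv hρx]
      rw [hc_def, div_le_iff₀ (by positivity)]
      have h5 := mul_le_mul_of_nonneg_right hρxle (mul_pos hDv hdφpos).le
      nlinarith [h5]
    have hgrow : ∀ x : ℝ, 0 < x → x < x₀ → c * x ≤ φ x - 1 := by
      intro x hx hxx₀
      have hmvt : ∀ u : ℝ, 0 < u → u < x → c * (x - u) ≤ φ x - φ u := by
        intro u hu hux
        have hIsub : Icc u x ⊆ Ici (0:ℝ) := fun z hz => le_trans hu.le hz.1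
        have := (convex_Icc u x).mul_sub_le_image_sub_of_le_deriv
          (hφcont.mono hIsub)
          (fun z hz => by
            rw [interior_Icc] at hz
            exact (hφd z (hu.trans hz.1)).differentiableAt.differentiableWithinAt)
          (fun z hz => by
            rw [interior_Icc] at hz
            rw [(hφd z (hu.trans hz.1)).deriv]
            exact hdφc z (hu.trans hz.1) (hz.2.trans hxx₀))
          u (left_mem_Icc.mpr hux.le) x (right_mem_Icc.mpr hux.le) hux.le
        linarith [this]
      have hten : Tendsto (fun u => φ x - φ u) (𝓝[>] (0:ℝ)) (𝓝 (φ x - 1)) :=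
        tendsto_const_nhds.sub hφtend
      have hten2 : Tendsto (fun u => c * (x - u)) (𝓝[>] (0:ℝ)) (𝓝 (c * (x - 0))) :=
        (tendsto_const_nhds.sub (tendsto_id.mono_left nhdsWithin_le_nhds)).const_mul c
      have hev : ∀ᶠ u in 𝓝[>] (0:ℝ), c * (x - u) ≤ φ x - φ u := by
        filter_upwards [Ioo_mem_nhdsGT_of_mem (Set.left_mem_Ico.mpr hx)] with u hu
        exact hmvt u hu.1 hu.2
      have := le_of_tendsto_of_tendsto hten2 hten hev
      simpa using this
    have hslope := hasDerivWithinAt_iff_tendsto_slope.mp (hφderiv 0 self_mem_Ici)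
    rw [hdφ0] at hslope
    have hset : Ici (0:ℝ) \ {0} = Ioi (0:ℝ) := Ici_sdiff_left
    rw [hset] at hslope
    have hev2 : ∀ᶠ x in 𝓝[>] (0:ℝ), c ≤ slope φ 0 x := by
      filter_upwards [Ioo_mem_nhdsGT_of_mem (Set.left_mem_Ico.mpr hx₀0)] with x hx
      have hg := hgrow x hx.1 hx.2
      rw [slope_def_field, hφ0, sub_zero, le_div_iff₀ hx.1]
      linarith [hg]
    have := ge_of_tendsto hslope hev2
    linarith

  -- P vanishes at 0
  have hPzero : P 0 = 0 := by
    rw [hP_def]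
    simp [zero_pow (by omega : N ≠ 0)]
  -- step (iii): W < 0 wherever φ ≤ B before
  have hW0' : ∀ t : ℝ, 0 < t → t ≤ R → (∀ x : ℝ, 0 < x → x < t → φ x ≤ B) → W t ≤ 0 := by
    intro t ht htR hBt
    by_contra hW
    push_neg at hW
    have hPt : Tendsto (fun x => B * |P x|) (𝓝[>] (0:ℝ)) (𝓝 0) := by
      have h1 : Tendsto P (𝓝 (0:ℝ)) (𝓝 (P 0)) := hPcont.tendsto 0
      rw [hPzero] at h1
      have h2 : Tendsto (fun x => B * |P x|) (𝓝 (0:ℝ)) (𝓝 (B * |(0:ℝ)|)) :=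
        h1.abs.const_mul B
      simpa using h2.mono_left nhdsWithin_le_nhds
    have hev : ∀ᶠ x in 𝓝[>] (0:ℝ), B * |P x| < W t := hPt.eventually_lt_const hW
    have hmem : Ioo (0:ℝ) (min t s₂) ∈ 𝓝[>] (0:ℝ) :=
      Ioo_mem_nhdsGT_of_mem (Set.left_mem_Ico.mpr (lt_min ht hs₂0))
    obtain ⟨s, hsP, hsmem⟩ := (hev.and (eventually_of_mem hmem (fun x hx => hx))).exists
    have hs0 : 0 < s := hsmem.1
    have hst : s < t := lt_of_lt_of_le hsmem.2 (min_le_left _ _)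
    have hss₂ : s < s₂ := lt_of_lt_of_le hsmem.2 (min_le_right _ _)
    have h1 : W t < W s := hWstrict s t hs0 hst htR hBt
    have h2 : W s ≤ B * |P s| := by
      rw [hWF s]
      have hFs := hF0 s hs0 hss₂.le
      have hψs := hψnn s hs0.le (le_trans hst.le htR)
      have hφs := hφpos s hs0.le
      have hφB := hs₂B s hs0 hss₂.le
      have e1 : F s * ψ s ≤ 0 := mul_nonpos_of_nonpos_of_nonneg hFs hψs
      have e2 : -(φ s * P s) ≤ B * |P s| := by
        have e3 : -(φ s * P s) ≤ |φ s * P s| := neg_le_abs _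
        rw [abs_mul, abs_of_pos hφs] at e3
        have e4 : φ s * |P s| ≤ B * |P s| :=
          mul_le_mul_of_nonneg_right hφB (abs_nonneg _)
        linarith
      linarith
    linarith
  have hW0 : ∀ t : ℝ, 0 < t → t ≤ R → (∀ x : ℝ, 0 < x → x < t → φ x ≤ B) → W t < 0 := by
    intro t ht htR hBt
    have h1 : W (t/2) ≤ 0 :=
      hW0' (t/2) (by linarith) (by linarith) (fun x hx hxt => hBt x hx (by linarith))
    have h2 : W t < W (t/2) := hWstrict (t/2) t (by linarith) (by linarith) htR hBt
    linarith
  -- step (iv): quotient comparison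
  have hQlt : ∀ s t : ℝ, 0 < s → s < t → t < R →
      (∀ x : ℝ, 0 < x → x < t → φ x ≤ B) → φ t * ψ s < φ s * ψ t := by
    intro s t hs hst htR hBt
    have hψs : 0 < ψ s := hψpos s hs.le (hst.trans htR)
    have hψt : 0 < ψ t := hψpos t (hs.trans hst).le htR
    have hanti : StrictAntiOn (fun y => φ y / ψ y) (Icc s t) := by
      apply strictAntiOn_of_deriv_neg (convex_Icc s t)
      · apply ContinuousOn.div
        · exact hφcont.mono (fun z hz => le_trans hs.le hz.1)
        · exact hψcont.continuousOn
        · intro z hz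
          exact ne_of_gt (hψpos z (le_trans hs.le hz.1) (lt_of_le_of_lt hz.2 htR))
      · intro x hx
        rw [interior_Icc] at hx
        have hx0 : 0 < x := hs.trans hx.1
        have hxR : x < R := hx.2.trans htR
        have hψx : 0 < ψ x := hψpos x hx0.le hxR
        have hQd : HasDerivAt (fun y => φ y / ψ y)
            ((dφ x * ψ x - φ x * dψ x) / ψ x ^ 2) x :=
          (hφd x hx0).div (hψd x) (ne_of_gt hψx)
        rw [hQd.deriv]
        have hWx : W x < 0 :=
          hW0 x hx0 (le_of_lt (hx.2.trans htR)) (fun z hz hzx => hBt z hz (hzx.trans hx.2))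
        have hkey : Dv * ρ x * (dφ x * ψ x - φ x * dψ x) = W x := by
          rw [hWF x, ← hID x]
          simp only [hF_def]
          ring
        have hnum : dφ x * ψ x - φ x * dψ x < 0 := by
          by_contra hcon
          push_neg at hcon
          have := mul_nonneg (mul_pos hDv (hρpos x hx0)).le hcon
          rw [hkey] at this
          linarith
        exact div_neg_of_neg_of_pos hnum (by positivity)
    have h5 := hanti (left_mem_Icc.mpr hst.le) (right_mem_Icc.mpr hst.le) hst
    exact (div_lt_div_iff₀ hψt hψs).mp h5
  -- endpoint contradiction when φ ≤ B on all of (0,R)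
  have hcontra1 : ¬ (∀ x : ℝ, 0 < x → x < R → φ x ≤ B) := by
    intro hall
    have hhalf : 0 < R/2 := by linarith
    have hNe : (𝓝[Ioo (R/2) R] R).NeBot := by
      apply mem_closure_iff_nhdsWithin_neBot.mp
      rw [closure_Ioo (by linarith : R/2 ≠ R)]
      exact right_mem_Icc.mpr (by linarith)
    have hev : ∀ᶠ x in 𝓝[Ioo (R/2) R] R, 0 ≤ φ (R/2) * ψ x - φ x * ψ (R/2) := by
      filter_upwards [self_mem_nhdsWithin] with x hx
      have := hQlt (R/2) x hhalf hx.1 hx.2 (fun z hz hzx => hall z hz (hzx.trans hx.2))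
      linarith
    have htend : Tendsto (fun x => φ (R/2) * ψ x - φ x * ψ (R/2)) (𝓝[Ioo (R/2) R] R)
        (𝓝 (φ (R/2) * ψ R - φ R * ψ (R/2))) := by
      apply Tendsto.sub
      · exact ((hψcont.tendsto R).const_mul _).mono_left nhdsWithin_le_nhds
      · have hcw : ContinuousWithinAt φ (Ioo (R/2) R) R :=
          (hφcont R hR.le).mono (fun z hz => le_of_lt (lt_trans hhalf hz.1))
        exact hcw.mul_const _
    have hlim := ge_of_tendsto htend hev
    have hψR : ψ R = 0 := by
      rw [hψ_def]
      simp [hR2]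
    rw [hψR] at hlim
    have hψR2 := hψpos (R/2) hhalf.le (by linarith)
    have hφR := hφpos R hR.le
    nlinarith [mul_pos hφR hψR2]
  -- final case analysis
  by_cases hcase : ∀ x : ℝ, 0 < x → x < R → φ x ≤ B
  · exact hcontra1 hcase
  push_neg at hcase
  obtain ⟨x₀, hx₀0, hx₀R, hx₀B⟩ := hcase
  obtain ⟨E, hE_def⟩ : ∃ E : Set ℝ, E = Icc 0 R ∩ φ ⁻¹' (Ici B) := ⟨_, rfl⟩
  have hEclosed : IsClosed E := by
    rw [hE_def]
    exact (hφcont.mono (fun z hz => hz.1)).preimage_isClosed_of_isClosed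
      isClosed_Icc isClosed_Ici
  have hEne : E.Nonempty := ⟨x₀, by rw [hE_def]; exact ⟨⟨hx₀0.le, hx₀R.le⟩, hx₀B.le⟩⟩
  have hEbdd : BddBelow E := ⟨0, fun z hz => by rw [hE_def] at hz; exact hz.1.1⟩
  obtain ⟨b, hb_def⟩ : ∃ b : ℝ, b = sInf E := ⟨_, rfl⟩
  have hbE : b ∈ E := hb_def ▸ hEclosed.csInf_mem hEne hEbdd
  rw [hE_def] at hbE
  have hbIcc : b ∈ Icc 0 R := hbE.1
  have hφb : B ≤ φ b := hbE.2
  have hb0 : 0 < b := by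
    rcases eq_or_lt_of_le hbIcc.1 with h | h
    · exfalso
      rw [← h, hφ0] at hφb
      linarith
    · exact h
  have hbR : b ≤ R := hbIcc.2
  have hbB : ∀ x : ℝ, 0 < x → x < b → φ x ≤ B := by
    intro x hx hxb
    by_contra hxB
    push_neg at hxB
    have hxE : x ∈ E := by
      rw [hE_def]
      exact ⟨⟨hx.le, le_trans hxb.le hbR⟩, hxB.le⟩
    have h6 := csInf_le hEbdd hxE
    rw [← hb_def] at h6
    linarith
  rcases lt_or_eq_of_le hbR with hblt | hbeq
  · -- b < R : contradiction with φ b ≥ B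
    have hψb : 0 < ψ b := hψpos b hb0.le hblt
    have hψblt : ψ b < a := by
      rw [hψ_def]
      have e1 : Real.exp (-b^2/(4*Dv)) ≤ 1 := by
        rw [Real.exp_le_one_iff]
        have : (0:ℝ) < 4*Dv := by linarith
        apply div_nonpos_of_nonpos_of_nonneg _ this.le
        nlinarith [sq_nonneg b]
      have e3 : 0 ≤ a - b^2 := by
        have : b^2 ≤ a := by rw [← hR2]; exact pow_le_pow_left₀ hb0.le hbR 2
        linarith
      have e2 : a - b^2 < a := by nlinarith
      calc (a - b^2) * Real.exp (-b^2/(4*Dv)) ≤ (a - b^2) * 1 :=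
          mul_le_mul_of_nonneg_left e1 e3
        _ < a := by linarith
    have hψ0 : ψ 0 = a := by
      rw [hψ_def]; simp
    have hψtend : Tendsto ψ (𝓝[>] (0:ℝ)) (𝓝 a) := by
      have := (hψcont.tendsto 0).mono_left (nhdsWithin_le_nhds (s := Ioi (0:ℝ)))
      rwa [hψ0] at this
    have hgtend : Tendsto (fun x => B * ψ x - a * φ x) (𝓝[>] (0:ℝ)) (𝓝 (B * a - a * 1)) :=
      (hψtend.const_mul B).sub (hφtend.const_mul a)
    have hev2 : ∀ᶠ x in 𝓝[>] (0:ℝ), 0 < B * ψ x - a * φ x := by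
      apply hgtend.eventually_const_lt
      nlinarith
    have hmem2 : Ioo (0:ℝ) b ∈ 𝓝[>] (0:ℝ) :=
      Ioo_mem_nhdsGT_of_mem (Set.left_mem_Ico.mpr hb0)
    obtain ⟨s, hsg, hsmem⟩ := (hev2.and (eventually_of_mem hmem2 (fun x hx => hx))).exists
    have hQ := hQlt s b hsmem.1 hsmem.2 hblt hbB
    have hφs := hφpos s hsmem.1.le
    have hψs := hψpos s hsmem.1.le (hsmem.2.trans hblt)
    nlinarith [mul_le_mul_of_nonneg_right hφb hψs.le, mul_pos (sub_pos.mpr hψblt) hφs]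
  · -- b = R
    exact hcontra1 (fun x hx hxR => hbB x hx (by rw [hbeq]; exact hxR))
end

section
/- Let N ≥ 1 be an integer, D_u, D_v > 0, q > 1, and set ρ(r) = r^{N−1} e^{r²/(4D_v)}. For every ε > 0 there exists C_ε > 0 such that for every C¹ function u : [0,∞) → ℝ with ∫₀^∞ ρ(r) u(r)² dr < ∞ and ∫₀^∞ ρ(r) u'(r)² dr < ∞, one has ∫₀^∞ ρ(r) u(r)² dr ≤ ε ∫₀^∞ ρ(r) u'(r)² dr + C_ε ( ∫₀^∞ ρ(r) e^{−r²/(4D_u)} |u(r)|^{q+1} dr )^{2/(q+1)}. -/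
open Real Set MeasureTheory
open scoped ENNReal NNReal

/-- lintegral over `Ioi R` is bounded by `B` if all pieces `Ioc R n` are. -/
lemma aux_sup {F : ℝ → ℝ≥0∞} {R : ℝ}
    (hF : AEMeasurable F (volume.restrict (Ioi R))) {B : ℝ≥0∞}
    (h : ∀ n : ℕ, (∫⁻ x in Ioc R (n : ℝ), F x) ≤ B) :
    (∫⁻ x in Ioi R, F x) ≤ B := by
  have hkey : (∫⁻ x in Ioi R, F x)
      = ⨆ n : ℕ, ∫⁻ x in Ioi R, (Ioc R (n : ℝ)).indicator F x := by
    rw [← lintegral_iSup' (fun n => hF.indicator measurableSet_Ioc) ?_]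
    · apply lintegral_congr_ae
      filter_upwards [(ae_restrict_iff' measurableSet_Ioi).2
        (Filter.Eventually.of_forall (fun x (hx : x ∈ Ioi R) => hx))] with x hx
      obtain ⟨n, hn⟩ := exists_nat_ge x
      apply le_antisymm
      · refine le_trans (le_of_eq ?_) (le_iSup _ n)
        rw [Set.indicator_of_mem (show x ∈ Ioc R (n:ℝ) from ⟨hx, hn⟩) F]
      · exact iSup_le fun n => Set.indicator_le_self _ _ x
    · refine Filter.Eventually.of_forall (fun x m n hmn => ?_)
      refine Set.indicator_le_indicator_of_subset (Ioc_subset_Ioc_right ?_) (fun _ => zero_le) x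
      exact_mod_cast hmn
  rw [hkey]
  refine iSup_le fun n => ?_
  rw [lintegral_indicator measurableSet_Ioc, Measure.restrict_restrict measurableSet_Ioc,
    Set.inter_eq_self_of_subset_left (Ioc_subset_Ioi_self)]
  exact h n

/-- If `∫⁻ ofReal g` over `Ioi 0` is finite then `g` gets `≤ c` beyond any `M`. -/
lemma exists_small {g : ℝ → ℝ}
    (hfin : (∫⁻ r in Ioi (0:ℝ), ENNReal.ofReal (g r)) ≠ ⊤)
    (M c : ℝ) (hc : 0 < c) : ∃ S, M ≤ S ∧ g S ≤ c := by
  by_contra hcon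
  push_neg at hcon
  set M' : ℝ := max M 1 with hM'
  have hle : (∫⁻ r in Ioi M', ENNReal.ofReal c)
      ≤ ∫⁻ r in Ioi M', ENNReal.ofReal (g r) := by
    refine setLIntegral_mono' measurableSet_Ioi (fun x hx => ?_)
    refine ENNReal.ofReal_le_ofReal (le_of_lt (hcon x ?_))
    exact le_trans (le_max_left M 1) (le_of_lt hx)
  rw [setLIntegral_const, Real.volume_Ioi,
    ENNReal.mul_top (by simpa using hc)] at hle
  have : (∫⁻ r in Ioi (0:ℝ), ENNReal.ofReal (g r)) = ⊤ := by
    refine top_le_iff.1 (le_trans hle (lintegral_mono_set (fun x hx => ?_)))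
    have h1 : (1:ℝ) ≤ M' := le_max_right M 1
    have hx' : M' < x := hx
    show (0:ℝ) < x
    linarith
  exact hfin this

/-- du is a.e. measurable on subsets of `Ioi 0`. -/
lemma du_aemeas (u du : ℝ → ℝ)
    (hu : ∀ r ∈ Ici (0:ℝ), HasDerivWithinAt u (du r) (Ici 0) r)
    {s : Set ℝ} (hs : MeasurableSet s) (hs0 : s ⊆ Ioi 0) :
    AEMeasurable du (volume.restrict s) := by
  have hderiv : ∀ r ∈ s, deriv u r = du r := by
    intro r hr
    have hr0 : (0:ℝ) < r := hs0 hr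
    exact ((hu r (le_of_lt hr0)).hasDerivAt (Ici_mem_nhds hr0)).deriv
  exact (measurable_deriv u).aemeasurable.congr
    ((ae_restrict_iff' hs).2 (Filter.Eventually.of_forall hderiv))

/-- continuity of u on `Ici 0`. -/
lemma u_contOn (u du : ℝ → ℝ)
    (hu : ∀ r ∈ Ici (0:ℝ), HasDerivWithinAt u (du r) (Ici 0) r) :
    ContinuousOn u (Ici 0) :=
  fun r hr => (hu r hr).continuousWithinAt

/-- Pointwise algebraic inequality used in the tail estimate. -/
lemma pt_ineq (P E uu dd a Dv r c₀ : ℝ) (hP : 0 ≤ P) (hE : 0 < E) (ha : 0 < a)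
    (hDv : 0 < Dv) (hr : 2*Dv*(a+1) ≤ r) (hc0 : 0 ≤ c₀) :
    P*E*uu^2 - (1/a)*(P*E*dd^2)
      ≤ (c₀*E + P*(E*(2*r/(4*Dv))))*uu^2 + P*E*(2*uu*dd) := by
  have h2r : 2*r/(4*Dv) = r/(2*Dv) := by
    field_simp
    ring
  rw [h2r]
  have hX : a + 1 ≤ r/(2*Dv) := (le_div_iff₀ (by positivity)).2 (by linarith)
  have hab : a * (1/a) = 1 := by field_simp
  have hkey : 0 ≤ a*uu^2 + 2*uu*dd + (1/a)*dd^2 := by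
    have h5 : 0 ≤ a * (a*uu^2 + 2*uu*dd + (1/a)*dd^2) := by
      have h6 : a * ((1/a)*dd^2) = dd^2 := by
        rw [← mul_assoc, hab, one_mul]
      nlinarith [sq_nonneg (a*uu + dd)]
    nlinarith [h5, ha]
  nlinarith [mul_nonneg (mul_nonneg hP hE.le) hkey,
    mul_nonneg (mul_nonneg (sub_nonneg.2 hX) (mul_nonneg hP hE.le)) (sq_nonneg uu),
    mul_nonneg (mul_nonneg hc0 hE.le) (sq_nonneg uu)]


/-- Tail integration-by-parts estimate. -/
lemma tail_piece (N : ℕ) (hN : 1 ≤ N) (Dv a : ℝ) (hDv : 0 < Dv) (ha : 0 < a)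
    (ρ : ℝ → ℝ) (hρ : ∀ r : ℝ, ρ r = r ^ (N - 1) * Real.exp (r ^ 2 / (4 * Dv)))
    (u du : ℝ → ℝ)
    (hu : ∀ r ∈ Ici (0:ℝ), HasDerivWithinAt u (du r) (Ici 0) r)
    (R S : ℝ) (hR : 2*Dv*(a+1) ≤ R) (hRS : R ≤ S)
    (hint : IntegrableOn (fun r => ρ r * du r ^ 2) (Ioc R S)) :
    (∫ r in Ioc R S, ρ r * u r ^ 2)
      ≤ ρ S * u S ^ 2 + (1/a) * ∫ r in Ioc R S, ρ r * du r ^ 2 := by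
  have hR0 : (0:ℝ) < R := lt_of_lt_of_le (by positivity) hR
  have hρfun : ρ = fun r => r ^ (N - 1) * Real.exp (r ^ 2 / (4 * Dv)) := funext hρ
  have hρnn : ∀ r : ℝ, 0 < r → 0 ≤ ρ r := by
    intro r hr
    rw [hρ r]
    exact mul_nonneg (pow_nonneg hr.le _) (Real.exp_pos _).le
  set ρd : ℝ → ℝ := fun r =>
    (↑(N-1) * r^(N-1-1)) * Real.exp (r^2/(4*Dv))
      + r^(N-1) * (Real.exp (r^2/(4*Dv)) * (2*r/(4*Dv))) with hρddef
  have hρd : ∀ r : ℝ, HasDerivAt ρ (ρd r) r := by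
    intro r
    rw [hρfun]
    have h1 : HasDerivAt (fun r => r ^ (N - 1) * Real.exp (r ^ 2 / (4 * Dv))) _ r := (hasDerivAt_pow (N-1) r).mul
      (HasDerivAt.exp ((hasDerivAt_pow 2 r).div_const (4*Dv)))
    convert h1 using 1
    simp only [hρddef]
    push_cast
    ring
  have hρdcont : Continuous ρd := by
    rw [hρddef]
    fun_prop
  have hρcont : Continuous ρ := by
    rw [hρfun]
    fun_prop
  have hu' : ∀ r ∈ Icc R S, HasDerivAt u (du r) r := by
    intro r hr
    have hr0 : (0:ℝ) < r := lt_of_lt_of_le hR0 hr.1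
    exact (hu r hr0.le).hasDerivAt (Ici_mem_nhds hr0)
  set gd : ℝ → ℝ := fun r => ρd r * u r ^ 2 + ρ r * (2 * u r * du r) with hgddef
  have hg : ∀ r ∈ Icc R S, HasDerivAt (fun r => ρ r * u r ^ 2) (gd r) r := by
    intro r hr
    have h1 : HasDerivAt (fun r => ρ r * u r ^ 2) _ r := (hρd r).mul ((hu' r hr).pow 2)
    convert h1 using 1
    simp only [hgddef]
    push_cast
    ring
  have hucont : ContinuousOn u (Icc R S) :=
    (u_contOn u du hu).mono (fun x hx => le_trans hR0.le hx.1)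
  obtain ⟨Mb, hMb⟩ := IsCompact.exists_bound_of_continuousOn isCompact_Icc hucont
  have hMb0 : (0:ℝ) ≤ Mb := le_trans (norm_nonneg _) (hMb S (right_mem_Icc.2 hRS))
  have hdum : AEMeasurable du (volume.restrict (Ioc R S)) :=
    du_aemeas u du hu measurableSet_Ioc (fun x hx => lt_trans hR0 hx.1)
  have hum : AEMeasurable u (volume.restrict (Ioc R S)) :=
    (hucont.mono Ioc_subset_Icc_self).aemeasurable measurableSet_Ioc
  have hcross : IntegrableOn (fun r => ρ r * (2 * u r * du r)) (Ioc R S) := by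
    have hbint : IntegrableOn (fun r => Mb * (ρ r + ρ r * du r ^ 2)) (Ioc R S) :=
      (Integrable.add (hρcont.integrableOn_Ioc) hint).const_mul Mb
    refine Integrable.mono hbint ?_ ?_
    · exact ((hρcont.aemeasurable.mul
        ((aemeasurable_const.mul hum).mul hdum)).aestronglyMeasurable)
    · refine (ae_restrict_iff' measurableSet_Ioc).2
        (Filter.Eventually.of_forall (fun r hr => ?_))
      have hr0 : (0:ℝ) < r := lt_trans hR0 hr.1
      have hρ0 : 0 ≤ ρ r := hρnn r hr0
      have hub : |u r| ≤ Mb := by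
        simpa [Real.norm_eq_abs] using hMb r (Ioc_subset_Icc_self hr)
      rw [Real.norm_eq_abs, Real.norm_eq_abs]
      have h2 : |2 * u r * du r| ≤ Mb * (1 + du r ^ 2) := by
        rw [abs_mul, abs_mul, abs_two]
        have hdd : 2 * |du r| ≤ 1 + du r ^ 2 := by
          nlinarith [sq_nonneg (|du r| - 1), sq_abs (du r)]
        nlinarith [mul_le_mul_of_nonneg_left hdd (abs_nonneg (u r)),
          mul_le_mul_of_nonneg_right hub
            (by positivity : (0:ℝ) ≤ 1 + du r ^ 2),
          abs_nonneg (u r), abs_nonneg (du r)]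
      have habs : |ρ r * (2 * u r * du r)| ≤ Mb * (ρ r + ρ r * du r ^ 2) := by
        rw [abs_mul, abs_of_nonneg hρ0]
        calc ρ r * |2 * u r * du r| ≤ ρ r * (Mb * (1 + du r ^ 2)) :=
              mul_le_mul_of_nonneg_left h2 hρ0
          _ = Mb * (ρ r + ρ r * du r ^ 2) := by ring
      exact le_trans habs (le_abs_self _)
  have h1I : IntervalIntegrable (fun r => ρd r * u r ^ 2) volume R S :=
    ContinuousOn.intervalIntegrable
      (by rw [uIcc_of_le hRS]; exact (hρdcont.continuousOn).mul (hucont.pow 2))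
  have h2I : IntervalIntegrable (fun r => ρ r * (2 * u r * du r)) volume R S :=
    (intervalIntegrable_iff_integrableOn_Ioc_of_le hRS).2 hcross
  have hgdint : IntervalIntegrable gd volume R S := by
    rw [hgddef]
    exact h1I.add h2I
  have hftc : (∫ r in R..S, gd r) = ρ S * u S ^ 2 - ρ R * u R ^ 2 :=
    intervalIntegral.integral_eq_sub_of_hasDerivAt
      (fun r hr => hg r (by rwa [uIcc_of_le hRS] at hr)) hgdint
  have hpt : ∀ r ∈ Icc R S,
      ρ r * u r ^ 2 - (1/a) * (ρ r * du r ^ 2) ≤ gd r := by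
    intro r hr
    have hr0 : (0:ℝ) < r := lt_of_lt_of_le hR0 hr.1
    have hrc : 2*Dv*(a+1) ≤ r := le_trans hR hr.1
    have hkey := pt_ineq (r^(N-1)) (Real.exp (r^2/(4*Dv))) (u r) (du r) a Dv r
      (↑(N-1) * r^(N-1-1))
      (pow_nonneg hr0.le _) (Real.exp_pos _) ha hDv hrc
      (mul_nonneg (Nat.cast_nonneg _) (pow_nonneg hr0.le _))
    rw [hgddef]
    simp only [hρ r]
    nlinarith [hkey]
  have huuI : IntervalIntegrable (fun r => ρ r * u r ^ 2) volume R S :=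
    ContinuousOn.intervalIntegrable
      (by rw [uIcc_of_le hRS]; exact (hρcont.continuousOn).mul (hucont.pow 2))
  have hduI : IntervalIntegrable (fun r => (1/a) * (ρ r * du r ^ 2)) volume R S :=
    (((intervalIntegrable_iff_integrableOn_Ioc_of_le hRS).2 hint).const_mul (1/a))
  have hmono : (∫ r in R..S, (ρ r * u r ^ 2 - (1/a) * (ρ r * du r ^ 2)))
      ≤ ∫ r in R..S, gd r :=
    intervalIntegral.integral_mono_on hRS (huuI.sub hduI) hgdint hpt
  have hsub : (∫ r in R..S, (ρ r * u r ^ 2 - (1/a) * (ρ r * du r ^ 2)))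
      = (∫ r in R..S, ρ r * u r ^ 2) - (1/a) * ∫ r in R..S, ρ r * du r ^ 2 := by
    rw [intervalIntegral.integral_sub huuI hduI, intervalIntegral.integral_const_mul]
  have hgR : 0 ≤ ρ R * u R ^ 2 := mul_nonneg (hρnn R hR0) (sq_nonneg _)
  rw [← intervalIntegral.integral_of_le hRS, ← intervalIntegral.integral_of_le hRS]
  linarith [hmono, hftc, hsub, hgR]

set_option maxHeartbeats 1000000 in
/-- Weighted interpolation inequality with weight
`ρ(r) = r^{N-1} e^{r²/(4Dᵥ)}`: for every `ε > 0` there is `C_ε > 0` such that every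
C¹ function `u` on `[0,∞)` with `∫ ρ u² < ∞` and `∫ ρ (u')² < ∞` satisfies
`∫ ρ u² ≤ ε ∫ ρ (u')² + C_ε (∫ ρ e^{−r²/(4Dᵤ)} |u|^{q+1})^{2/(q+1)}`. -/
theorem stmt11
    (N : ℕ) (hN : 1 ≤ N) (Du Dv q : ℝ)
    (hDu : 0 < Du) (hDv : 0 < Dv) (hq : 1 < q)
    (ρ : ℝ → ℝ) (hρ : ∀ r : ℝ, ρ r = r ^ (N - 1) * Real.exp (r ^ 2 / (4 * Dv))) :
    ∀ ε > 0, ∃ C > 0, ∀ u du : ℝ → ℝ,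
      (∀ r ∈ Ici (0:ℝ), HasDerivWithinAt u (du r) (Ici 0) r) →
      (∫⁻ r in Ioi (0:ℝ), ENNReal.ofReal (ρ r * u r ^ 2)) ≠ ⊤ →
      (∫⁻ r in Ioi (0:ℝ), ENNReal.ofReal (ρ r * du r ^ 2)) ≠ ⊤ →
      (∫⁻ r in Ioi (0:ℝ), ENNReal.ofReal (ρ r * u r ^ 2))
        ≤ ENNReal.ofReal ε * (∫⁻ r in Ioi (0:ℝ), ENNReal.ofReal (ρ r * du r ^ 2))
          + ENNReal.ofReal C *
            (∫⁻ r in Ioi (0:ℝ),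
                ENNReal.ofReal (ρ r * Real.exp (-(r ^ 2) / (4 * Du)) * |u r| ^ (q + 1)))
              ^ ((2 : ℝ) / (q + 1)) := by
  intro ε hε
  have ha : (0:ℝ) < 2/ε := by positivity
  set R : ℝ := 2*Dv*(2/ε+1) with hRdef
  have hR0 : (0:ℝ) < R := by rw [hRdef]; positivity
  set K : ℝ := Real.exp (R^2/(4*Dv) + R^2/(4*Du)) with hKdef
  have hK0 : (0:ℝ) < K := Real.exp_pos _
  have hq1 : (0:ℝ) < q+1 := by linarith
  have hex1 : (0:ℝ) ≤ 2/(q+1) := div_nonneg (by norm_num) hq1.le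
  have hex2 : (0:ℝ) ≤ (q-1)/(q+1) := div_nonneg (by linarith) hq1.le
  have hC0 : (0:ℝ) < K * (R^(N-1)*R) ^ ((q-1)/(q+1)) :=
    mul_pos hK0 (Real.rpow_pos_of_pos (mul_pos (pow_pos hR0 _) hR0) _)
  refine ⟨K * (R^(N-1)*R) ^ ((q-1)/(q+1)), hC0, ?_⟩
  intro u du hu hTu hTv
  have hρfun : ρ = fun r => r ^ (N - 1) * Real.exp (r ^ 2 / (4 * Dv)) := funext hρ
  have hρnn : ∀ r : ℝ, 0 < r → 0 ≤ ρ r := by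
    intro r hr
    rw [hρ r]
    exact mul_nonneg (pow_nonneg hr.le _) (Real.exp_pos _).le
  have hρcont : Continuous ρ := by
    rw [hρfun]
    fun_prop
  have hucont : ContinuousOn u (Ici 0) := u_contOn u du hu
  -- nonnegativity a.e.
  have haeu : ∀ S : ℝ, 0 ≤ᵐ[volume.restrict (Ioc R S)] (fun r => ρ r * u r ^ 2) :=
    fun S => (ae_restrict_iff' measurableSet_Ioc).2 (Filter.Eventually.of_forall
      (fun r hr => mul_nonneg (hρnn r (lt_trans hR0 hr.1)) (sq_nonneg _)))
  have haedu : ∀ S : ℝ, 0 ≤ᵐ[volume.restrict (Ioc R S)] (fun r => ρ r * du r ^ 2) :=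
    fun S => (ae_restrict_iff' measurableSet_Ioc).2 (Filter.Eventually.of_forall
      (fun r hr => mul_nonneg (hρnn r (lt_trans hR0 hr.1)) (sq_nonneg _)))
  -- integrability of the derivative term on Ioc R S
  have hduint : ∀ S : ℝ, IntegrableOn (fun r => ρ r * du r ^ 2) (Ioc R S) := by
    intro S
    constructor
    · exact (hρcont.aemeasurable.mul
        ((du_aemeas u du hu measurableSet_Ioc
          (fun x hx => lt_trans hR0 hx.1)).pow_const 2)).aestronglyMeasurable
    · rw [hasFiniteIntegral_iff_ofReal (haedu S)]
      exact lt_of_le_of_lt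
        (lintegral_mono_set (fun x hx => lt_trans hR0 hx.1)) (lt_top_iff_ne_top.2 hTv)
  have huint : ∀ S : ℝ, IntegrableOn (fun r => ρ r * u r ^ 2) (Ioc R S) := by
    intro S
    refine IntegrableOn.mono_set ?_ (Ioc_subset_Icc_self)
    exact ((hρcont.continuousOn).mul
      ((hucont.mono (fun x hx => le_trans hR0.le hx.1)).pow 2)).integrableOn_Icc
  -- tail bound with boundary term
  have htailS : ∀ c : ℝ, 0 < c → ∀ n : ℕ,
      (∫⁻ r in Ioc R (n:ℝ), ENNReal.ofReal (ρ r * u r ^ 2))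
        ≤ ENNReal.ofReal c + ENNReal.ofReal (ε/2) *
            ∫⁻ r in Ioi (0:ℝ), ENNReal.ofReal (ρ r * du r ^ 2) := by
    intro c hc n
    obtain ⟨S, hS1, hS2⟩ := exists_small (g := fun r => ρ r * u r ^ 2) hTu (max (n:ℝ) R) c hc
    have hRS : R ≤ S := le_trans (le_max_right _ _) hS1
    have hnS : (n:ℝ) ≤ S := le_trans (le_max_left _ _) hS1
    have htp := tail_piece N hN Dv (2/ε) hDv ha ρ hρ u du hu R S hRdef.ge hRS (hduint S)
    calc (∫⁻ r in Ioc R (n:ℝ), ENNReal.ofReal (ρ r * u r ^ 2))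
        ≤ ∫⁻ r in Ioc R S, ENNReal.ofReal (ρ r * u r ^ 2) :=
          lintegral_mono_set (Ioc_subset_Ioc_right hnS)
      _ = ENNReal.ofReal (∫ r in Ioc R S, ρ r * u r ^ 2) :=
          (ofReal_integral_eq_lintegral_ofReal (huint S) (haeu S)).symm
      _ ≤ ENNReal.ofReal (c + (1/(2/ε)) * ∫ r in Ioc R S, ρ r * du r ^ 2) :=
          ENNReal.ofReal_le_ofReal (by linarith [htp, hS2])
      _ ≤ ENNReal.ofReal c + ENNReal.ofReal (1/(2/ε)) *
            ENNReal.ofReal (∫ r in Ioc R S, ρ r * du r ^ 2) := by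
          refine le_trans ENNReal.ofReal_add_le (add_le_add_right (le_of_eq ?_) _)
          rw [ENNReal.ofReal_mul (by positivity)]
      _ = ENNReal.ofReal c + ENNReal.ofReal (ε/2) *
            ∫⁻ r in Ioc R S, ENNReal.ofReal (ρ r * du r ^ 2) := by
          rw [ofReal_integral_eq_lintegral_ofReal (hduint S) (haedu S), one_div_div]
      _ ≤ _ := by
          exact add_le_add_right (mul_le_mul' le_rfl
            (lintegral_mono_set (fun x hx => lt_trans hR0 hx.1))) _
  -- tail bound
  have hB : (∫⁻ r in Ioi R, ENNReal.ofReal (ρ r * u r ^ 2))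
      ≤ ENNReal.ofReal ε * ∫⁻ r in Ioi (0:ℝ), ENNReal.ofReal (ρ r * du r ^ 2) := by
    have hFmeas : AEMeasurable (fun r => ENNReal.ofReal (ρ r * u r ^ 2))
        (volume.restrict (Ioi R)) := by
      refine AEMeasurable.ennreal_ofReal (hρcont.aemeasurable.mul (AEMeasurable.pow_const ?_ 2))
      exact ((hucont.mono (fun x hx => (lt_trans hR0 hx).le)).aemeasurable measurableSet_Ioi)
    refine ENNReal.le_of_forall_pos_le_add (fun δ hδ hlt => ?_)
    have hsup := aux_sup hFmeas (fun n => htailS (δ:ℝ) (by exact_mod_cast hδ) n)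
    refine le_trans hsup ?_
    rw [ENNReal.ofReal_coe_nnreal, add_comm]
    refine add_le_add_left (mul_le_mul' (ENNReal.ofReal_le_ofReal (by linarith)) le_rfl) _
  -- Part A : Hölder on (0, R]
  have hptABase : ∀ r ∈ Ioc (0:ℝ) R,
      ρ r * u r ^ 2 ≤ K * ((r^(N-1) * Real.exp (-(r^2)/(4*Du)) * |u r| ^ (q+1)) ^ ((2:ℝ)/(q+1))
        * (r^(N-1)) ^ ((q-1)/(q+1))) := by
    intro r hr
    have hr0 : (0:ℝ) < r := hr.1
    have hpow : (0:ℝ) < r^(N-1) := pow_pos hr0 _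
    have habs : (0:ℝ) ≤ |u r| := abs_nonneg _
    have e1 : (|u r| ^ (q+1)) ^ ((2:ℝ)/(q+1)) = u r ^ 2 := by
      rw [← Real.rpow_mul habs]
      have h : (q+1)*((2:ℝ)/(q+1)) = 2 := by field_simp
      rw [h, Real.rpow_two, sq_abs]
    have e2 : ((r^(N-1) * Real.exp (-(r^2)/(4*Du)) * |u r| ^ (q+1)) ^ ((2:ℝ)/(q+1)))
        = (r^(N-1)) ^ ((2:ℝ)/(q+1)) * Real.exp (-(r^2)/(4*Du) * (2/(q+1))) * u r ^ 2 := by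
      rw [Real.mul_rpow (by positivity) (by positivity),
        Real.mul_rpow (by positivity) (by positivity), e1, ← Real.exp_mul]
    have e3 : (r^(N-1)) ^ ((2:ℝ)/(q+1)) * (r^(N-1)) ^ ((q-1)/(q+1)) = r^(N-1) := by
      rw [← Real.rpow_add hpow]
      have h : (2:ℝ)/(q+1) + (q-1)/(q+1) = 1 := by
        field_simp
        ring
      rw [h, Real.rpow_one]
    have hexp : Real.exp (r^2/(4*Dv)) ≤ K * Real.exp (-(r^2)/(4*Du) * (2/(q+1))) := by
      rw [hKdef, ← Real.exp_add]
      apply Real.exp_le_exp.2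
      have hr2 : r^2 ≤ R^2 := by nlinarith [hr.2, hr0]
      have hfrac2 : (2:ℝ)/(q+1) ≤ 1 := by
        rw [div_le_one hq1]
        linarith
      have h1 : r^2/(4*Dv) ≤ R^2/(4*Dv) := by gcongr
      have h2 : r^2 * (2/(q+1)) ≤ R^2 :=
        le_trans (mul_le_of_le_one_right (sq_nonneg r) hfrac2) hr2
      have h3 : -(r^2)/(4*Du) * (2/(q+1)) = -(r^2 * (2/(q+1)))/(4*Du) := by ring
      rw [h3]
      have h4 : -(R^2)/(4*Du) ≤ -(r^2*(2/(q+1)))/(4*Du) := by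
        rw [neg_div, neg_div]
        exact neg_le_neg (by gcongr)
      have h5 : R^2/(4*Du) + -(R^2)/(4*Du) = 0 := by ring
      nlinarith [h1, h4, h5]
    calc ρ r * u r ^ 2 = Real.exp (r^2/(4*Dv)) * (r^(N-1) * u r ^ 2) := by
          rw [hρ r]
          ring
      _ ≤ (K * Real.exp (-(r^2)/(4*Du) * (2/(q+1)))) * (r^(N-1) * u r ^ 2) :=
          mul_le_mul_of_nonneg_right hexp (by positivity)
      _ = K * (((r^(N-1)) ^ ((2:ℝ)/(q+1)) * (r^(N-1)) ^ ((q-1)/(q+1)))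
            * (Real.exp (-(r^2)/(4*Du) * (2/(q+1))) * u r ^ 2)) := by
          rw [e3]
          ring
      _ = K * (((r^(N-1)) ^ ((2:ℝ)/(q+1)) * Real.exp (-(r^2)/(4*Du) * (2/(q+1))) * u r ^ 2)
            * (r^(N-1)) ^ ((q-1)/(q+1))) := by ring
      _ = _ := by rw [← e2]
  have hUm : AEMeasurable u (volume.restrict (Ioc (0:ℝ) R)) :=
    (hucont.mono (fun x hx => hx.1.le)).aemeasurable measurableSet_Ioc
  have hfm : AEMeasurable (fun r =>
      (ENNReal.ofReal (r^(N-1) * Real.exp (-(r^2)/(4*Du)) * |u r| ^ (q+1))) ^ ((2:ℝ)/(q+1)))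
      (volume.restrict (Ioc (0:ℝ) R)) := by
    refine AEMeasurable.pow_const (AEMeasurable.ennreal_ofReal ?_) _
    refine AEMeasurable.mul (by fun_prop) ?_
    exact AEMeasurable.pow (measurable_abs.comp_aemeasurable hUm) aemeasurable_const
  have hgm : AEMeasurable (fun r => (ENNReal.ofReal (r^(N-1))) ^ ((q-1)/(q+1)))
      (volume.restrict (Ioc (0:ℝ) R)) := by
    fun_prop
  have hconj : Real.HolderConjugate ((q+1)/2) ((q+1)/(q-1)) := by
    rw [Real.holderConjugate_iff]
    constructor
    · rw [lt_div_iff₀ (by norm_num : (0:ℝ) < 2)]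
      linarith
    · rw [inv_div, inv_div]
      field_simp
      ring
  have hHolder := ENNReal.lintegral_mul_le_Lp_mul_Lq (volume.restrict (Ioc (0:ℝ) R))
    hconj hfm hgm
  -- simplify the exponents in hHolder
  have hsimpf : ∀ x : ℝ≥0∞, (x ^ ((2:ℝ)/(q+1))) ^ ((q+1)/2) = x := by
    intro x
    rw [← ENNReal.rpow_mul, show ((2:ℝ)/(q+1))*((q+1)/2) = 1 by field_simp, ENNReal.rpow_one]
  have hsimpg : ∀ x : ℝ≥0∞, (x ^ ((q-1)/(q+1))) ^ ((q+1)/(q-1)) = x := by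
    intro x
    rw [← ENNReal.rpow_mul, show ((q-1)/(q+1))*((q+1)/(q-1)) = 1 by
      have h1 : q - 1 ≠ 0 := by linarith
      have h2 : q + 1 ≠ 0 := by linarith
      field_simp, ENNReal.rpow_one]
  simp only [Pi.mul_apply, hsimpf, hsimpg] at hHolder
  have hone1 : (1:ℝ)/((q+1)/2) = (2:ℝ)/(q+1) := one_div_div _ _
  have hone2 : (1:ℝ)/((q+1)/(q-1)) = (q-1)/(q+1) := one_div_div _ _
  rw [hone1, hone2] at hHolder
  -- bound the two factors
  have hJle : (∫⁻ r in Ioc (0:ℝ) R,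
      ENNReal.ofReal (r^(N-1) * Real.exp (-(r^2)/(4*Du)) * |u r| ^ (q+1)))
      ≤ ∫⁻ r in Ioi (0:ℝ),
          ENNReal.ofReal (ρ r * Real.exp (-(r ^ 2) / (4 * Du)) * |u r| ^ (q + 1)) := by
    refine le_trans (setLIntegral_mono' measurableSet_Ioc (fun r hr => ?_))
      (lintegral_mono_set Ioc_subset_Ioi_self)
    refine ENNReal.ofReal_le_ofReal ?_
    rw [hρ r]
    have h1 : (1:ℝ) ≤ Real.exp (r^2/(4*Dv)) := Real.one_le_exp (by positivity)
    have hA0 : (0:ℝ) ≤ r^(N-1) * Real.exp (-(r^2)/(4*Du)) * |u r| ^ (q+1) :=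
      mul_nonneg (mul_nonneg (pow_nonneg hr.1.le _) (Real.exp_pos _).le)
        (Real.rpow_nonneg (abs_nonneg _) _)
    have step : r^(N-1) ≤ r^(N-1) * Real.exp (r^2/(4*Dv)) :=
      le_mul_of_one_le_right (pow_nonneg hr.1.le _) h1
    exact mul_le_mul_of_nonneg_right (mul_le_mul_of_nonneg_right step (Real.exp_pos _).le)
      (Real.rpow_nonneg (abs_nonneg _) _)
  have hPle : (∫⁻ r in Ioc (0:ℝ) R, ENNReal.ofReal (r^(N-1)))
      ≤ ENNReal.ofReal (R^(N-1)) * ENNReal.ofReal R := by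
    refine le_trans (setLIntegral_mono' measurableSet_Ioc (fun r hr =>
      ENNReal.ofReal_le_ofReal (pow_le_pow_left₀ hr.1.le hr.2 _))) ?_
    rw [setLIntegral_const, Real.volume_Ioc, sub_zero]
  have hA : (∫⁻ r in Ioc (0:ℝ) R, ENNReal.ofReal (ρ r * u r ^ 2))
      ≤ ENNReal.ofReal (K * (R^(N-1)*R) ^ ((q-1)/(q+1))) *
        (∫⁻ r in Ioi (0:ℝ),
          ENNReal.ofReal (ρ r * Real.exp (-(r ^ 2) / (4 * Du)) * |u r| ^ (q + 1)))
          ^ ((2:ℝ)/(q+1)) := by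
    have step1 : (∫⁻ r in Ioc (0:ℝ) R, ENNReal.ofReal (ρ r * u r ^ 2))
        ≤ ENNReal.ofReal K * ∫⁻ r in Ioc (0:ℝ) R,
            ((ENNReal.ofReal (r^(N-1) * Real.exp (-(r^2)/(4*Du)) * |u r| ^ (q+1)))
              ^ ((2:ℝ)/(q+1)) * (ENNReal.ofReal (r^(N-1))) ^ ((q-1)/(q+1))) := by
      rw [← lintegral_const_mul' _ _ ENNReal.ofReal_ne_top]
      refine setLIntegral_mono' measurableSet_Ioc (fun r hr => ?_)
      refine le_trans (ENNReal.ofReal_le_ofReal (hptABase r hr)) ?_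
      have hA0 : (0:ℝ) ≤ r^(N-1) * Real.exp (-(r^2)/(4*Du)) * |u r| ^ (q+1) :=
        mul_nonneg (mul_nonneg (pow_nonneg hr.1.le _) (Real.exp_pos _).le)
          (Real.rpow_nonneg (abs_nonneg _) _)
      have hP0 : (0:ℝ) ≤ r^(N-1) := pow_nonneg hr.1.le _
      rw [ENNReal.ofReal_mul hK0.le, ENNReal.ofReal_mul (Real.rpow_nonneg hA0 _),
        ← ENNReal.ofReal_rpow_of_nonneg hA0 hex1,
        ← ENNReal.ofReal_rpow_of_nonneg hP0 hex2]
    refine le_trans step1 ?_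
    refine le_trans (mul_le_mul' le_rfl hHolder) ?_
    rw [ENNReal.ofReal_mul hK0.le]
    have hfinal : (∫⁻ r in Ioc (0:ℝ) R,
        ENNReal.ofReal (r^(N-1) * Real.exp (-(r^2)/(4*Du)) * |u r| ^ (q+1))) ^ ((2:ℝ)/(q+1))
        * (∫⁻ r in Ioc (0:ℝ) R, ENNReal.ofReal (r^(N-1))) ^ ((q-1)/(q+1))
        ≤ (∫⁻ r in Ioi (0:ℝ),
            ENNReal.ofReal (ρ r * Real.exp (-(r ^ 2) / (4 * Du)) * |u r| ^ (q + 1)))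
            ^ ((2:ℝ)/(q+1))
          * ENNReal.ofReal ((R^(N-1)*R) ^ ((q-1)/(q+1))) := by
      refine mul_le_mul' (ENNReal.rpow_le_rpow hJle hex1) ?_
      refine le_trans (ENNReal.rpow_le_rpow hPle hex2) (le_of_eq ?_)
      rw [← ENNReal.ofReal_mul (pow_nonneg hR0.le _),
        ENNReal.ofReal_rpow_of_nonneg (mul_nonneg (pow_nonneg hR0.le _) hR0.le) hex2]
    calc ENNReal.ofReal K * ((∫⁻ r in Ioc (0:ℝ) R,
            ENNReal.ofReal (r^(N-1) * Real.exp (-(r^2)/(4*Du)) * |u r| ^ (q+1)))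
              ^ ((2:ℝ)/(q+1))
          * (∫⁻ r in Ioc (0:ℝ) R, ENNReal.ofReal (r^(N-1))) ^ ((q-1)/(q+1)))
        ≤ ENNReal.ofReal K * ((∫⁻ r in Ioi (0:ℝ),
            ENNReal.ofReal (ρ r * Real.exp (-(r ^ 2) / (4 * Du)) * |u r| ^ (q + 1)))
              ^ ((2:ℝ)/(q+1))
          * ENNReal.ofReal ((R^(N-1)*R) ^ ((q-1)/(q+1)))) := mul_le_mul' le_rfl hfinal
      _ = _ := by ring
  -- combine
  have hsplit : (∫⁻ r in Ioi (0:ℝ), ENNReal.ofReal (ρ r * u r ^ 2))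
      = (∫⁻ r in Ioc (0:ℝ) R, ENNReal.ofReal (ρ r * u r ^ 2))
        + ∫⁻ r in Ioi R, ENNReal.ofReal (ρ r * u r ^ 2) := by
    rw [← Ioc_union_Ioi_eq_Ioi hR0.le, lintegral_union measurableSet_Ioi Ioc_disjoint_Ioi_same]
  rw [hsplit, add_comm]
  exact add_le_add hB hA
end

section
/- Let N ≥ 1 be an integer, D_u, D_v, λ > 0, κ < −N/2, 1 < q < (N+2)/(N−2) when N ≥ 3 (and q > 1 arbitrary when N ≤ 2), and set ρ(r) = r^{N−1} e^{r²/(4D_v)}. Suppose φ : [0,∞) → ℝ is a positive C² solution of D_v (ρ φ')' = κ ρ φ + λ ρ e^{−r²/(4D_u)} φ^q on (0,∞) with φ(0) = 1, φ'(0) = 0, satisfying ∫₀^∞ ρ(r) φ(r)² dr < ∞ and ∫₀^∞ ρ(r) φ'(r)² dr < ∞. Then lim_{r→∞} ρ(r) φ(r)² = 0; in particular φ(r) = o(ρ(r)^{−1/2}) as r → ∞. -/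
open Real Set Filter MeasureTheory Asymptotics
open scoped Topology

/-- If `κ < −N/2`, `1 < q` (with `q < (N+2)/(N−2)` when `N ≥ 3`), and
`φ` is a positive C² solution of the profile equation belonging to the weighted Sobolev
space `W¹²_ρ(0,∞)` (i.e. `∫ ρ φ² < ∞` and `∫ ρ (φ')² < ∞`), then `ρ(r) φ(r)² → 0` as
`r → ∞`; in particular `φ(r) = o(ρ(r)^{−1/2})`. -/
theorem stmt12
    (N : ℕ) (hN : 1 ≤ N) (Du Dv lam q κ : ℝ)
    (hDu : 0 < Du) (hDv : 0 < Dv) (hlam : 0 < lam)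
    (hκ : κ < -(N : ℝ) / 2) (hq : 1 < q)
    (hq' : 3 ≤ N → q < ((N : ℝ) + 2) / ((N : ℝ) - 2))
    (ρ : ℝ → ℝ) (hρ : ∀ r : ℝ, ρ r = r ^ (N - 1) * Real.exp (r ^ 2 / (4 * Dv)))
    (φ dφ : ℝ → ℝ)
    (hpos : ∀ r ∈ Ici (0:ℝ), 0 < φ r)
    (hφ' : ∀ r ∈ Ici (0:ℝ), HasDerivWithinAt φ (dφ r) (Ici 0) r)
    (hODE : ∀ r ∈ Ioi (0:ℝ), HasDerivAt (fun s => Dv * (ρ s * dφ s))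
      (κ * ρ r * φ r + lam * ρ r * Real.exp (-(r ^ 2) / (4 * Du)) * φ r ^ q) r)
    (hφ0 : φ 0 = 1) (hdφ0 : dφ 0 = 0)
    (hint₁ : IntegrableOn (fun r => ρ r * φ r ^ 2) (Ioi 0))
    (hint₂ : IntegrableOn (fun r => ρ r * dφ r ^ 2) (Ioi 0)) :
    Tendsto (fun r => ρ r * φ r ^ 2) atTop (nhds 0) ∧
      φ =o[atTop] fun r => ρ r ^ (-(1 : ℝ) / 2) := by
  -- basic facts about ρ
  have hρpos : ∀ r : ℝ, 0 < r → 0 < ρ r := by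
    intro r hr; rw [hρ]; exact mul_pos (pow_pos hr _) (Real.exp_pos _)
  have hρnonneg : ∀ r : ℝ, 0 ≤ r → 0 ≤ ρ r := by
    intro r hr; rw [hρ]; exact mul_nonneg (pow_nonneg hr _) (Real.exp_pos _).le
  have hρcont : Continuous ρ := by
    rw [funext hρ]
    exact (continuous_pow _).mul (Real.continuous_exp.comp ((continuous_pow 2).div_const _))
  -- derivative of ρ
  set ρ' : ℝ → ℝ := fun r => (↑(N - 1) : ℝ) * r ^ (N - 1 - 1) * Real.exp (r ^ 2 / (4 * Dv))
      + r ^ (N - 1) * (Real.exp (r ^ 2 / (4 * Dv)) * (2 * r / (4 * Dv))) with hρ'def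
  have hρder : ∀ r : ℝ, HasDerivAt ρ (ρ' r) r := by
    intro r
    have h1 : HasDerivAt (fun s : ℝ => s ^ 2 / (4 * Dv)) (2 * r / (4 * Dv)) r := by
      have := (hasDerivAt_pow 2 r).div_const (4 * Dv)
      simpa using this
    have h2 := h1.exp
    have h3 := (hasDerivAt_pow (N - 1) r).mul h2
    rw [funext hρ]
    exact h3
  have hρ'cont : Continuous ρ' := by
    rw [hρ'def]
    apply Continuous.add
    · exact (continuous_const.mul (continuous_pow _)).mul
        (Real.continuous_exp.comp ((continuous_pow 2).div_const _))
    · exact (continuous_pow _).mul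
        ((Real.continuous_exp.comp ((continuous_pow 2).div_const _)).mul
          ((continuous_const.mul continuous_id).div_const _))
  have hρ'nonneg : ∀ r : ℝ, 0 ≤ r → 0 ≤ ρ' r := by
    intro r hr
    rw [hρ'def]
    have he := (Real.exp_pos (r ^ 2 / (4 * Dv))).le
    apply add_nonneg
    · exact mul_nonneg (mul_nonneg (Nat.cast_nonneg _) (pow_nonneg hr _)) he
    · exact mul_nonneg (pow_nonneg hr _)
        (mul_nonneg he (div_nonneg (by linarith) (by linarith)))
  -- derivative of φ on the interior
  have hφd : ∀ r ∈ Ioi (0:ℝ), HasDerivAt φ (dφ r) r := fun r hr =>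
    (hφ' r (mem_Ici.mpr (le_of_lt (mem_Ioi.mp hr)))).hasDerivAt (Ici_mem_nhds hr)
  have hφcont : ContinuousOn φ (Ioi 0) := fun r hr =>
    ((hφd r hr).continuousAt).continuousWithinAt
  -- continuity of dφ on (0,∞)
  have hdφcont : ContinuousOn dφ (Ioi 0) := by
    intro r hr
    have hmem : Ioi (0:ℝ) ∈ 𝓝 r := Ioi_mem_nhds hr
    have hψ : ContinuousAt (fun s => Dv * (ρ s * dφ s)) r := (hODE r hr).continuousAt
    have hden : ContinuousAt (fun s => Dv * ρ s) r :=
      continuousAt_const.mul hρcont.continuousAt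
    have hne : Dv * ρ r ≠ 0 := by
      have := hρpos r hr; positivity
    have hca : ContinuousAt (fun s => (Dv * (ρ s * dφ s)) / (Dv * ρ s)) r := hψ.div hden hne
    have heq : (fun s => (Dv * (ρ s * dφ s)) / (Dv * ρ s)) =ᶠ[𝓝 r] dφ := by
      filter_upwards [hmem] with s hs
      have h1 : ρ s ≠ 0 := (hρpos s hs).ne'
      field_simp
    exact (hca.congr heq).continuousWithinAt
  -- the function g = ρ φ² and its derivative p + h
  set g : ℝ → ℝ := fun r => ρ r * φ r ^ 2 with hgdef
  set p : ℝ → ℝ := fun r => ρ' r * φ r ^ 2 with hpdef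
  set h : ℝ → ℝ := fun r => ρ r * (2 * φ r * dφ r) with hhdef
  have hgder : ∀ r ∈ Ioi (0:ℝ), HasDerivAt g (p r + h r) r := by
    intro r hr
    have := (hρder r).mul ((hφd r hr).pow 2)
    refine HasDerivAt.congr_deriv (f := g) this ?_
    rw [hpdef, hhdef]
    simp only [Pi.pow_apply]
    push_cast
    ring
  have hgnonneg : ∀ r : ℝ, 0 < r → 0 ≤ g r := fun r hr =>
    mul_nonneg (hρnonneg r hr.le) (sq_nonneg _)
  -- continuity of p and h on (0,∞)
  have hpcont : ContinuousOn p (Ioi 0) :=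
    (hρ'cont.continuousOn).mul (hφcont.pow 2)
  have hhcont : ContinuousOn h (Ioi 0) :=
    (hρcont.continuousOn).mul ((continuousOn_const.mul hφcont).mul hdφcont)
  -- h is integrable on (0,∞)
  have hsum : IntegrableOn (fun r => ρ r * φ r ^ 2 + ρ r * dφ r ^ 2) (Ioi 0) :=
    hint₁.add hint₂
  have hhint : IntegrableOn h (Ioi 0) := by
    refine hsum.mono' (hhcont.aestronglyMeasurable measurableSet_Ioi) ?_
    rw [ae_restrict_iff' measurableSet_Ioi]
    refine ae_of_all _ fun r hr => ?_
    have hρn := (hρpos r hr).le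
    have h2 : |2 * φ r * dφ r| ≤ φ r ^ 2 + dφ r ^ 2 := by
      rw [abs_le]
      constructor <;> nlinarith [sq_nonneg (φ r + dφ r), sq_nonneg (φ r - dφ r)]
    rw [hhdef, Real.norm_eq_abs]
    calc |ρ r * (2 * φ r * dφ r)| = ρ r * |2 * φ r * dφ r| := by
          rw [abs_mul, abs_of_nonneg hρn]
      _ ≤ ρ r * (φ r ^ 2 + dφ r ^ 2) := mul_le_mul_of_nonneg_left h2 hρn
      _ = ρ r * φ r ^ 2 + ρ r * dφ r ^ 2 := by ring
  -- the fundamental theorem of calculus between 1 and b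
  have huIcc : ∀ b : ℝ, 1 ≤ b → uIcc (1:ℝ) b ⊆ Ioi 0 := by
    intro b hb
    rw [uIcc_of_le hb]
    intro x hx
    exact lt_of_lt_of_le one_pos hx.1
  have hFTC : ∀ b : ℝ, 1 ≤ b →
      (∫ r in (1:ℝ)..b, p r) + (∫ r in (1:ℝ)..b, h r) = g b - g 1 := by
    intro b hb
    have hsub := huIcc b hb
    have hip : IntervalIntegrable p volume 1 b := (hpcont.mono hsub).intervalIntegrable
    have hih : IntervalIntegrable h volume 1 b := (hhcont.mono hsub).intervalIntegrable
    have hFTC' := intervalIntegral.integral_eq_sub_of_hasDerivAt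
      (f := g) (f' := fun r => p r + h r) (fun x hx => hgder x (hsub hx)) (hip.add hih)
    rw [intervalIntegral.integral_add hip hih] at hFTC'
    exact hFTC'
  -- the "dissipative" part is uniformly bounded
  set C := ∫ r in Ioi (0:ℝ), |h r| with hCdef
  have hhbd : ∀ b : ℝ, 1 ≤ b → |∫ r in (1:ℝ)..b, h r| ≤ C := by
    intro b hb
    have h1 : |∫ r in (1:ℝ)..b, h r| ≤ ∫ r in (1:ℝ)..b, |h r| :=
      intervalIntegral.abs_integral_le_integral_abs hb
    have h2 : (∫ r in (1:ℝ)..b, |h r|) ≤ C := by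
      rw [intervalIntegral.integral_of_le hb, hCdef]
      refine setIntegral_mono_set hhint.abs ?_ ?_
      · exact ae_of_all _ fun r => abs_nonneg _
      · exact HasSubset.Subset.eventuallyLE fun x hx => lt_trans one_pos hx.1
    linarith
  -- there are arbitrarily large points where g ≤ 1
  have hgood : ∀ x : ℝ, 1 ≤ x → ∃ b, x ≤ b ∧ g b ≤ 1 := by
    intro x hx
    by_contra hcon
    push_neg at hcon
    have hone : IntegrableOn (fun _ : ℝ => (1:ℝ)) (Ioi x) := by
      refine (hint₁.mono_set (Ioi_subset_Ioi (by linarith))).mono'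
        aestronglyMeasurable_const ?_
      rw [ae_restrict_iff' measurableSet_Ioi]
      refine ae_of_all _ fun r hr => ?_
      have := hcon r hr.le
      simp only [norm_one]
      linarith
    rw [integrableOn_const_iff] at hone
    rcases hone with h0 | hfin
    · norm_num at h0
    · rw [Real.volume_Ioi] at hfin
      exact (lt_irrefl _ hfin)
  -- partial integrals of p are bounded
  have hg1 : 0 ≤ g 1 := hgnonneg 1 one_pos
  have hpbd : ∀ b : ℝ, 1 ≤ b → (∫ r in (1:ℝ)..b, p r) ≤ 1 + C := by
    intro b hb
    obtain ⟨b', hbb', hgb'⟩ := hgood b hb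
    have hb' : (1:ℝ) ≤ b' := hb.trans hbb'
    have hsub := huIcc b' hb'
    have hip : IntervalIntegrable p volume 1 b' := (hpcont.mono hsub).intervalIntegrable
    have hmono : (∫ r in (1:ℝ)..b, p r) ≤ ∫ r in (1:ℝ)..b', p r := by
      refine intervalIntegral.integral_mono_interval le_rfl hb hbb' ?_ hip
      filter_upwards [ae_restrict_mem measurableSet_Ioc] with r hr
      exact mul_nonneg (hρ'nonneg r (by linarith [hr.1])) (sq_nonneg _)
    have hf := hFTC b' hb'
    have h3 := abs_le.mp (hhbd b' hb')
    linarith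
  -- hence p is integrable on (1,∞)
  have hpint : IntegrableOn p (Ioi 1) := by
    refine integrableOn_Ioi_of_intervalIntegral_norm_bounded (μ := volume) (l := atTop)
      (b := fun x : ℝ => x) (1 + C) 1 (fun i => ?_) tendsto_id ?_
    · rcases le_or_gt i 1 with hi | hi
      · rw [Ioc_eq_empty (not_lt.mpr hi)]
        exact integrableOn_empty
      · have hsub := huIcc i hi.le
        have : IntervalIntegrable p volume 1 i := (hpcont.mono hsub).intervalIntegrable
        rw [intervalIntegrable_iff_integrableOn_Ioc_of_le hi.le] at this
        exact this
    · filter_upwards [eventually_ge_atTop (1:ℝ)] with i hi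
      have heq : (∫ r in (1:ℝ)..i, ‖p r‖) = ∫ r in (1:ℝ)..i, p r := by
        refine intervalIntegral.integral_congr fun r hr => ?_
        have hr0 : 0 < r := huIcc i hi hr
        exact Real.norm_of_nonneg (mul_nonneg (hρ'nonneg r hr0.le) (sq_nonneg _))
      rw [heq]
      exact hpbd i hi
  -- so p + h is integrable on (1,∞) and g converges at infinity
  have hDint : IntegrableOn (fun r => p r + h r) (Ioi 1) :=
    hpint.add (hhint.mono_set (Ioi_subset_Ioi zero_le_one))
  have hT := intervalIntegral_tendsto_integral_Ioi (μ := volume) (l := atTop)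
    (b := fun x : ℝ => x) 1 hDint tendsto_id
  set J := ∫ r in Ioi (1:ℝ), (p r + h r) with hJdef
  have hgT : Tendsto g atTop (𝓝 (g 1 + J)) := by
    have h1 : Tendsto (fun b : ℝ => g 1 + ∫ r in (1:ℝ)..b, (p r + h r)) atTop
        (𝓝 (g 1 + J)) := tendsto_const_nhds.add hT
    refine h1.congr' ?_
    filter_upwards [eventually_ge_atTop (1:ℝ)] with b hb
    have hsub := huIcc b hb
    have hip : IntervalIntegrable p volume 1 b := (hpcont.mono hsub).intervalIntegrable
    have hih : IntervalIntegrable h volume 1 b := (hhcont.mono hsub).intervalIntegrable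
    rw [intervalIntegral.integral_add hip hih]
    have := hFTC b hb
    linarith
  -- the limit must be 0
  have hL0 : g 1 + J = 0 := by
    have hge : 0 ≤ g 1 + J := by
      refine ge_of_tendsto hgT ?_
      filter_upwards [eventually_gt_atTop (0:ℝ)] with r hr
      exact hgnonneg r hr
    by_contra hne
    have hLpos : 0 < g 1 + J := lt_of_le_of_ne hge (Ne.symm hne)
    have hev : ∀ᶠ b in atTop, (g 1 + J) / 2 < g b :=
      hgT.eventually (eventually_gt_nhds (by linarith))
    obtain ⟨R, hR⟩ := eventually_atTop.mp hev
    have hone : IntegrableOn (fun _ : ℝ => (g 1 + J) / 2) (Ioi (max R 0)) := by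
      refine (hint₁.mono_set (Ioi_subset_Ioi (le_max_right _ _))).mono'
        aestronglyMeasurable_const ?_
      rw [ae_restrict_iff' measurableSet_Ioi]
      refine ae_of_all _ fun r hr => ?_
      have h1 := hR r ((le_max_left R 0).trans hr.le)
      rw [Real.norm_of_nonneg (by linarith)]
      exact h1.le
    rw [integrableOn_const_iff] at hone
    rcases hone with h0 | hfin
    · rw [enorm_eq_zero] at h0
      linarith
    · rw [Real.volume_Ioi] at hfin
      exact (lt_irrefl _ hfin)
  rw [hL0] at hgT
  refine ⟨hgT, ?_⟩
  -- the little-o statement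
  have hsq : Tendsto (fun r => Real.sqrt (g r)) atTop (𝓝 0) := by
    have := (Real.continuous_sqrt.tendsto 0).comp hgT
    rw [Real.sqrt_zero] at this
    exact this
  rw [Asymptotics.isLittleO_iff_tendsto']
  · refine hsq.congr' ?_
    filter_upwards [eventually_gt_atTop (0:ℝ)] with r hr
    have hρr := hρpos r hr
    have hφr := hpos r hr.le
    have h1 : ρ r ^ (-(1:ℝ)/2) = (Real.sqrt (ρ r))⁻¹ := by
      rw [show (-(1:ℝ)/2) = -(1/2 : ℝ) by norm_num, Real.rpow_neg hρr.le,
        ← Real.sqrt_eq_rpow]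
    simp only [hgdef]
    rw [Real.sqrt_mul hρr.le, Real.sqrt_sq hφr.le, h1, div_eq_mul_inv, inv_inv]
    ring
  · filter_upwards [eventually_gt_atTop (0:ℝ)] with r hr h0
    exact absurd h0 (Real.rpow_pos_of_pos (hρpos r hr) _).ne'
end

section
/- Let N ≥ 1 be an integer, D_u, D_v, λ > 0, q ≥ 1 and κ ≥ −N/2, and set ρ(r) = r^{N−1} e^{r²/(4D_v)}. Let φ : [0,∞) → ℝ be a positive C² solution of D_v (ρ φ')' = κ ρ φ + λ ρ e^{−r²/(4D_u)} φ^q on (0,∞) with φ(0) = 1, φ'(0) = 0, and assume there exist C > 0 and m > 0 with φ(r) ≤ C (1+r)^m for all r ≥ 0. Then for every η > 2κ, the function g_η(r) = r^{−η} φ(r) is decreasing for all sufficiently large r and lim_{r→∞} r^{−η} φ(r) = 0. -/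
open Real Set Filter

set_option maxHeartbeats 1000000 in
/-- Let `φ` be a positive C² global solution of the profile equation with
`κ ≥ −N/2` and algebraic growth `φ(r) ≤ C(1+r)^m`. Then for every `η > 2κ` the function
`g_η(r) = r^{−η} φ(r)` is decreasing for all sufficiently large `r`, and `r^{−η} φ(r) → 0`
as `r → ∞`. -/
theorem stmt13
    (N : ℕ) (hN : 1 ≤ N) (Du Dv lam q κ : ℝ)
    (hDu : 0 < Du) (hDv : 0 < Dv) (hlam : 0 < lam) (hq : 1 ≤ q)
    (hκ : -(N : ℝ) / 2 ≤ κ)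
    (ρ : ℝ → ℝ) (hρ : ∀ r : ℝ, ρ r = r ^ (N - 1) * Real.exp (r ^ 2 / (4 * Dv)))
    (φ dφ : ℝ → ℝ)
    (hpos : ∀ r ∈ Ici (0:ℝ), 0 < φ r)
    (hφ' : ∀ r ∈ Ici (0:ℝ), HasDerivWithinAt φ (dφ r) (Ici 0) r)
    (hODE : ∀ r ∈ Ioi (0:ℝ), HasDerivAt (fun s => Dv * (ρ s * dφ s))
      (κ * ρ r * φ r + lam * ρ r * Real.exp (-(r ^ 2) / (4 * Du)) * φ r ^ q) r)
    (hφ0 : φ 0 = 1) (hdφ0 : dφ 0 = 0)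
    (C m : ℝ) (hC : 0 < C) (hm : 0 < m)
    (hgrowth : ∀ r : ℝ, 0 ≤ r → φ r ≤ C * (1 + r) ^ m) :
    ∀ η : ℝ, 2 * κ < η →
      (∃ R : ℝ, 0 < R ∧ StrictAntiOn (fun r => r ^ (-η) * φ r) (Ici R)) ∧
        Tendsto (fun r => r ^ (-η) * φ r) atTop (nhds 0) := by
  intro η hη
  have hq1 : (0:ℝ) ≤ q - 1 := by linarith
  have hDv' : Dv ≠ 0 := ne_of_gt hDv
  set A : ℝ := (η - 2 * κ) / 2 with hAdef
  have hA0 : 0 < A := by rw [hAdef]; linarith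
  have rpow_split : ∀ (r : ℝ), 0 < r → ∀ a : ℝ, r ^ (a + 1) = r ^ a * r := fun r hr a => by
    rw [Real.rpow_add hr, Real.rpow_one]
  -- basic positivity
  have hρpos : ∀ r : ℝ, 0 < r → 0 < ρ r := by
    intro r hr; rw [hρ r]; positivity
  have hφpos : ∀ r : ℝ, 0 < r → 0 < φ r := fun r hr => hpos r (le_of_lt hr)
  have hρfun : ρ = fun s : ℝ => s ^ (N - 1) * Real.exp (s ^ 2 / (4 * Dv)) := funext hρ
  -- derivative of φ
  have hφat : ∀ r : ℝ, 0 < r → HasDerivAt φ (dφ r) r := fun r hr =>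
    (hφ' r (le_of_lt hr)).hasDerivAt (Ici_mem_nhds hr)
  -- derivative of ρ
  have hρD : ∀ r : ℝ, 0 < r → HasDerivAt ρ (ρ r * (((N:ℝ) - 1) / r + r / (2 * Dv))) r := by
    intro r hr
    have hrne : r ≠ 0 := ne_of_gt hr
    obtain ⟨k, rfl⟩ : ∃ k, N = k + 1 := ⟨N - 1, (Nat.succ_pred_eq_of_pos hN).symm⟩
    simp only [Nat.add_sub_cancel] at hρ hρfun ⊢
    have h1 := hasDerivAt_pow k r
    have h2 : HasDerivAt (fun s : ℝ => Real.exp (s ^ 2 / (4 * Dv)))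
        (Real.exp (r ^ 2 / (4 * Dv)) * ((2:ℕ) * r ^ (2 - 1) / (4 * Dv))) r :=
      ((hasDerivAt_pow 2 r).div_const (4 * Dv)).exp
    have h3 := h1.mul h2
    have hval : (r ^ k * Real.exp (r ^ 2 / (4 * Dv))) * ((((k:ℝ) + 1) - 1) / r + r / (2 * Dv))
        = (k:ℝ) * r ^ (k - 1) * Real.exp (r ^ 2 / (4 * Dv))
          + r ^ k * (Real.exp (r ^ 2 / (4 * Dv)) * ((2:ℕ) * r ^ (2 - 1) / (4 * Dv))) := by
      cases k with
      | zero => push_cast; field_simp; ring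
      | succ j =>
        simp only [Nat.add_sub_cancel]
        push_cast
        field_simp
        ring
    rw [hρ r, hρfun]
    push_cast
    rw [hval]
    exact h3
  -- derivative of ρ * dφ from the ODE
  have hPd : ∀ r : ℝ, 0 < r → HasDerivAt (fun s => ρ s * dφ s)
      ((κ * ρ r * φ r + lam * ρ r * Real.exp (-(r ^ 2) / (4 * Du)) * φ r ^ q) / Dv) r := by
    intro r hr
    have h0 := (hODE r (mem_Ioi.mpr hr)).const_mul Dv⁻¹
    have e1 : (fun s : ℝ => ρ s * dφ s) = fun y : ℝ => Dv⁻¹ * (Dv * (ρ y * dφ y)) := by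
      funext s; rw [inv_mul_cancel_left₀ hDv']
    rw [e1, div_eq_inv_mul]
    exact h0
  -- the comparison function H and its derivative
  set H : ℝ → ℝ := fun s => s ^ η * (ρ s * dφ s) - η * (s ^ (η - 1) * (ρ s * φ s)) with hHdef
  have hHD : ∀ r : ℝ, 0 < r → HasDerivAt H
      (ρ r * r ^ (η - 2) *
        (r ^ 2 * ((κ - η / 2) * φ r + lam * Real.exp (-(r ^ 2) / (4 * Du)) * φ r ^ q) / Dv
          - η * (η + (N:ℝ) - 2) * φ r)) r := by
    intro r hr
    have hrne : r ≠ 0 := ne_of_gt hr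
    have d1 : HasDerivAt (fun s : ℝ => s ^ η) (η * r ^ (η - 1)) r :=
      Real.hasDerivAt_rpow_const (Or.inl hrne)
    have d2 : HasDerivAt (fun s : ℝ => s ^ (η - 1)) ((η - 1) * r ^ (η - 1 - 1)) r :=
      Real.hasDerivAt_rpow_const (Or.inl hrne)
    have d3 := (hρD r hr).mul (hφat r hr)
    have d4 := d1.mul (hPd r hr)
    have d5 := d2.mul d3
    have d6 := d4.sub (d5.const_mul η)
    have e1 : r ^ (η - 1) = r ^ (η - 2) * r := by
      rw [show η - 1 = (η - 2) + 1 by ring, Real.rpow_add hr, Real.rpow_one]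
    have e0 : r ^ (η - 1 - 1) = r ^ (η - 2) := by congr 1; ring
    have e2 : r ^ η = r ^ (η - 2) * r ^ (2:ℕ) := by
      rw [← Real.rpow_natCast r 2, ← Real.rpow_add hr]
      norm_num
    have hval : ρ r * r ^ (η - 2) *
        (r ^ 2 * ((κ - η / 2) * φ r + lam * Real.exp (-(r ^ 2) / (4 * Du)) * φ r ^ q) / Dv
          - η * (η + (N:ℝ) - 2) * φ r)
        = (η * r ^ (η - 1) * (ρ r * dφ r)
            + r ^ η * ((κ * ρ r * φ r + lam * ρ r * Real.exp (-(r ^ 2) / (4 * Du)) * φ r ^ q) / Dv))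
          - η * ((η - 1) * r ^ (η - 1 - 1) * (ρ r * φ r)
            + r ^ (η - 1) * (ρ r * (((N:ℝ) - 1) / r + r / (2 * Dv)) * φ r + ρ r * dφ r)) := by
      rw [e1, e0, e2]
      field_simp
      ring
    rw [hHdef, hval]
    exact d6
  -- relation between H and the numerator of G'
  have hHΦ : ∀ r : ℝ, 0 < r → H r = ρ r * r ^ (η - 1) * (r * dφ r - η * φ r) := by
    intro r hr
    have e1 : r ^ η = r ^ (η - 1) * r := by
      rw [← rpow_split r hr (η - 1), show η - 1 + 1 = η from by ring]
    show r ^ η * (ρ r * dφ r) - η * (r ^ (η - 1) * (ρ r * φ r)) = _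
    rw [e1]; ring
  -- G and its derivative Gd
  set G : ℝ → ℝ := fun r => r ^ (-η) * φ r with hGdef
  set Gd : ℝ → ℝ := fun r => r ^ (-η - 1) * (r * dφ r - η * φ r) with hGddef
  have hGpos : ∀ r : ℝ, 0 < r → 0 < G r := fun r hr =>
    mul_pos (Real.rpow_pos_of_pos hr _) (hφpos r hr)
  have hGD : ∀ r : ℝ, 0 < r → HasDerivAt G (Gd r) r := by
    intro r hr
    have hrne : r ≠ 0 := ne_of_gt hr
    have d1 : HasDerivAt (fun s : ℝ => s ^ (-η)) ((-η) * r ^ (-η - 1)) r :=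
      Real.hasDerivAt_rpow_const (Or.inl hrne)
    have d2 := d1.mul (hφat r hr)
    have e1 : r ^ (-η) = r ^ (-η - 1) * r := by
      rw [← rpow_split r hr (-η - 1), show -η - 1 + 1 = -η from by ring]
    have hval : Gd r = -η * r ^ (-η - 1) * φ r + r ^ (-η) * dφ r := by
      simp only [hGddef]
      rw [e1]; ring
    rw [hGdef, hval]
    exact d2
  have hGH : ∀ r : ℝ, 0 < r → Gd r * (ρ r * r ^ (2 * η)) = H r := by
    intro r hr
    have e1 : r ^ (-η - 1) * r ^ (2 * η) = r ^ (η - 1) := by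
      rw [← Real.rpow_add hr]; congr 1; ring
    rw [hHΦ r hr]
    simp only [hGddef]
    linear_combination ρ r * (r * dφ r - η * φ r) * e1
  -- growth of ρ r * r ^ a
  have GR : ∀ a M : ℝ, ∃ R : ℝ, 1 ≤ R ∧ ∀ r : ℝ, R ≤ r → M ≤ ρ r * r ^ a := by
    intro a M
    refine ⟨max 1 (max (4 * Dv * (|a| + 1)) (Real.log (max M 1))), le_max_left _ _, ?_⟩
    intro r hr
    have hr1 : (1:ℝ) ≤ r := le_trans (le_max_left _ _) hr
    have hr0 : (0:ℝ) < r := lt_of_lt_of_le one_pos hr1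
    have hra : 4 * Dv * (|a| + 1) ≤ r := le_trans (le_trans (le_max_left _ _) (le_max_right _ _)) hr
    have hrM : Real.log (max M 1) ≤ r := le_trans (le_trans (le_max_right _ _) (le_max_right _ _)) hr
    have hlogr : 0 ≤ Real.log r := Real.log_nonneg hr1
    have hlogr2 : Real.log r ≤ r := by
      have := Real.log_le_sub_one_of_pos hr0; linarith
    have h1 : (1:ℝ) ≤ r ^ (N - 1) := one_le_pow₀ hr1
    have hkey : r ≤ r ^ 2 / (4 * Dv) + Real.log r * a := by
      have ha1 : -|a| * Real.log r ≤ Real.log r * a := by nlinarith [neg_abs_le a]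
      have ha2 : -|a| * r ≤ -|a| * Real.log r := by nlinarith [abs_nonneg a]
      have ha3 : (|a| + 1) * r ≤ r ^ 2 / (4 * Dv) := by
        rw [le_div_iff₀ (by positivity)]
        nlinarith [mul_le_mul_of_nonneg_right hra (le_of_lt hr0)]
      linarith
    have h2 : max M 1 ≤ Real.exp (r ^ 2 / (4 * Dv) + Real.log r * a) := by
      calc max M 1 = Real.exp (Real.log (max M 1)) := (Real.exp_log (by positivity)).symm
        _ ≤ Real.exp r := Real.exp_le_exp.mpr hrM
        _ ≤ _ := Real.exp_le_exp.mpr hkey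
    have h3 : Real.exp (r ^ 2 / (4 * Dv) + Real.log r * a)
        = Real.exp (r ^ 2 / (4 * Dv)) * r ^ a := by
      rw [Real.exp_add, Real.rpow_def_of_pos hr0]
    calc M ≤ max M 1 := le_max_left _ _
      _ ≤ Real.exp (r ^ 2 / (4 * Dv)) * r ^ a := by rw [← h3]; exact h2
      _ ≤ ρ r * r ^ a := by
          rw [hρ r]
          have hrp : 0 ≤ r ^ a := le_of_lt (Real.rpow_pos_of_pos hr0 a)
          exact mul_le_mul_of_nonneg_right
            (le_mul_of_one_le_left (le_of_lt (Real.exp_pos _)) h1) hrp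
  -- smallness of the nonlinear term
  set P : ℝ := m * (q - 1) with hPdef
  have hP0 : 0 ≤ P := mul_nonneg (le_of_lt hm) hq1
  set Cq : ℝ := lam * C ^ (q - 1) with hCqdef
  have hCq0 : 0 < Cq := mul_pos hlam (Real.rpow_pos_of_pos hC _)
  set Ri : ℝ := max 1 (max (4 * Du * (P + 1)) (Real.log (2 * Cq / A))) with hRidef
  have hsmall : ∀ r : ℝ, Ri ≤ r →
      lam * Real.exp (-(r ^ 2) / (4 * Du)) * φ r ^ (q - 1) ≤ A / 2 := by
    intro r hr
    have hr1 : (1:ℝ) ≤ r := le_trans (le_max_left _ _) hr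
    have hr0 : (0:ℝ) < r := lt_of_lt_of_le one_pos hr1
    have hrDu : 4 * Du * (P + 1) ≤ r := le_trans (le_trans (le_max_left _ _) (le_max_right _ _)) hr
    have hrA : Real.log (2 * Cq / A) ≤ r := le_trans (le_trans (le_max_right _ _) (le_max_right _ _)) hr
    have h1r : (0:ℝ) < 1 + r := by linarith
    have b1 : φ r ^ (q - 1) ≤ (C * (1 + r) ^ m) ^ (q - 1) :=
      Real.rpow_le_rpow (le_of_lt (hφpos r hr0)) (hgrowth r (le_of_lt hr0)) hq1
    have b2 : (C * (1 + r) ^ m) ^ (q - 1) = C ^ (q - 1) * (1 + r) ^ P := by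
      rw [Real.mul_rpow (le_of_lt hC) (Real.rpow_nonneg (le_of_lt h1r) _),
        ← Real.rpow_mul (le_of_lt h1r), ← hPdef]
    have b3 : Real.exp (-(r ^ 2) / (4 * Du)) * (1 + r) ^ P
        = Real.exp (-(r ^ 2) / (4 * Du) + Real.log (1 + r) * P) := by
      rw [Real.exp_add, Real.rpow_def_of_pos h1r]
    have hlog : Real.log (1 + r) ≤ r := by
      have := Real.log_le_sub_one_of_pos h1r; linarith
    have b4 : -(r ^ 2) / (4 * Du) + Real.log (1 + r) * P ≤ -r := by
      have h5 : Real.log (1 + r) * P ≤ r * P := mul_le_mul_of_nonneg_right hlog hP0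
      have h6 : (P + 1) * r * (4 * Du) ≤ r ^ 2 := by
        nlinarith [mul_le_mul_of_nonneg_right hrDu (le_of_lt hr0)]
      have h7 : (P + 1) * r ≤ r ^ 2 / (4 * Du) := (le_div_iff₀ (by positivity)).mpr h6
      have h8 : -(r ^ 2) / (4 * Du) = -(r ^ 2 / (4 * Du)) := by ring
      rw [h8]
      linarith
    have hb1 : lam * Real.exp (-(r ^ 2) / (4 * Du)) * φ r ^ (q - 1)
        ≤ lam * Real.exp (-(r ^ 2) / (4 * Du)) * (C ^ (q - 1) * (1 + r) ^ P) := by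
      apply mul_le_mul_of_nonneg_left _ (by positivity)
      rw [← b2]; exact b1
    have hb2 : lam * Real.exp (-(r ^ 2) / (4 * Du)) * (C ^ (q - 1) * (1 + r) ^ P)
        = Cq * Real.exp (-(r ^ 2) / (4 * Du) + Real.log (1 + r) * P) := by
      rw [← b3, hCqdef]; ring
    have hb3 : Cq * Real.exp (-(r ^ 2) / (4 * Du) + Real.log (1 + r) * P)
        ≤ Cq * Real.exp (-r) :=
      mul_le_mul_of_nonneg_left (Real.exp_le_exp.mpr b4) (le_of_lt hCq0)
    have hb4 : Cq * Real.exp (-r) ≤ Cq * (A / (2 * Cq)) := by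
      apply mul_le_mul_of_nonneg_left _ (le_of_lt hCq0)
      have h9 : Real.log (A / (2 * Cq)) = -Real.log (2 * Cq / A) := by
        rw [← Real.log_inv, inv_div]
      have h8 : -r ≤ Real.log (A / (2 * Cq)) := by rw [h9]; linarith
      calc Real.exp (-r) ≤ Real.exp (Real.log (A / (2 * Cq))) := Real.exp_le_exp.mpr h8
        _ = A / (2 * Cq) := Real.exp_log (by positivity)
    have hb5 : Cq * (A / (2 * Cq)) = A / 2 := by field_simp
    linarith
  -- the threshold R0
  set R0 : ℝ := max Ri (max (1 + 4 * Dv / A * |η * (η + (N:ℝ) - 2)|)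
      (1 + 2 * Dv * |(N:ℝ) + 2 * η - 2|)) with hR0def
  have hRi1 : (1:ℝ) ≤ Ri := le_max_left _ _
  have hR0_1 : (1:ℝ) ≤ R0 := le_trans hRi1 (le_max_left _ _)
  have hR0pos : (0:ℝ) < R0 := lt_of_lt_of_le one_pos hR0_1
  -- the derivative value function T
  set T : ℝ → ℝ := fun r => ρ r * r ^ (η - 2) *
      (r ^ 2 * ((κ - η / 2) * φ r + lam * Real.exp (-(r ^ 2) / (4 * Du)) * φ r ^ q) / Dv
        - η * (η + (N:ℝ) - 2) * φ r) with hTdef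
  have hHDT : ∀ r : ℝ, 0 < r → HasDerivAt H (T r) r := hHD
  -- main derivative bound
  have hHbound : ∀ r : ℝ, R0 ≤ r → T r ≤ -(A / (4 * Dv)) * (ρ r * (r ^ η * φ r)) := by
    intro r hrr
    have hr1 : (1:ℝ) ≤ r := le_trans hR0_1 hrr
    have hr0 : (0:ℝ) < r := lt_of_lt_of_le one_pos hr1
    have hs := hsmall r (le_trans (le_max_left _ _) hrr)
    have hφr := hφpos r hr0
    have hρr := hρpos r hr0
    have hq2 : φ r ^ q = φ r ^ (q - 1) * φ r := by
      rw [← Real.rpow_add_one (ne_of_gt hφr) (q - 1), show q - 1 + 1 = q from by ring]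
    have habs : 1 + 4 * Dv / A * |η * (η + (N:ℝ) - 2)| ≤ r :=
      le_trans (le_trans (le_max_left _ _) (le_max_right _ _)) hrr
    have habs2 : -(η * (η + (N:ℝ) - 2)) ≤ A / (4 * Dv) * r ^ 2 := by
      have h4 : 4 * Dv * |η * (η + (N:ℝ) - 2)| ≤ A * (r - 1) := by
        have h5 := mul_le_mul_of_nonneg_left (by linarith : 4 * Dv / A * |η * (η + (N:ℝ) - 2)| ≤ r - 1) (le_of_lt hA0)
        have e : A * (4 * Dv / A * |η * (η + (N:ℝ) - 2)|) = 4 * Dv * |η * (η + (N:ℝ) - 2)| := by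
          field_simp
        linarith [e ▸ h5]
      rw [div_mul_eq_mul_div, le_div_iff₀ (by positivity : (0:ℝ) < 4 * Dv)]
      nlinarith [neg_abs_le (η * (η + (N:ℝ) - 2)), abs_nonneg (η * (η + (N:ℝ) - 2)),
        mul_nonneg (by linarith : (0:ℝ) ≤ r - 1) (by linarith : (0:ℝ) ≤ r), hA0.le]
    have h1 : lam * Real.exp (-(r ^ 2) / (4 * Du)) * φ r ^ q ≤ A / 2 * φ r := by
      rw [hq2, ← mul_assoc]
      exact mul_le_mul_of_nonneg_right hs (le_of_lt hφr)
    have h2 : κ - η / 2 = -A := by rw [hAdef]; ring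
    have hinner : (κ - η / 2) * φ r + lam * Real.exp (-(r ^ 2) / (4 * Du)) * φ r ^ q
        ≤ -(A / 2) * φ r := by
      have h3 : (κ - η / 2) * φ r = -A * φ r := by rw [h2]
      linarith
    have hbig : r ^ 2 * ((κ - η / 2) * φ r + lam * Real.exp (-(r ^ 2) / (4 * Du)) * φ r ^ q) / Dv
        - η * (η + (N:ℝ) - 2) * φ r ≤ -(A / (4 * Dv)) * (r ^ 2 * φ r) := by
      have h5 : r ^ 2 * ((κ - η / 2) * φ r + lam * Real.exp (-(r ^ 2) / (4 * Du)) * φ r ^ q)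
          ≤ r ^ 2 * (-(A / 2) * φ r) := mul_le_mul_of_nonneg_left hinner (sq_nonneg r)
      have h6 : r ^ 2 * ((κ - η / 2) * φ r + lam * Real.exp (-(r ^ 2) / (4 * Du)) * φ r ^ q) / Dv
          ≤ r ^ 2 * (-(A / 2) * φ r) / Dv := by
        exact (div_le_div_iff_of_pos_right hDv).mpr h5
      have h7 : -(η * (η + (N:ℝ) - 2) * φ r) ≤ A / (4 * Dv) * r ^ 2 * φ r := by
        have := mul_le_mul_of_nonneg_right habs2 (le_of_lt hφr)
        linarith [this]
      have hid : r ^ 2 * (-(A / 2) * φ r) / Dv + A / (4 * Dv) * r ^ 2 * φ r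
          = -(A / (4 * Dv)) * (r ^ 2 * φ r) := by field_simp; ring
      linarith
    have hnn : (0:ℝ) ≤ ρ r * r ^ (η - 2) := le_of_lt (mul_pos hρr (Real.rpow_pos_of_pos hr0 _))
    have h8 := mul_le_mul_of_nonneg_left hbig hnn
    have e2 : r ^ η = r ^ (η - 2) * r ^ (2:ℕ) := by
      rw [← Real.rpow_natCast r 2, ← Real.rpow_add hr0]; norm_num
    calc T r = ρ r * r ^ (η - 2) *
          (r ^ 2 * ((κ - η / 2) * φ r + lam * Real.exp (-(r ^ 2) / (4 * Du)) * φ r ^ q) / Dv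
            - η * (η + (N:ℝ) - 2) * φ r) := rfl
      _ ≤ ρ r * r ^ (η - 2) * (-(A / (4 * Dv)) * (r ^ 2 * φ r)) := h8
      _ = -(A / (4 * Dv)) * (ρ r * (r ^ η * φ r)) := by rw [e2]; ring
  -- the key contradiction lemma
  have KEY : ∀ c W : ℝ, 0 < c → R0 ≤ W → (∀ r : ℝ, W ≤ r → c ≤ G r) → False := by
    intro c W hc hW hlow
    have hWpos : (0:ℝ) < W := lt_of_lt_of_le hR0pos hW
    -- lower bound for φ
    have hφlow : ∀ r : ℝ, W ≤ r → c * r ^ η ≤ φ r := by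
      intro r hrr
      have hr0 : (0:ℝ) < r := lt_of_lt_of_le hWpos hrr
      have h1 := mul_le_mul_of_nonneg_right (hlow r hrr) (le_of_lt (Real.rpow_pos_of_pos hr0 η))
      have e : r ^ (-η) * φ r * r ^ η = φ r := by
        rw [Real.rpow_neg (le_of_lt hr0)]
        field_simp
      have e2 : G r = r ^ (-η) * φ r := rfl
      rw [e2, e] at h1
      exact h1
    -- refined derivative bound
    have hHb2 : ∀ r : ℝ, W ≤ r → T r ≤ -(A * c / (4 * Dv)) * (ρ r * r ^ (2 * η)) := by
      intro r hrr
      have hr0 : (0:ℝ) < r := lt_of_lt_of_le hWpos hrr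
      have hρr := hρpos r hr0
      have h1 := hHbound r (le_trans hW hrr)
      have h2 := hφlow r hrr
      have e : r ^ η * r ^ η = r ^ (2 * η) := by
        rw [← Real.rpow_add hr0]; congr 1; ring
      have h3 : ρ r * (r ^ η * (c * r ^ η)) ≤ ρ r * (r ^ η * φ r) := by
        apply mul_le_mul_of_nonneg_left _ (le_of_lt hρr)
        exact mul_le_mul_of_nonneg_left h2 (le_of_lt (Real.rpow_pos_of_pos hr0 η))
      have h4 : -(A / (4 * Dv)) * (ρ r * (r ^ η * φ r))
          ≤ -(A / (4 * Dv)) * (ρ r * (r ^ η * (c * r ^ η))) := by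
        apply mul_le_mul_of_nonpos_left h3
        have : (0:ℝ) < A / (4 * Dv) := by positivity
        linarith
      have h5 : -(A / (4 * Dv)) * (ρ r * (r ^ η * (c * r ^ η)))
          = -(A * c / (4 * Dv)) * (ρ r * r ^ (2 * η)) := by
        rw [← e]; ring
      linarith
    -- the auxiliary function p and its derivative
    set p : ℝ → ℝ := fun s => 2 * Dv * (ρ s * s ^ (2 * η - 1)) with hpdef
    set pd : ℝ → ℝ := fun r => 2 * Dv * (ρ r * (((N:ℝ) - 1) / r + r / (2 * Dv)) * r ^ (2 * η - 1)
        + ρ r * ((2 * η - 1) * r ^ (2 * η - 1 - 1))) with hpddef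
    have hpD : ∀ r : ℝ, 0 < r → HasDerivAt p (pd r) r := by
      intro r hr
      have d1 := (hρD r hr).mul
        (Real.hasDerivAt_rpow_const (x := r) (p := 2 * η - 1) (Or.inl (ne_of_gt hr)))
      exact d1.const_mul (2 * Dv)
    have hpbound : ∀ r : ℝ, W ≤ r → pd r ≤ 2 * (ρ r * r ^ (2 * η)) := by
      intro r hrr
      have hrW : W ≤ r := hrr
      have hr1 : (1:ℝ) ≤ r := le_trans (le_trans hR0_1 hW) hrr
      have hr0 : (0:ℝ) < r := lt_of_lt_of_le one_pos hr1
      have hρr := hρpos r hr0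
      have hcurv : 1 + 2 * Dv * |(N:ℝ) + 2 * η - 2| ≤ r :=
        le_trans (le_trans (le_trans (le_max_right _ _) (le_max_right _ _)) hW) hrr
      have e1 : r ^ (2 * η - 1) = r ^ (2 * η - 2) * r := by
        rw [← rpow_split r hr0 (2 * η - 2), show 2 * η - 2 + 1 = 2 * η - 1 from by ring]
      have e0 : r ^ (2 * η - 1 - 1) = r ^ (2 * η - 2) := by congr 1; ring
      have e2 : r ^ (2 * η) = r ^ (2 * η - 2) * r ^ (2:ℕ) := by
        rw [← Real.rpow_natCast r 2, ← Real.rpow_add hr0]; congr 1; ring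
      have eid : pd r = ρ r * (r ^ (2 * η - 2) * r ^ (2:ℕ))
          + 2 * Dv * ((N:ℝ) + 2 * η - 2) * (ρ r * r ^ (2 * η - 2)) := by
        simp only [hpddef]
        rw [e1, e0]
        field_simp
        ring
      have hsq : 2 * Dv * ((N:ℝ) + 2 * η - 2) ≤ r ^ 2 := by
        nlinarith [mul_le_mul_of_nonneg_left (le_abs_self ((N:ℝ) + 2 * η - 2))
            (by positivity : (0:ℝ) ≤ 2 * Dv),
          mul_nonneg (by linarith : (0:ℝ) ≤ r - 1) (by linarith : (0:ℝ) ≤ r)]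
      have hx : (0:ℝ) < ρ r * r ^ (2 * η - 2) :=
        mul_pos hρr (Real.rpow_pos_of_pos hr0 _)
      rw [eid, e2]
      nlinarith [mul_le_mul_of_nonneg_right hsq (le_of_lt hx)]
    set β : ℝ := A * c / (8 * Dv) with hβdef
    have hβ0 : 0 < β := by rw [hβdef]; positivity
    -- H + β p is antitone on [W, ∞)
    have hhp : AntitoneOn (fun s => H s + β * p s) (Ici W) := by
      apply antitoneOn_of_deriv_nonpos (convex_Ici W)
      · intro x hx
        have hx0 : 0 < x := lt_of_lt_of_le hWpos hx
        exact (((hHDT x hx0).add ((hpD x hx0).const_mul β)).continuousAt).continuousWithinAt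
      · intro x hx
        rw [interior_Ici] at hx
        have hx0 : 0 < x := lt_trans hWpos hx
        exact (((hHDT x hx0).add ((hpD x hx0).const_mul β)).differentiableAt).differentiableWithinAt
      · intro x hx
        rw [interior_Ici] at hx
        have hx0 : 0 < x := lt_trans hWpos hx
        have hdv : deriv (fun s => H s + β * p s) x = T x + β * pd x :=
          ((hHDT x hx0).add ((hpD x hx0).const_mul β)).deriv
        rw [hdv]
        have b1 := hHb2 x (le_of_lt hx)
        have b2 := mul_le_mul_of_nonneg_left (hpbound x (le_of_lt hx)) (le_of_lt hβ0)
        have e2 : A * c / (4 * Dv) * (ρ x * x ^ (2 * η)) = 2 * β * (ρ x * x ^ (2 * η)) := by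
          rw [hβdef]; ring
        linarith [b1, b2, e2]
    -- consequences
    set K : ℝ := H W + β * p W with hKdef
    obtain ⟨R4, hR41, hR4⟩ := GR (2 * η - 1) (max (K / (Dv * β)) 0 + 1)
    set R5 : ℝ := max W R4 with hR5def
    have hR5W : W ≤ R5 := le_max_left _ _
    have hR5pos : (0:ℝ) < R5 := lt_of_lt_of_le hWpos hR5W
    have hKle : ∀ r : ℝ, R5 ≤ r → K ≤ Dv * β * (ρ r * r ^ (2 * η - 1)) := by
      intro r hrr
      have h1 := hR4 r (le_trans (le_max_right _ _) hrr)
      have h2 : K / (Dv * β) ≤ ρ r * r ^ (2 * η - 1) :=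
        le_trans (by linarith [le_max_left (K / (Dv * β)) (0:ℝ)]) h1
      have h3 := (div_le_iff₀ (by positivity : (0:ℝ) < Dv * β)).mp h2
      linarith
    have hHneg : ∀ r : ℝ, R5 ≤ r → H r ≤ -(Dv * β) * (ρ r * r ^ (2 * η - 1)) := by
      intro r hrr
      have hrW : W ≤ r := le_trans hR5W hrr
      have h1 := hhp (self_mem_Ici) (hrW : r ∈ Ici W) hrW
      simp only at h1
      have h2 := hKle r hrr
      have hpr : p r = 2 * Dv * (ρ r * r ^ (2 * η - 1)) := rfl
      have hpW : H W + β * p W = K := rfl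
      rw [hpr, hpW] at h1
      linarith
    have hGle : ∀ r : ℝ, R5 ≤ r → Gd r ≤ -(Dv * β) / r := by
      intro r hrr
      have hr0 : (0:ℝ) < r := lt_of_lt_of_le hR5pos hrr
      have hY : (0:ℝ) < ρ r * r ^ (2 * η) :=
        mul_pos (hρpos r hr0) (Real.rpow_pos_of_pos hr0 _)
      have h1 := hGH r hr0
      have h2 := hHneg r hrr
      have e : r ^ (2 * η) = r ^ (2 * η - 1) * r := by
        rw [← rpow_split r hr0 (2 * η - 1), show 2 * η - 1 + 1 = 2 * η from by ring]
      have h3 : Gd r * (ρ r * r ^ (2 * η)) ≤ -(Dv * β) / r * (ρ r * r ^ (2 * η)) := by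
        rw [h1]
        calc H r ≤ -(Dv * β) * (ρ r * r ^ (2 * η - 1)) := h2
          _ = -(Dv * β) / r * (ρ r * r ^ (2 * η)) := by
              rw [e]; field_simp
      exact le_of_mul_le_mul_right h3 hY
    -- the function G + Dvβ log is antitone on [R5, ∞), giving a contradiction
    have hwanti : AntitoneOn (fun s => G s + Dv * β * Real.log s) (Ici R5) := by
      apply antitoneOn_of_deriv_nonpos (convex_Ici R5)
      · intro x hx
        have hx0 : 0 < x := lt_of_lt_of_le hR5pos hx
        exact (((hGD x hx0).add
          ((Real.hasDerivAt_log (ne_of_gt hx0)).const_mul (Dv * β))).continuousAt).continuousWithinAt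
      · intro x hx
        rw [interior_Ici] at hx
        have hx0 : 0 < x := lt_trans hR5pos hx
        exact (((hGD x hx0).add
          ((Real.hasDerivAt_log (ne_of_gt hx0)).const_mul (Dv * β))).differentiableAt).differentiableWithinAt
      · intro x hx
        rw [interior_Ici] at hx
        have hx0 : 0 < x := lt_trans hR5pos hx
        have hdv : deriv (fun s => G s + Dv * β * Real.log s) x = Gd x + Dv * β * x⁻¹ :=
          ((hGD x hx0).add ((Real.hasDerivAt_log (ne_of_gt hx0)).const_mul (Dv * β))).deriv
        rw [hdv]
        have h1 := hGle x (le_of_lt hx)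
        have e : -(Dv * β) / x = -(Dv * β * x⁻¹) := by field_simp
        rw [e] at h1
        linarith
    set r1 : ℝ := max R5 (Real.exp ((G R5 + Dv * β * Real.log R5) / (Dv * β)) + 1) with hr1def
    have hr1R5 : R5 ≤ r1 := le_max_left _ _
    have hr1pos : (0:ℝ) < r1 := lt_of_lt_of_le hR5pos hr1R5
    have hexp : Real.exp ((G R5 + Dv * β * Real.log R5) / (Dv * β)) < r1 := by
      rw [hr1def]
      exact lt_of_lt_of_le (lt_add_one _) (le_max_right _ _)
    have hlog : (G R5 + Dv * β * Real.log R5) / (Dv * β) < Real.log r1 :=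
      (Real.lt_log_iff_exp_lt hr1pos).mpr hexp
    have h1 := hwanti (self_mem_Ici) (hr1R5 : r1 ∈ Ici R5) hr1R5
    have h2 : G R5 + Dv * β * Real.log R5 < Dv * β * Real.log r1 := by
      have h3 := mul_lt_mul_of_pos_left hlog (by positivity : (0:ℝ) < Dv * β)
      have e : Dv * β * ((G R5 + Dv * β * Real.log R5) / (Dv * β))
          = G R5 + Dv * β * Real.log R5 := by field_simp
      rw [e] at h3
      exact h3
    have h4 := hGpos r1 hr1pos
    simp only at h1
    linarith
  -- H is strictly decreasing on [R0, ∞)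
  have hHanti : StrictAntiOn H (Ici R0) := by
    apply strictAntiOn_of_deriv_neg (convex_Ici R0)
    · intro x hx
      exact ((hHDT x (lt_of_lt_of_le hR0pos hx)).continuousAt).continuousWithinAt
    · intro x hx
      rw [interior_Ici] at hx
      have hx0 : 0 < x := lt_trans hR0pos hx
      rw [(hHDT x hx0).deriv]
      have h1 := hHbound x (le_of_lt hx)
      have h2 : (0:ℝ) < A / (4 * Dv) * (ρ x * (x ^ η * φ x)) := by
        have := hρpos x hx0
        have := hφpos x hx0
        have := Real.rpow_pos_of_pos hx0 η
        positivity
      linarith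
  -- H is eventually negative
  have hex : ∃ r : ℝ, R0 ≤ r ∧ H r < 0 := by
    by_contra hcon
    push_neg at hcon
    have hmono : MonotoneOn G (Ici R0) := by
      apply monotoneOn_of_deriv_nonneg (convex_Ici R0)
      · intro x hx
        exact ((hGD x (lt_of_lt_of_le hR0pos hx)).continuousAt).continuousWithinAt
      · intro x hx
        rw [interior_Ici] at hx
        exact ((hGD x (lt_trans hR0pos hx)).differentiableAt).differentiableWithinAt
      · intro x hx
        rw [interior_Ici] at hx
        have hx0 : 0 < x := lt_trans hR0pos hx
        rw [(hGD x hx0).deriv]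
        have h1 := hGH x hx0
        have h2 := hcon x (le_of_lt hx)
        have hY : (0:ℝ) < ρ x * x ^ (2 * η) :=
          mul_pos (hρpos x hx0) (Real.rpow_pos_of_pos hx0 _)
        nlinarith [h1, h2, hY]
    exact KEY (G R0) R0 (hGpos R0 hR0pos) le_rfl
      (fun r hrr => hmono self_mem_Ici (hrr : r ∈ Ici R0) hrr)
  obtain ⟨R1, hR1ge, hR1neg⟩ := hex
  have hR1pos : (0:ℝ) < R1 := lt_of_lt_of_le hR0pos hR1ge
  have hHneg1 : ∀ x : ℝ, R1 ≤ x → H x < 0 := by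
    intro x hx
    rcases eq_or_lt_of_le hx with rfl | hlt
    · exact hR1neg
    · exact lt_trans (hHanti (hR1ge : R1 ∈ Ici R0)
        ((le_trans hR1ge (le_of_lt hlt)) : x ∈ Ici R0) hlt) hR1neg
  have hGdneg : ∀ x : ℝ, R1 ≤ x → Gd x < 0 := by
    intro x hx
    have hx0 : 0 < x := lt_of_lt_of_le hR1pos hx
    have h1 := hGH x hx0
    have h2 := hHneg1 x hx
    have hY : (0:ℝ) < ρ x * x ^ (2 * η) :=
      mul_pos (hρpos x hx0) (Real.rpow_pos_of_pos hx0 _)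
    nlinarith [h1, h2, hY]
  have hSA : StrictAntiOn G (Ici R1) := by
    apply strictAntiOn_of_deriv_neg (convex_Ici R1)
    · intro x hx
      exact ((hGD x (lt_of_lt_of_le hR1pos hx)).continuousAt).continuousWithinAt
    · intro x hx
      rw [interior_Ici] at hx
      have hx0 : 0 < x := lt_trans hR1pos hx
      rw [(hGD x hx0).deriv]
      exact hGdneg x (le_of_lt hx)
  refine ⟨⟨R1, hR1pos, hSA⟩, ?_⟩
  rw [tendsto_order]
  constructor
  · intro a ha
    filter_upwards [eventually_ge_atTop (1:ℝ)] with r hr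
    have := hGpos r (lt_of_lt_of_le one_pos hr)
    linarith
  · intro a ha
    have hex2 : ∃ r : ℝ, R1 ≤ r ∧ G r < a := by
      by_contra hcon
      push_neg at hcon
      exact KEY a R1 ha hR1ge (fun r hrr => hcon r hrr)
    obtain ⟨r2, hr2ge, hr2lt⟩ := hex2
    rw [eventually_atTop]
    refine ⟨r2, fun s hs => ?_⟩
    rcases eq_or_lt_of_le hs with rfl | hlt
    · exact hr2lt
    · exact lt_trans (hSA (hr2ge : r2 ∈ Ici R1)
        ((le_trans hr2ge (le_of_lt hlt)) : s ∈ Ici R1) hlt) hr2lt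
end

section
/- Let N ≥ 1 be an integer, D_u, D_v, λ > 0, q ≥ 1 and κ ≥ 0, and set ρ(r) = r^{N−1} e^{r²/(4D_v)}. Let φ : [0,∞) → ℝ be a positive C² solution of D_v (ρ φ')' = κ ρ φ + λ ρ e^{−r²/(4D_u)} φ^q on (0,∞) with φ(0) = 1, φ'(0) = 0, and assume there exist C > 0 and m > 0 with φ(r) ≤ C (1+r)^m for all r ≥ 0. Then there exist C* > 0 and R > 0 such that φ(r) ≥ C* r^{2κ} for all r ≥ R. -/
open Real Set Filter Topology

set_option maxHeartbeats 2000000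

/-- Let `φ` be a positive C² global solution of the profile equation with
`κ ≥ 0` and algebraic growth `φ(r) ≤ C(1+r)^m`. Then there are `C* > 0` and `R > 0` with
`φ(r) ≥ C* r^{2κ}` for all `r ≥ R`. -/
theorem stmt14
    (N : ℕ) (hN : 1 ≤ N) (Du Dv lam q κ : ℝ)
    (hDu : 0 < Du) (hDv : 0 < Dv) (hlam : 0 < lam) (hq : 1 ≤ q) (hκ : 0 ≤ κ)
    (ρ : ℝ → ℝ) (hρ : ∀ r : ℝ, ρ r = r ^ (N - 1) * Real.exp (r ^ 2 / (4 * Dv)))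
    (φ dφ : ℝ → ℝ)
    (hpos : ∀ r ∈ Ici (0:ℝ), 0 < φ r)
    (hφ' : ∀ r ∈ Ici (0:ℝ), HasDerivWithinAt φ (dφ r) (Ici 0) r)
    (hODE : ∀ r ∈ Ioi (0:ℝ), HasDerivAt (fun s => Dv * (ρ s * dφ s))
      (κ * ρ r * φ r + lam * ρ r * Real.exp (-(r ^ 2) / (4 * Du)) * φ r ^ q) r)
    (hφ0 : φ 0 = 1) (hdφ0 : dφ 0 = 0)
    (C m : ℝ) (hC : 0 < C) (hm : 0 < m)
    (hgrowth : ∀ r : ℝ, 0 ≤ r → φ r ≤ C * (1 + r) ^ m) :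
    ∃ Cstar > 0, ∃ R > 0, ∀ r : ℝ, R ≤ r → Cstar * r ^ (2 * κ) ≤ φ r := by
  have hn1 : (1:ℝ) ≤ (N:ℝ) := by exact_mod_cast hN
  have hφcont : ContinuousOn φ (Ici 0) := fun r hr => (hφ' r hr).continuousWithinAt
  have hρpos : ∀ r : ℝ, 0 < r → 0 < ρ r := by
    intro r hr; rw [hρ r]; positivity
  have hφat : ∀ r : ℝ, 0 < r → HasDerivAt φ (dφ r) r := fun r hr =>
    (hφ' r hr.le).hasDerivAt (Ici_mem_nhds hr)
  -- derivative of ρ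
  have hρderiv : ∀ r : ℝ, 0 < r →
      HasDerivAt ρ (ρ r * (((N:ℝ) - 1)/r + r/(2*Dv))) r := by
    intro r hr
    have hfun : ρ = fun s : ℝ => s ^ (N - 1) * Real.exp (s ^ 2 / (4 * Dv)) := funext hρ
    rw [hρ r, hfun]
    have h1 : HasDerivAt (fun s : ℝ => s ^ (N - 1)) ((N - 1 : ℕ) * r ^ (N - 1 - 1)) r :=
      hasDerivAt_pow _ r
    have h2 : HasDerivAt (fun s : ℝ => Real.exp (s ^ 2 / (4 * Dv)))
        (Real.exp (r ^ 2 / (4 * Dv)) * (2 * r ^ 1 / (4 * Dv))) r :=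
      HasDerivAt.exp ((hasDerivAt_pow 2 r).div_const (4*Dv))
    have h3 := h1.mul h2
    refine h3.congr_deriv ?_
    obtain ⟨k, rfl⟩ : ∃ k, N = k + 1 := ⟨N - 1, (Nat.succ_pred_eq_of_pos hN).symm⟩
    simp only [Nat.add_sub_cancel]
    have hk : (k:ℝ) * r ^ (k-1) = (k:ℝ) * r ^ k / r := by
      cases k with
      | zero => simp
      | succ j =>
        rw [eq_div_iff hr.ne']
        simp only [Nat.add_sub_cancel]
        rw [mul_assoc, ← pow_succ]
    rw [hk]
    push_cast
    field_simp
    ring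
  -- positivity of the right-hand side of the ODE
  have hRHSpos : ∀ r : ℝ, 0 < r →
      0 < κ * ρ r * φ r + lam * ρ r * Real.exp (-(r ^ 2) / (4 * Du)) * φ r ^ q := by
    intro r hr
    have h1 : 0 ≤ κ * ρ r * φ r := by
      have := (hρpos r hr).le
      have := (hpos r hr.le).le
      positivity
    have h2 : 0 < lam * ρ r * Real.exp (-(r ^ 2) / (4 * Du)) * φ r ^ q := by
      have := hρpos r hr
      have := hpos r hr.le
      positivity
    linarith
  -- F := Dv * ρ * dφ is strictly increasing on (0,∞)
  have hFmono : StrictMonoOn (fun s => Dv * (ρ s * dφ s)) (Ioi (0:ℝ)) := by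
    apply strictMonoOn_of_deriv_pos (convex_Ioi 0)
    · intro x hx
      exact (hODE x hx).continuousAt.continuousWithinAt
    · intro x hx
      rw [interior_Ioi] at hx
      rw [(hODE x hx).deriv]
      exact hRHSpos x hx
  -- Claim 1 : F > 0 on (0,∞)
  have hFpos : ∀ r : ℝ, 0 < r → 0 < Dv * (ρ r * dφ r) := by
    intro r hr
    by_contra hcon
    push_neg at hcon
    set r₁ : ℝ := r / 2 with hr₁def
    have hr₁ : 0 < r₁ := by positivity
    have hr₁r : r₁ < r := by simp [hr₁def]; linarith
    have hF1 : Dv * (ρ r₁ * dφ r₁) < 0 :=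
      lt_of_lt_of_le (hFmono (mem_Ioi.2 hr₁) (mem_Ioi.2 hr) hr₁r) hcon
    set c : ℝ := -(Dv * (ρ r₁ * dφ r₁)) with hcdef
    have hcpos : 0 < c := by simp [hcdef]; linarith
    set c₁ : ℝ := c / (Dv * ρ r₁) with hc₁def
    have hc₁pos : 0 < c₁ := by
      have := hρpos r₁ hr₁
      positivity
    -- dφ s ≤ -c₁ for s ∈ (0, r₁]
    have hdφle : ∀ s : ℝ, 0 < s → s ≤ r₁ → dφ s ≤ -c₁ := by
      intro s hs hsr
      have hρs := hρpos s hs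
      have hρr₁ := hρpos r₁ hr₁
      have hρmono : ρ s ≤ ρ r₁ := by
        rw [hρ s, hρ r₁]
        have h1 : s ^ (N-1) ≤ r₁ ^ (N-1) := pow_le_pow_left₀ hs.le hsr _
        have h2 : Real.exp (s^2/(4*Dv)) ≤ Real.exp (r₁^2/(4*Dv)) := by
          apply Real.exp_le_exp.2
          apply div_le_div_of_nonneg_right ?_ (by positivity)
          nlinarith
          -- goal order may differ; fix later
        nlinarith [Real.exp_pos (s^2/(4*Dv)), pow_nonneg hs.le (N-1)]
      have hFs : Dv * (ρ s * dφ s) ≤ -c := by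
        rcases eq_or_lt_of_le hsr with h | h
        · rw [h]; simp [hcdef]
        · exact le_of_lt (by simpa [hcdef] using hFmono (mem_Ioi.2 hs) (mem_Ioi.2 hr₁) h)
      have hdφneg : dφ s < 0 := by nlinarith [mul_pos hDv hρs]
      have h2 : dφ s * (Dv * ρ r₁) ≤ -c := by
        nlinarith [mul_nonneg (mul_nonneg hDv.le (sub_nonneg.2 hρmono)) (neg_nonneg.2 hdφneg.le)]
      have h3 : c₁ * (Dv * ρ r₁) = c := by
        rw [hc₁def]; field_simp
      nlinarith [mul_pos hDv hρr₁]
    -- φ s + c₁ s is antitone on [0, r₁]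
    have hanti : AntitoneOn (fun s => φ s + c₁ * s) (Icc 0 r₁) := by
      apply antitoneOn_of_deriv_nonpos (convex_Icc 0 r₁)
      · apply ContinuousOn.add
        · exact hφcont.mono (Icc_subset_Ici_self)
        · exact (continuous_const.mul continuous_id).continuousOn
      · intro x hx
        rw [interior_Icc] at hx
        exact (((hφat x hx.1).add ((hasDerivAt_id x).const_mul c₁)).differentiableAt).differentiableWithinAt
      · intro x hx
        rw [interior_Icc] at hx
        have hd : HasDerivAt (fun s => φ s + c₁ * s) (dφ x + c₁ * 1) x := by
          exact (hφat x hx.1).add ((hasDerivAt_id x).const_mul c₁)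
        rw [hd.deriv]
        have := hdφle x hx.1 hx.2.le
        simp only [mul_one]
        linarith
    -- hence slope ≤ -c₁ near 0, contradicting dφ 0 = 0
    have hslope : Tendsto (slope φ 0) (𝓝[Ici 0 \ {0}] 0) (𝓝 0) := by
      have := (hasDerivWithinAt_iff_tendsto_slope).1 (hφ' 0 (mem_Ici.2 (le_refl 0)))
      rwa [hdφ0] at this
    have hset : Ici (0:ℝ) \ {0} = Ioi 0 := by
      ext x; simp [lt_iff_le_and_ne, eq_comm, and_comm]
    rw [hset] at hslope
    have hev : ∀ᶠ s in 𝓝[Ioi (0:ℝ)] 0, slope φ 0 s ≤ -c₁ := by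
      filter_upwards [Ioc_mem_nhdsGT_of_mem (Set.mem_Ico.2 ⟨le_refl 0, hr₁⟩)] with s hs
      have h1 := hanti (Set.mem_Icc.2 ⟨le_refl 0, hr₁.le⟩) (Set.mem_Icc.2 ⟨hs.1.le, hs.2⟩) hs.1.le
      simp only [mul_zero, add_zero] at h1
      rw [hφ0] at h1
      have : slope φ 0 s = (φ s - 1) / s := by
        rw [slope_def_field, hφ0]; ring_nf
      rw [this, div_le_iff₀ hs.1]
      nlinarith
    have := le_of_tendsto hslope hev
    linarith
  have hdφpos : ∀ r : ℝ, 0 < r → 0 < dφ r := by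
    intro r hr
    have h := hFpos r hr
    have hρr := hρpos r hr
    have heq : dφ r = Dv * (ρ r * dφ r) / (Dv * ρ r) := by field_simp
    rw [heq]
    exact div_pos h (mul_pos hDv hρr)
  -- barrier construction
  set b : ℝ := 2*κ*Dv*(2*κ+(N:ℝ)) + 1 with hbdef
  clear_value b
  have hbge : 0 ≤ 2*κ*Dv*(2*κ+(N:ℝ)) := by
    have : (0:ℝ) ≤ 2*κ+(N:ℝ) := by linarith
    positivity
  have hb1 : 1 ≤ b := by rw [hbdef]; linarith
  have hbpos : 0 < b := by linarith
  set R₁ : ℝ := 1 + 12*Dv*b + 8*Dv*b^2 with hR₁def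
  clear_value R₁
  have hR₁1 : 1 ≤ R₁ := by
    rw [hR₁def]; nlinarith
  have hR₁pos : 0 < R₁ := by linarith
  set v : ℝ → ℝ := fun s => s ^ (2*κ) * Real.exp (b / s^2) with hvdef
  set dv : ℝ → ℝ := fun s => v s * (2*κ/s - 2*b/s^3) with hdvdef
  clear_value dv
  clear_value v
  have hvpos : ∀ s : ℝ, 0 < s → 0 < v s := by
    intro s hs; rw [hvdef]; positivity
  have hvderiv : ∀ s : ℝ, 0 < s → HasDerivAt v (dv s) s := by
    intro s hs
    have h1 : HasDerivAt (fun x : ℝ => x ^ (2*κ)) (2*κ * s ^ (2*κ - 1)) s :=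
      Real.hasDerivAt_rpow_const (Or.inl hs.ne')
    have h2 : HasDerivAt (fun x : ℝ => Real.exp (b / x^2))
        (Real.exp (b / s^2) * (b * (-(2*s^1) / (s^2)^2))) s := by
      have h0 : HasDerivAt (fun x : ℝ => (x^2)⁻¹) (-(2*s^1) / (s^2)^2) s :=
        (hasDerivAt_pow 2 s).inv (pow_ne_zero 2 hs.ne')
      have h0' := h0.const_mul b
      have := h0'.exp
      simp only [div_eq_mul_inv]
      exact this
    have h3 := h1.mul h2
    rw [hvdef, hdvdef]
    simp only [hvdef]
    simp only [div_eq_mul_inv]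
    refine h3.congr_deriv ?_
    simp only [← div_eq_mul_inv]
    have hs1 : s ^ (2*κ - 1) = s ^ (2*κ) / s := Real.rpow_sub_one hs.ne' _
    rw [hs1]
    field_simp
    ring
  set X : ℝ → ℝ := fun s => (((N:ℝ)-1)/s + s/(2*Dv) + 2*κ/s - 2*b/s^3) * (2*κ/s - 2*b/s^3)
      + (-(2*κ)/s^2 + 6*b/s^4) with hXdef
  clear_value X
  have hGderiv : ∀ s : ℝ, 0 < s → HasDerivAt (fun x => ρ x * dv x) (ρ s * v s * X s) s := by
    intro s hs
    have hℓ : HasDerivAt (fun x : ℝ => 2*κ/x - 2*b/x^3) (-(2*κ)/s^2 + 6*b/s^4) s := by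
      have h1 : HasDerivAt (fun x : ℝ => 2*κ * x⁻¹) (2*κ * (-(s^2)⁻¹)) s :=
        (hasDerivAt_inv hs.ne').const_mul (2*κ)
      have h2 : HasDerivAt (fun x : ℝ => 2*b * (x^3)⁻¹) (2*b * (-(3*s^2) / (s^3)^2)) s := by
        have h0 : HasDerivAt (fun x : ℝ => (x^3)⁻¹) (-(3*s^2) / (s^3)^2) s := by
          have := (hasDerivAt_pow 3 s).inv (pow_ne_zero 3 hs.ne')
          refine this.congr_deriv ?_; norm_num
        exact h0.const_mul (2*b)
      have h3 := h1.sub h2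
      have hfe : (fun x : ℝ => 2*κ/x - 2*b/x^3) = fun x => 2*κ * x⁻¹ - 2*b * (x^3)⁻¹ := by
        funext x; rw [div_eq_mul_inv, div_eq_mul_inv]
      rw [hfe]
      refine h3.congr_deriv ?_
      field_simp
      ring
    have hρv := (hρderiv s hs).mul (hvderiv s hs)
    have hG0 := hρv.mul hℓ
    have hfe : (fun x => ρ x * dv x) = fun x => (ρ x * v x) * (2*κ/x - 2*b/x^3) := by
      funext x; simp only [hdvdef]; ring
    rw [hfe]
    refine hG0.congr_deriv ?_
    simp only [hdvdef, hXdef, Pi.mul_apply]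
    ring
  have hXle : ∀ s : ℝ, R₁ ≤ s → Dv * X s ≤ κ := by
    intro s hs
    have hs1 : 1 ≤ s := le_trans hR₁1 hs
    have hs0 : 0 < s := by linarith
    have hA : 12*Dv*b ≤ s := by rw [hR₁def] at hs; nlinarith
    have hB : 8*Dv*b^2 ≤ s := by rw [hR₁def] at hs; nlinarith
    have e1 : Dv * X s * s^6 = κ*s^6 + (2*κ*Dv*((N:ℝ)-2+2*κ) - b)*s^4
        + (2*Dv*b*(4-(N:ℝ)-4*κ))*s^2 + 4*Dv*b^2 := by
      simp only [hXdef]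
      field_simp
      ring
    have hcoef : 2*κ*Dv*((N:ℝ)-2+2*κ) - b = -(4*κ*Dv) - 1 := by rw [hbdef]; ring
    have hDb : 0 ≤ Dv*b := by positivity
    have h2 : (2*Dv*b*(4-(N:ℝ)-4*κ))*s^2 ≤ 6*Dv*b*s^2 := by
      nlinarith [mul_nonneg hDb (sq_nonneg s), mul_nonneg (mul_nonneg hDb hκ) (sq_nonneg s),
        mul_nonneg (mul_nonneg hDb (by linarith : (0:ℝ) ≤ (N:ℝ) - 1)) (sq_nonneg s)]
    have h3 : 6*Dv*b*s^2 ≤ s^4/2 := by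
      nlinarith [mul_le_mul_of_nonneg_right hA (sq_nonneg s),
        mul_le_mul_of_nonneg_right hs1 (pow_pos hs0 3).le]
    have h13 : (1:ℝ) ≤ s^3 := by
      nlinarith [mul_nonneg (sub_nonneg.2 hs1) (sq_nonneg s), mul_nonneg (sub_nonneg.2 hs1) hs0.le]
    have hss4 : s ≤ s^4 := by nlinarith [mul_le_mul_of_nonneg_left h13 hs0.le]
    have h4 : 4*Dv*b^2 ≤ s^4/2 := by nlinarith
    have h5 : Dv * X s * s^6 ≤ κ*s^6 := by
      rw [e1, hcoef]
      nlinarith [mul_nonneg (mul_nonneg hκ hDv.le) (pow_pos hs0 4).le]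
    have h6 : (0:ℝ) < s^6 := by positivity
    exact le_of_mul_le_mul_right h5 h6
  -- choice of epsilon
  have hvR₁pos := hvpos R₁ hR₁pos
  have hdφR₁pos := hdφpos R₁ hR₁pos
  have hφR₁pos := hpos R₁ (mem_Ici.2 hR₁pos.le)
  set ε : ℝ := min (φ R₁ / (2 * v R₁)) (dφ R₁ / (2 * (|dv R₁| + 1))) with hεdef
  have hεpos : 0 < ε :=
    lt_min (div_pos hφR₁pos (by linarith)) (div_pos hdφR₁pos (by positivity))
  have hεv : ε * v R₁ ≤ φ R₁ / 2 := by
    have h1 : ε ≤ φ R₁ / (2 * v R₁) := min_le_left _ _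
    calc ε * v R₁ ≤ (φ R₁ / (2 * v R₁)) * v R₁ := mul_le_mul_of_nonneg_right h1 hvR₁pos.le
      _ = φ R₁ / 2 := by field_simp
  have hεdv : ε * dv R₁ ≤ dφ R₁ / 2 := by
    have h1 : ε ≤ dφ R₁ / (2 * (|dv R₁| + 1)) := min_le_right _ _
    have h2 : dv R₁ ≤ |dv R₁| := le_abs_self _
    have h3 : (0:ℝ) < |dv R₁| + 1 := by positivity
    calc ε * dv R₁ ≤ ε * |dv R₁| := mul_le_mul_of_nonneg_left h2 hεpos.le
      _ ≤ (dφ R₁ / (2 * (|dv R₁| + 1))) * (|dv R₁| + 1) := by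
          apply mul_le_mul h1 (by linarith) (abs_nonneg _) (by positivity)
      _ = dφ R₁ / 2 := by field_simp
  clear_value ε
  -- the barrier argument
  have hmain : ∀ r : ℝ, R₁ ≤ r → 0 < φ r - ε * v r := by
    by_contra hcon
    push_neg at hcon
    obtain ⟨rbad, hrbad1, hrbad2⟩ := hcon
    set S : Set ℝ := {x | R₁ ≤ x ∧ φ x - ε * v x ≤ 0} with hSdef
    clear_value S
    have hmemS : ∀ x : ℝ, x ∈ S ↔ (R₁ ≤ x ∧ φ x - ε * v x ≤ 0) := by
      intro x; rw [hSdef]; simp only [mem_setOf_eq]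
    have hSne : S.Nonempty := ⟨rbad, (hmemS rbad).2 ⟨hrbad1, by linarith⟩⟩
    have hSbdd : BddBelow S := ⟨R₁, fun x hx => ((hmemS x).1 hx).1⟩
    have hvcont : ContinuousOn (fun x => φ x - ε * v x) (Ici R₁) := by
      apply ContinuousOn.sub
      · exact hφcont.mono (Ici_subset_Ici.2 hR₁pos.le)
      · intro x hx
        exact (continuousAt_const.mul
          ((hvderiv x (lt_of_lt_of_le hR₁pos hx)).continuousAt)).continuousWithinAt
    have hScl : IsClosed S := by
      have hSeq : S = Ici R₁ ∩ (fun x => φ x - ε * v x) ⁻¹' (Iic 0) := by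
        ext x
        rw [hmemS x]
        simp only [mem_inter_iff, mem_Ici, mem_preimage, mem_Iic]
      rw [hSeq]
      exact hvcont.preimage_isClosed_of_isClosed isClosed_Ici isClosed_Iic
    set r₀ : ℝ := sInf S with hr₀def
    clear_value r₀
    have hr₀S : r₀ ∈ S := by rw [hr₀def]; exact hScl.csInf_mem hSne hSbdd
    rw [hmemS r₀] at hr₀S
    have hr₀R₁ : R₁ ≤ r₀ := hr₀S.1
    have hhR₁ : 0 < φ R₁ - ε * v R₁ := by linarith
    have hr₀gt : R₁ < r₀ := by
      rcases eq_or_lt_of_le hr₀R₁ with h | h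
      · exfalso; rw [← h] at hr₀S; linarith [hr₀S.2]
      · exact h
    have hbet : ∀ x : ℝ, R₁ ≤ x → x < r₀ → 0 < φ x - ε * v x := by
      intro x hx1 hx2
      by_contra hcx
      push_neg at hcx
      have hxS : x ∈ S := (hmemS x).2 ⟨hx1, by linarith⟩
      have hle := csInf_le hSbdd hxS
      rw [← hr₀def] at hle
      linarith
    set g : ℝ → ℝ := fun x => ρ x * dφ x - ε * (ρ x * dv x) with hgdef
    clear_value g
    have hgderiv : ∀ x : ℝ, 0 < x → HasDerivAt g
        (Dv⁻¹ * (κ * ρ x * φ x + lam * ρ x * Real.exp (-(x ^ 2) / (4 * Du)) * φ x ^ q)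
          - ε * (ρ x * v x * X x)) x := by
      intro x hx
      have h0 := (hODE x (mem_Ioi.2 hx)).const_mul Dv⁻¹
      have hfe : (fun y => Dv⁻¹ * (Dv * (ρ y * dφ y))) = fun y => ρ y * dφ y := by
        funext y; field_simp
      rw [hfe] at h0
      rw [hgdef]
      exact h0.sub ((hGderiv x hx).const_mul ε)
    have hgR₁pos : 0 < g R₁ := by
      have hρR₁ := hρpos R₁ hR₁pos
      have h2 : 0 < dφ R₁ - ε * dv R₁ := by linarith
      have : (0:ℝ) < ρ R₁ * (dφ R₁ - ε * dv R₁) := by positivity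
      simp only [hgdef]
      nlinarith
    have hgmono : StrictMonoOn g (Icc R₁ r₀) := by
      apply strictMonoOn_of_deriv_pos (convex_Icc _ _)
      · intro x hx
        exact ((hgderiv x (lt_of_lt_of_le hR₁pos hx.1)).continuousAt).continuousWithinAt
      · intro x hx
        rw [interior_Icc] at hx
        have hx0 : 0 < x := lt_trans hR₁pos hx.1
        rw [(hgderiv x hx0).deriv]
        have hXx := hXle x hx.1.le
        have hρx := hρpos x hx0
        have hvx := hvpos x hx0
        have hφx := hpos x (mem_Ici.2 hx0.le)
        have hhx := hbet x hx.1.le hx.2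
        have hlamterm : 0 < lam * ρ x * Real.exp (-(x ^ 2) / (4 * Du)) * φ x ^ q := by positivity
        have h7 : ε * (ρ x * v x) * (Dv * X x) ≤ ε * (ρ x * v x) * κ :=
          mul_le_mul_of_nonneg_left hXx (by positivity)
        have h8 : κ * (ε * (ρ x * v x)) ≤ κ * (ρ x * φ x) := by
          apply mul_le_mul_of_nonneg_left ?_ hκ
          nlinarith
        have key : ε * (ρ x * v x) * (Dv * X x)
            < κ * ρ x * φ x + lam * ρ x * Real.exp (-(x ^ 2) / (4 * Du)) * φ x ^ q := by
          nlinarith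
        have e2 : Dv * (Dv⁻¹ * (κ * ρ x * φ x + lam * ρ x * Real.exp (-(x ^ 2) / (4 * Du)) * φ x ^ q))
            = κ * ρ x * φ x + lam * ρ x * Real.exp (-(x ^ 2) / (4 * Du)) * φ x ^ q := by
          field_simp
        have e3 : Dv * (ε * (ρ x * v x * X x)) = ε * (ρ x * v x) * (Dv * X x) := by ring
        have goal' : Dv * (ε * (ρ x * v x * X x))
            < Dv * (Dv⁻¹ * (κ * ρ x * φ x + lam * ρ x * Real.exp (-(x ^ 2) / (4 * Du)) * φ x ^ q)) := by
          rw [e2, e3]; exact key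
        have := lt_of_mul_lt_mul_left goal' hDv.le
        linarith
    have hhmono : StrictMonoOn (fun y => φ y - ε * v y) (Icc R₁ r₀) := by
      apply strictMonoOn_of_deriv_pos (convex_Icc _ _)
      · exact hvcont.mono (Icc_subset_Ici_self)
      · intro x hx
        rw [interior_Icc] at hx
        have hx0 : 0 < x := lt_trans hR₁pos hx.1
        have hd : HasDerivAt (fun y => φ y - ε * v y) (dφ x - ε * dv x) x :=
          (hφat x hx0).sub ((hvderiv x hx0).const_mul ε)
        rw [hd.deriv]
        have hρx := hρpos x hx0
        have hgx : 0 < g x := by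
          have := hgmono (Set.mem_Icc.2 ⟨le_refl R₁, hr₀R₁⟩) (Set.mem_Icc.2 ⟨hx.1.le, hx.2.le⟩) hx.1
          linarith
        have hgeq : dφ x - ε * dv x = g x / ρ x := by
          simp only [hgdef]; field_simp
        rw [hgeq]
        exact div_pos hgx hρx
    have hfin := hhmono (Set.mem_Icc.2 ⟨le_refl R₁, hr₀R₁⟩)
      (Set.mem_Icc.2 ⟨hr₀R₁, le_refl r₀⟩) hr₀gt
    simp only at hfin
    linarith [hr₀S.2]
  -- conclusion
  refine ⟨ε, hεpos, R₁, hR₁pos, ?_⟩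
  intro r hr
  have hr0 : 0 < r := lt_of_lt_of_le hR₁pos hr
  have h1 := hmain r hr
  have h2 : r ^ (2*κ) ≤ v r := by
    simp only [hvdef]
    have hexp : 1 ≤ Real.exp (b / r^2) := Real.one_le_exp (by positivity)
    nlinarith [Real.rpow_pos_of_pos hr0 (2*κ)]
  nlinarith [mul_le_mul_of_nonneg_left h2 hεpos.le]
end

section
/- Let N ≥ 1 be an integer, D_u, D_v, λ > 0, q ≥ 1 and −N/2 ≤ κ < 0, and set ρ(r) = r^{N−1} e^{r²/(4D_v)}. Let φ : [0,∞) → ℝ be a positive C² solution of D_v (ρ φ')' = κ ρ φ + λ ρ e^{−r²/(4D_u)} φ^q on (0,∞) with φ(0) = 1, φ'(0) = 0. Then for every η < 2κ there exist constants C > 0 and R > 0 such that φ(r) > C r^η for all r ≥ R. -/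
open Real Set Filter Topology

set_option maxHeartbeats 1000000

lemma rpow_mul_exp_big (Dv : ℝ) (hDv : 0 < Dv) (μ : ℝ) :
    ∃ Rg : ℝ, 1 ≤ Rg ∧ ∀ s : ℝ, Rg ≤ s → s ≤ s ^ μ * Real.exp (s^2/(8*Dv)) := by
  classical
  set k : ℕ := ⌈-μ⌉₊ + 1 with hk
  have hkμ : -(k:ℝ) ≤ μ := by
    have := Nat.le_ceil (-μ)
    push_cast [hk]
    push_cast at this
    linarith
  set c₈ : ℝ := (Nat.factorial (k+1) : ℝ) * (8*Dv)^(k+1) with hc₈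
  have hc₈pos : 0 < c₈ := by
    have : (0:ℝ) < (Nat.factorial (k+1) : ℝ) := by positivity
    positivity
  refine ⟨max 1 c₈, le_max_left _ _, ?_⟩
  intro s hs
  have hs1 : (1:ℝ) ≤ s := le_trans (le_max_left _ _) hs
  have hsc₈ : c₈ ≤ s := le_trans (le_max_right _ _) hs
  have hs0 : (0:ℝ) < s := lt_of_lt_of_le one_pos hs1
  have hx : (0:ℝ) ≤ s^2/(8*Dv) := by positivity
  have h9 := Real.pow_div_factorial_le_exp _ hx (k+1)
  have h9' : s^(2*k+2)/c₈ ≤ Real.exp (s^2/(8*Dv)) := by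
    have heq : s^(2*k+2)/c₈ = (s^2/(8*Dv))^(k+1) / (Nat.factorial (k+1) : ℝ) := by
      rw [div_pow, ← pow_mul, hc₈]
      field_simp
      ring
    rw [heq]; exact h9
  have h1 : s^(-(k:ℝ)) ≤ s ^ μ :=
    Real.rpow_le_rpow_of_exponent_le hs1 hkμ
  have hmul : s^(-(k:ℝ)) * (s^(2*k+2)/c₈) ≤ s ^ μ * Real.exp (s^2/(8*Dv)) := by
    apply mul_le_mul h1 h9' (by positivity)
    exact le_of_lt (Real.rpow_pos_of_pos hs0 μ)
  have hL : s^(-(k:ℝ)) * (s^(2*k+2)/c₈) = s^(k+2)/c₈ := by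
    rw [Real.rpow_neg hs0.le, Real.rpow_natCast]
    have : s^(2*k+2) = s^k * s^(k+2) := by
      rw [← pow_add]; congr 1; omega
    rw [this]
    field_simp
  have hfinal : s ≤ s^(k+2)/c₈ := by
    rw [le_div_iff₀ hc₈pos]
    have h2 : s * c₈ ≤ s * s := by
      exact mul_le_mul_of_nonneg_left hsc₈ hs0.le
    have h3 : s * s ≤ s^(k+2) := by
      calc s * s = s^2 := by ring
        _ ≤ s^(k+2) := pow_le_pow_right₀ hs1 (by omega)
    linarith
  calc s ≤ s^(k+2)/c₈ := hfinal
    _ = s^(-(k:ℝ)) * (s^(2*k+2)/c₈) := hL.symm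
    _ ≤ s ^ μ * Real.exp (s^2/(8*Dv)) := hmul

/-- Let `φ` be a positive C² global solution of the profile equation with
`−N/2 ≤ κ < 0`. Then for every `η < 2κ` there are `C > 0` and `R > 0` such that
`φ(r) > C r^η` for all `r ≥ R`. -/
theorem stmt15
    (N : ℕ) (hN : 1 ≤ N) (Du Dv lam q κ : ℝ)
    (hDu : 0 < Du) (hDv : 0 < Dv) (hlam : 0 < lam) (hq : 1 ≤ q)
    (hκ₁ : -(N : ℝ) / 2 ≤ κ) (hκ₂ : κ < 0)
    (ρ : ℝ → ℝ) (hρ : ∀ r : ℝ, ρ r = r ^ (N - 1) * Real.exp (r ^ 2 / (4 * Dv)))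
    (φ dφ : ℝ → ℝ)
    (hpos : ∀ r ∈ Ici (0:ℝ), 0 < φ r)
    (hφ' : ∀ r ∈ Ici (0:ℝ), HasDerivWithinAt φ (dφ r) (Ici 0) r)
    (hODE : ∀ r ∈ Ioi (0:ℝ), HasDerivAt (fun s => Dv * (ρ s * dφ s))
      (κ * ρ r * φ r + lam * ρ r * Real.exp (-(r ^ 2) / (4 * Du)) * φ r ^ q) r)
    (hφ0 : φ 0 = 1) (hdφ0 : dφ 0 = 0) :
    ∀ η : ℝ, η < 2 * κ → ∃ C > 0, ∃ R > 0, ∀ r : ℝ, R ≤ r → C * r ^ η < φ r := by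
  intro η hη
  -- basic facts
  have hφat : ∀ s ∈ Ioi (0:ℝ), HasDerivAt φ (dφ s) s := fun s hs =>
    (hφ' s (mem_Ici.2 (le_of_lt (mem_Ioi.1 hs)))).hasDerivAt (Ici_mem_nhds hs)
  have hφcont : ContinuousOn φ (Ici 0) := fun s hs => (hφ' s hs).continuousWithinAt
  have hκN : 0 ≤ κ + N/2 := by
    have : (0:ℝ) < N := by exact_mod_cast hN
    linarith
  -- monotone helper
  have mono : ∀ (b : ℝ) (F F' : ℝ → ℝ), 0 < b →
      (∀ s, b ≤ s → HasDerivAt F (F' s) s) → (∀ s, b ≤ s → 0 ≤ F' s) →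
      MonotoneOn F (Ici b) := by
    intro b F F' hb hd h0
    apply monotoneOn_of_deriv_nonneg (convex_Ici b)
      (fun s hs => (hd s hs).continuousAt.continuousWithinAt)
    · intro s hs
      rw [interior_Ici] at hs
      exact (hd s (le_of_lt hs)).differentiableAt.differentiableWithinAt
    · intro s hs
      rw [interior_Ici] at hs
      rw [(hd s (le_of_lt hs)).deriv]
      exact h0 s (le_of_lt hs)
  -- the first Wronskian-type function F₁
  set F₁ : ℝ → ℝ := fun s => Dv * (ρ s * dφ s) * Real.exp (-(s^2)/(4*Dv)) + s ^ N * φ s / 2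
    with hF₁def
  set Q₁ : ℝ → ℝ := fun s =>
      s ^ (N-1) * ((κ + N/2) * φ s + lam * Real.exp (-(s^2)/(4*Du)) * φ s ^ q) with hQ₁def
  have hF₁d : ∀ s ∈ Ioi (0:ℝ), HasDerivAt F₁ (Q₁ s) s := by
    intro s hs
    have h2 : HasDerivAt (fun x : ℝ => -(x^2)/(4*Dv)) (-(2*s)/(4*Dv)) s := by
      simpa using ((hasDerivAt_pow 2 s).neg.div_const (4*Dv))
    have raw := ((hODE s hs).mul h2.exp).add
      (((hasDerivAt_pow N s).mul (hφat s hs)).div_const 2)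
    refine raw.congr_deriv ?_
    symm
    have hXs : s ^ N = s ^ (N-1) * s := by rw [← pow_succ]; congr 1; omega
    rw [hQ₁def, hρ, hXs, show Real.exp (-s^2/(4*Dv)) = (Real.exp (s^2/(4*Dv)))⁻¹ by
      rw [← Real.exp_neg]; ring_nf]
    have hE0 : Real.exp (s^2/(4*Dv)) ≠ 0 := (Real.exp_pos _).ne'
    field_simp
    ring
  have hF₁eq : ∀ s : ℝ, F₁ s = s^(N-1) * (Dv * dφ s + s * φ s / 2) := by
    intro s
    have hXs : s ^ N = s ^ (N-1) * s := by rw [← pow_succ]; congr 1; omega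
    show Dv * (ρ s * dφ s) * Real.exp (-(s^2)/(4*Dv)) + s ^ N * φ s / 2 = _
    rw [hρ, hXs, show Real.exp (-s^2/(4*Dv)) = (Real.exp (s^2/(4*Dv)))⁻¹ by
      rw [← Real.exp_neg]; ring_nf]
    have hE0 : Real.exp (s^2/(4*Dv)) ≠ 0 := (Real.exp_pos _).ne'
    field_simp
  have hQ₁pos : ∀ s : ℝ, 0 < s → 0 < Q₁ s := by
    intro s hs
    have h1 : 0 < φ s := hpos s hs.le
    have h2 : 0 < φ s ^ q := Real.rpow_pos_of_pos h1 q
    have h3 : 0 < lam * Real.exp (-(s^2)/(4*Du)) * φ s ^ q := by positivity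
    have h4 : 0 ≤ (κ + N/2) * φ s := mul_nonneg hκN h1.le
    have : 0 < (κ + N/2) * φ s + lam * Real.exp (-(s^2)/(4*Du)) * φ s ^ q := by linarith
    show 0 < s ^ (N-1) * ((κ + N/2) * φ s + lam * Real.exp (-(s^2)/(4*Du)) * φ s ^ q)
    positivity
  -- Lemma: F₁ is positive on (0,∞)
  have hF₁pos : ∀ r : ℝ, 0 < r → 0 < F₁ r := by
    intro r hr
    by_contra hFc
    push_neg at hFc
    have hsm : StrictMonoOn F₁ (Icc (r/2) r) := by
      apply strictMonoOn_of_deriv_pos (convex_Icc _ _)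
      · intro s hs
        exact (hF₁d s (lt_of_lt_of_le (by linarith) hs.1)).continuousAt.continuousWithinAt
      · intro s hs
        rw [interior_Icc] at hs
        rw [(hF₁d s (by linarith [hs.1] : (0:ℝ) < s)).deriv]
        exact hQ₁pos s (by linarith [hs.1])
    have hδ' : F₁ (r/2) < 0 :=
      lt_of_lt_of_le (hsm ⟨le_refl _, by linarith⟩ ⟨by linarith, le_refl _⟩ (by linarith)) hFc
    have hδ'pos : 0 < -F₁ (r/2) := by linarith
    have hs₁pos : 0 < min (r/2) 1 := lt_min (by linarith) one_pos
    have hs₁le : min (r/2) 1 ≤ r/2 := min_le_left _ _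
    have hs₁le1 : min (r/2) 1 ≤ 1 := min_le_right _ _
    have hmono : ∀ s : ℝ, 0 < s → s ≤ r/2 → F₁ s ≤ F₁ (r/2) := by
      intro s hs hsr
      have hm := monotoneOn_of_deriv_nonneg (convex_Icc s (r/2))
        (fun t ht => (hF₁d t (lt_of_lt_of_le hs ht.1)).continuousAt.continuousWithinAt)
        (fun t ht => by
          rw [interior_Icc] at ht
          exact (hF₁d t (hs.trans ht.1)).differentiableAt.differentiableWithinAt)
        (fun t ht => by
          rw [interior_Icc] at ht
          rw [(hF₁d t (hs.trans ht.1)).deriv]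
          exact (hQ₁pos t (hs.trans ht.1)).le)
      exact hm ⟨le_refl _, hsr⟩ ⟨hsr, le_refl _⟩ hsr
    have hdφ : ∀ s : ℝ, 0 < s → s ≤ min (r/2) 1 → dφ s ≤ -(-F₁ (r/2)/Dv) := by
      intro s hs hss₁
      have h1 : F₁ s ≤ F₁ (r/2) := hmono s hs (le_trans hss₁ hs₁le)
      rw [hF₁eq] at h1
      have hu0 : 0 < s^(N-1) := pow_pos hs _
      have hu1 : s^(N-1) ≤ 1 := pow_le_one₀ hs.le (le_trans hss₁ hs₁le1)
      have hφs : 0 ≤ s * φ s / 2 := by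
        have := hpos s hs.le; positivity
      have hA : Dv * dφ s + s * φ s / 2 < 0 := by
        by_contra hcon
        push_neg at hcon
        nlinarith [mul_nonneg hu0.le hcon]
      have hA2 : Dv * dφ s + s * φ s / 2 ≤ F₁ (r/2) := by
        nlinarith [mul_nonneg (sub_nonneg.2 hu1) (neg_nonneg.2 hA.le)]
      rw [show -(-F₁ (r/2)/Dv) = F₁ (r/2)/Dv by ring, le_div_iff₀ hDv]
      linarith
    have hantit : AntitoneOn (fun s => φ s + (-F₁ (r/2)/Dv) * s) (Icc 0 (min (r/2) 1)) := by
      apply antitoneOn_of_deriv_nonpos (convex_Icc _ _)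
      · apply ContinuousOn.add (hφcont.mono (fun x hx => hx.1))
        exact (continuous_const.mul continuous_id).continuousOn
      · intro s hs
        rw [interior_Icc] at hs
        have hder : HasDerivAt (fun s => φ s + (-F₁ (r/2)/Dv) * s)
            (dφ s + (-F₁ (r/2)/Dv)) s := by
          exact ((hφat s hs.1).add ((hasDerivAt_id s).const_mul (-F₁ (r/2)/Dv))).congr_deriv (by ring)
        exact hder.differentiableAt.differentiableWithinAt
      · intro s hs
        rw [interior_Icc] at hs
        have hder : HasDerivAt (fun s => φ s + (-F₁ (r/2)/Dv) * s)
            (dφ s + (-F₁ (r/2)/Dv)) s := by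
          exact ((hφat s hs.1).add ((hasDerivAt_id s).const_mul (-F₁ (r/2)/Dv))).congr_deriv (by ring)
        rw [hder.deriv]
        have := hdφ s hs.1 hs.2.le
        have h0 : 0 < -F₁ (r/2)/Dv := div_pos hδ'pos hDv
        linarith
    have hIci : Ici (0:ℝ) \ {0} = Ioi 0 := by
      ext x
      simp only [mem_diff, mem_Ici, mem_singleton_iff, mem_Ioi]
      constructor
      · rintro ⟨h1, h2⟩; exact lt_of_le_of_ne h1 (Ne.symm h2)
      · intro h; exact ⟨h.le, h.ne'⟩
    have hslope := hφ' 0 self_mem_Ici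
    rw [hasDerivWithinAt_iff_tendsto_slope, hIci, hdφ0] at hslope
    have hδDv : 0 < -F₁ (r/2)/Dv := div_pos hδ'pos hDv
    have hev1 : ∀ᶠ x in 𝓝[Ioi 0] (0:ℝ), -(-F₁ (r/2)/Dv) < slope φ 0 x :=
      hslope.eventually (eventually_gt_nhds (by linarith))
    have hev2 : ∀ᶠ x in 𝓝[Ioi 0] (0:ℝ), x ∈ Ioc (0:ℝ) (min (r/2) 1) := by
      filter_upwards [Ioc_mem_nhdsGT hs₁pos] with x hx using hx
    obtain ⟨x, hx1, hx2⟩ := (hev1.and hev2).exists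
    have hxa : φ x + (-F₁ (r/2)/Dv) * x ≤ φ 0 + (-F₁ (r/2)/Dv) * 0 :=
      hantit (left_mem_Icc.2 hs₁pos.le) ⟨hx2.1.le, hx2.2⟩ hx2.1.le
    rw [hφ0, mul_zero, add_zero] at hxa
    have hslopeval : slope φ 0 x = (φ x - 1)/x := by
      rw [slope_def_field, hφ0, sub_zero]
    have hfin : (φ x - 1)/x ≤ -(-F₁ (r/2)/Dv) := by
      rw [div_le_iff₀ hx2.1]
      linarith
    rw [hslopeval] at hx1
    linarith
  -- Gaussian lower bound for φ
  obtain ⟨r₀, hr₀1, c₀, hc₀pos, hGauss⟩ :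
      ∃ r₀ : ℝ, 1 ≤ r₀ ∧ ∃ c₀ : ℝ, 0 < c₀ ∧
        ∀ s : ℝ, r₀ ≤ s → c₀ ≤ φ s * Real.exp (s^2/(8*Dv)) := by
    set F₂ : ℝ → ℝ := fun s => Dv * (ρ s * dφ s) * Real.exp (-(s^2)/(8*Dv))
        + s ^ N * Real.exp (s^2/(8*Dv)) * φ s / 4 with hF₂def
    set Q₂ : ℝ → ℝ := fun s => s ^ (N-1) * Real.exp (s^2/(8*Dv)) *
        ((κ + N/4 + s^2/(16*Dv)) * φ s + lam * Real.exp (-(s^2)/(4*Du)) * φ s ^ q) with hQ₂def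
    have hF₂d : ∀ s ∈ Ioi (0:ℝ), HasDerivAt F₂ (Q₂ s) s := by
      intro s hs
      have h2 : HasDerivAt (fun x : ℝ => -(x^2)/(8*Dv)) (-(2*s)/(8*Dv)) s := by
        simpa using ((hasDerivAt_pow 2 s).neg.div_const (8*Dv))
      have h3 : HasDerivAt (fun x : ℝ => x^2/(8*Dv)) ((2*s)/(8*Dv)) s := by
        simpa using ((hasDerivAt_pow 2 s).div_const (8*Dv))
      have raw := ((hODE s hs).mul h2.exp).add
        ((((hasDerivAt_pow N s).mul h3.exp).mul (hφat s hs)).div_const 4)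
      refine raw.congr_deriv ?_
      symm
      simp only [Pi.mul_apply]
      have hXs : s ^ N = s ^ (N-1) * s := by rw [← pow_succ]; congr 1; omega
      have e8 : Real.exp (s^2/(4*Dv)) = Real.exp (s^2/(8*Dv)) * Real.exp (s^2/(8*Dv)) := by
        rw [← Real.exp_add]; congr 1; field_simp; ring
      have hE0 : Real.exp (s^2/(8*Dv)) ≠ 0 := (Real.exp_pos _).ne'
      rw [hQ₂def, hρ, hXs, e8, show Real.exp (-s^2/(8*Dv)) = (Real.exp (s^2/(8*Dv)))⁻¹ by
        rw [← Real.exp_neg]; ring_nf]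
      field_simp
      ring
    have hF₂eq : ∀ s : ℝ, F₂ s = s^(N-1) * Real.exp (s^2/(8*Dv)) * (Dv * dφ s + s * φ s / 4) := by
      intro s
      have hXs : s ^ N = s ^ (N-1) * s := by rw [← pow_succ]; congr 1; omega
      have e8 : Real.exp (s^2/(4*Dv)) = Real.exp (s^2/(8*Dv)) * Real.exp (s^2/(8*Dv)) := by
        rw [← Real.exp_add]; congr 1; field_simp; ring
      have hE0 : Real.exp (s^2/(8*Dv)) ≠ 0 := (Real.exp_pos _).ne'
      show Dv * (ρ s * dφ s) * Real.exp (-(s^2)/(8*Dv))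
        + s ^ N * Real.exp (s^2/(8*Dv)) * φ s / 4 = _
      rw [hρ, hXs, e8, show Real.exp (-s^2/(8*Dv)) = (Real.exp (s^2/(8*Dv)))⁻¹ by
        rw [← Real.exp_neg]; ring_nf]
      field_simp
    set Rb : ℝ := 1 + Real.sqrt (16*Dv*(-κ)) with hRbdef
    have hRb1 : 1 ≤ Rb := by
      rw [hRbdef]
      linarith [Real.sqrt_nonneg (16*Dv*(-κ))]
    have hRb0 : 0 < Rb := lt_of_lt_of_le one_pos hRb1
    have hRbsq : ∀ s : ℝ, Rb ≤ s → 0 ≤ κ + N/4 + s^2/(16*Dv) := by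
      intro s hsb
      have h0 : 0 ≤ 16*Dv*(-κ) := by nlinarith
      have h1 : Real.sqrt (16*Dv*(-κ)) ≤ s := by rw [hRbdef] at hsb; linarith
      have h2 : 16*Dv*(-κ) ≤ s^2 := by
        have hss := Real.sq_sqrt h0
        nlinarith [Real.sqrt_nonneg (16*Dv*(-κ))]
      have h3 : -κ ≤ s^2/(16*Dv) := by rw [le_div_iff₀ (by positivity)]; linarith
      have h4 : 0 ≤ (N:ℝ)/4 := by positivity
      linarith
    have hQ₂nn : ∀ s : ℝ, Rb ≤ s → 0 ≤ Q₂ s := by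
      intro s hsb
      have hs0 : 0 < s := lt_of_lt_of_le hRb0 hsb
      have h1 : 0 < φ s := hpos s hs0.le
      have h2 : 0 < φ s ^ q := Real.rpow_pos_of_pos h1 q
      have h5 := hRbsq s hsb
      have h6 : 0 ≤ (κ + N/4 + s^2/(16*Dv)) * φ s := mul_nonneg h5 h1.le
      have h7 : 0 ≤ lam * Real.exp (-(s^2)/(4*Du)) * φ s ^ q := by positivity
      show 0 ≤ s ^ (N-1) * Real.exp (s^2/(8*Dv)) *
        ((κ + N/4 + s^2/(16*Dv)) * φ s + lam * Real.exp (-(s^2)/(4*Du)) * φ s ^ q)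
      apply mul_nonneg (by positivity)
      linarith
    have hF₂mono : MonotoneOn F₂ (Ici Rb) :=
      mono Rb F₂ Q₂ hRb0 (fun s hs => hF₂d s (lt_of_lt_of_le hRb0 hs)) hQ₂nn
    have hmder : ∀ s ∈ Ioi (0:ℝ), HasDerivAt (fun u => φ u * Real.exp (u^2/(8*Dv)))
        (Real.exp (s^2/(8*Dv)) * (dφ s + s * φ s/(4*Dv))) s := by
      intro s hs
      have h3 : HasDerivAt (fun x : ℝ => x^2/(8*Dv)) ((2*s)/(8*Dv)) s := by
        simpa using ((hasDerivAt_pow 2 s).div_const (8*Dv))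
      have raw := (hφat s hs).mul h3.exp
      refine raw.congr_deriv ?_
      symm
      field_simp
      ring
    have hentry : ∃ t : ℝ, Rb ≤ t ∧ 0 < Dv * dφ t + t * φ t / 4 := by
      by_contra hcon
      push_neg at hcon
      have hanti : AntitoneOn (fun u => φ u * Real.exp (u^2/(8*Dv))) (Ici Rb) := by
        apply antitoneOn_of_deriv_nonpos (convex_Ici Rb)
          (fun s hs => (hmder s (lt_of_lt_of_le hRb0 hs)).continuousAt.continuousWithinAt)
        · intro s hs
          rw [interior_Ici] at hs
          exact (hmder s (lt_trans hRb0 hs)).differentiableAt.differentiableWithinAt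
        · intro s hs
          rw [interior_Ici] at hs
          rw [(hmder s (lt_trans hRb0 hs)).deriv]
          have h1 := hcon s (le_of_lt hs)
          have h2 : dφ s + s * φ s/(4*Dv) ≤ 0 := by
            have heq : dφ s + s * φ s/(4*Dv) = (Dv * dφ s + s * φ s / 4)/Dv := by
              field_simp
            rw [heq]
            exact div_nonpos_iff.mpr (Or.inr ⟨h1, hDv.le⟩)
          exact mul_nonpos_iff.mpr (Or.inl ⟨(Real.exp_pos _).le, h2⟩)
      have hdecay : ∀ s : ℝ, Rb ≤ s →
          φ s * Real.exp (s^2/(8*Dv)) ≤ φ Rb * Real.exp (Rb^2/(8*Dv)) :=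
        fun s hs => hanti self_mem_Ici hs hs
      have ha₀ : 0 < F₁ Rb := hF₁pos Rb hRb0
      have hF₁mono : MonotoneOn F₁ (Ici Rb) :=
        mono Rb F₁ Q₁ hRb0 (fun s hs => hF₁d s (lt_of_lt_of_le hRb0 hs))
          (fun s hs => (hQ₁pos s (lt_of_lt_of_le hRb0 hs)).le)
      set C₁ := φ Rb * Real.exp (Rb^2/(8*Dv)) with hC₁def
      have hC₁pos : 0 < C₁ := by
        have := hpos Rb hRb0.le
        rw [hC₁def]; positivity
      set c₇ : ℝ := (Nat.factorial (N+1) : ℝ) * (8*Dv)^(N+1) with hc₇def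
      have hc₇pos : 0 < c₇ := by
        have hf : (0:ℝ) < (Nat.factorial (N+1) : ℝ) :=
          Nat.cast_pos.2 (Nat.factorial_pos _)
        rw [hc₇def]; positivity
      set s' := max Rb (C₁*c₇/(4*F₁ Rb) + 1) with hs'def
      have hs'Rb : Rb ≤ s' := le_max_left _ _
      have hs'1 : (1:ℝ) ≤ s' := le_trans hRb1 hs'Rb
      have hs'0 : (0:ℝ) < s' := lt_of_lt_of_le one_pos hs'1
      have h1 : F₁ Rb ≤ F₁ s' := hF₁mono self_mem_Ici hs'Rb hs'Rb
      have h2 : F₁ s' ≤ s'^N * φ s' / 4 := by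
        rw [hF₁eq]
        have h3 := hcon s' hs'Rb
        have hXs : s'^(N-1) * s' = s'^N := by rw [← pow_succ]; congr 1; omega
        have h4 : s'^(N-1) * (Dv*dφ s' + s'*φ s'/4) ≤ 0 :=
          mul_nonpos_iff.mpr (Or.inl ⟨pow_nonneg hs'0.le _, h3⟩)
        rw [← hXs]
        nlinarith [h4]
      have h5 : φ s' * Real.exp (s'^2/(8*Dv)) ≤ C₁ := hdecay s' hs'Rb
      have hexp_pos : (0:ℝ) < Real.exp (s'^2/(8*Dv)) := Real.exp_pos _
      have h6 : F₁ Rb * Real.exp (s'^2/(8*Dv)) ≤ s'^N * C₁ / 4 := by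
        have h6a := mul_le_mul_of_nonneg_right (h1.trans h2) hexp_pos.le
        have h8 : (0:ℝ) ≤ s'^N := pow_nonneg hs'0.le _
        nlinarith [h5, h8]
      have hx : (0:ℝ) ≤ s'^2/(8*Dv) := by positivity
      have h9 := Real.pow_div_factorial_le_exp _ hx (N+1)
      have h9' : s'^(2*N+2)/c₇ ≤ Real.exp (s'^2/(8*Dv)) := by
        have heq : s'^(2*N+2)/c₇ = (s'^2/(8*Dv))^(N+1) / (Nat.factorial (N+1) : ℝ) := by
          rw [div_pow, ← pow_mul, hc₇def]
          field_simp
          ring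
        rw [heq]; exact h9
      have h10 : F₁ Rb * (s'^(2*N+2)/c₇) ≤ s'^N * C₁/4 :=
        le_trans (mul_le_mul_of_nonneg_left h9' ha₀.le) h6
      have hpowsplit : s'^(2*N+2) = s'^N * s'^(N+2) := by rw [← pow_add]; congr 1; omega
      have h10' : F₁ Rb * s'^(2*N+2) ≤ (s'^N * C₁/4) * c₇ := by
        rw [← div_le_iff₀ hc₇pos]
        calc F₁ Rb * s'^(2*N+2)/c₇ = F₁ Rb * (s'^(2*N+2)/c₇) := by ring
          _ ≤ s'^N * C₁/4 := h10
      have hsN : (0:ℝ) < s'^N := pow_pos hs'0 _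
      have h11 : F₁ Rb * s'^(N+2) ≤ C₁ * c₇/4 := by
        apply le_of_mul_le_mul_right _ hsN
        calc F₁ Rb * s'^(N+2) * s'^N = F₁ Rb * s'^(2*N+2) := by
              rw [hpowsplit]; ring
          _ ≤ (s'^N * C₁/4) * c₇ := h10'
          _ = C₁ * c₇/4 * s'^N := by ring
      have h12 : s' ≤ s'^(N+2) := by
        calc s' = s'^1 := (pow_one s').symm
          _ ≤ s'^(N+2) := pow_le_pow_right₀ hs'1 (by omega)
      have h13 : F₁ Rb * s' ≤ C₁*c₇/4 :=
        le_trans (mul_le_mul_of_nonneg_left h12 ha₀.le) h11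
      have h14 : C₁*c₇/(4*F₁ Rb) + 1 ≤ s' := le_max_right _ _
      have h15 : F₁ Rb * (C₁*c₇/(4*F₁ Rb) + 1) ≤ F₁ Rb * s' :=
        mul_le_mul_of_nonneg_left h14 ha₀.le
      have h16 : F₁ Rb * (C₁*c₇/(4*F₁ Rb) + 1) = C₁*c₇/4 + F₁ Rb := by
        field_simp
      have h17 : C₁*c₇/4 + F₁ Rb ≤ C₁*c₇/4 := by
        rw [← h16]
        exact le_trans h15 h13
      exact absurd h17 (not_le.mpr (lt_add_of_pos_right _ ha₀))
    obtain ⟨t, htRb, htpos⟩ := hentry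
    have ht0 : (0:ℝ) < t := lt_of_lt_of_le hRb0 htRb
    have hF₂t : 0 < F₂ t := by
      rw [hF₂eq]
      exact mul_pos (mul_pos (pow_pos ht0 _) (Real.exp_pos _)) htpos
    have hbr : ∀ s : ℝ, t ≤ s → 0 < Dv * dφ s + s * φ s / 4 := by
      intro s hts
      have hts' : Rb ≤ s := le_trans htRb hts
      have hs0 : (0:ℝ) < s := lt_of_lt_of_le hRb0 hts'
      have h20 : 0 < F₂ s := lt_of_lt_of_le hF₂t (hF₂mono htRb hts' hts)
      by_contra hcon2
      push_neg at hcon2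
      rw [hF₂eq] at h20
      have := mul_nonpos_iff.mpr (Or.inl
        ⟨mul_nonneg (pow_nonneg hs0.le (N-1)) (Real.exp_pos (s^2/(8*Dv))).le, hcon2⟩)
      linarith
    have hmmono : MonotoneOn (fun u => φ u * Real.exp (u^2/(8*Dv))) (Ici t) := by
      apply mono t _ (fun s => Real.exp (s^2/(8*Dv)) * (dφ s + s * φ s/(4*Dv))) ht0
        (fun s hs => hmder s (lt_of_lt_of_le ht0 hs))
      intro s hs
      have h1 := hbr s hs
      have h2 : 0 ≤ dφ s + s * φ s/(4*Dv) := by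
        have heq : dφ s + s * φ s/(4*Dv) = (Dv * dφ s + s * φ s / 4)/Dv := by
          field_simp
        rw [heq]
        positivity
      positivity
    refine ⟨t, le_trans hRb1 htRb, φ t * Real.exp (t^2/(8*Dv)), ?_, ?_⟩
    · have := hpos t ht0.le
      positivity
    · intro s hts
      exact hmmono self_mem_Ici hts hts
  -- final argument with F₃
  set F₃ : ℝ → ℝ := fun s => Dv * (ρ s * dφ s) * s ^ η
      - Dv * η * (s ^ N * s ^ (η-2) * Real.exp (s^2/(4*Dv)) * φ s) with hF₃def
  set Q₃ : ℝ → ℝ := fun s => s ^ N * s ^ (η-1) * Real.exp (s^2/(4*Dv)) *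
      ((κ - η/2 - Dv*η*((N:ℝ)+η-2)/s^2) * φ s
        + lam * Real.exp (-(s^2)/(4*Du)) * φ s ^ q) with hQ₃def
  have hF₃d : ∀ s ∈ Ioi (0:ℝ), HasDerivAt F₃ (Q₃ s) s := by
    intro s hs
    have hs0 : (0:ℝ) < s := hs
    have hv : HasDerivAt (fun x : ℝ => x ^ η) (η * s ^ (η-1)) s :=
      Real.hasDerivAt_rpow_const (Or.inl hs0.ne')
    have hv2 : HasDerivAt (fun x : ℝ => x ^ (η-2)) ((η-2) * s ^ (η-2-1)) s :=
      Real.hasDerivAt_rpow_const (Or.inl hs0.ne')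
    have h3 : HasDerivAt (fun x : ℝ => x^2/(4*Dv)) ((2*s)/(4*Dv)) s := by
      simpa using ((hasDerivAt_pow 2 s).div_const (4*Dv))
    have raw := ((hODE s hs).mul hv).sub
      (((((hasDerivAt_pow N s).mul hv2).mul h3.exp).mul (hφat s hs)).const_mul (Dv*η))
    refine raw.congr_deriv ?_
    symm
    simp only [Pi.mul_apply]
    have h1 : s ^ (η-2) * s = s ^ (η-1) := by
      rw [← Real.rpow_add_one hs0.ne']; congr 1; ring
    have h2' : s ^ (η-2-1) * s = s ^ (η-2) := by
      rw [← Real.rpow_add_one hs0.ne']; congr 1; ring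
    have h3' : s ^ (η-1) * s = s ^ η := by
      rw [← Real.rpow_add_one hs0.ne']; congr 1; ring
    have hXs : s ^ N = s ^ (N-1) * s := by rw [← pow_succ]; congr 1; omega
    show s ^ N * s ^ (η-1) * Real.exp (s^2/(4*Dv)) *
      ((κ - η/2 - Dv*η*((N:ℝ)+η-2)/s^2) * φ s
        + lam * Real.exp (-(s^2)/(4*Du)) * φ s ^ q) = _
    rw [hρ, hXs, ← h3', ← h1, ← h2']
    field_simp
    ring
  have hF₃eq : ∀ s : ℝ, 0 < s → F₃ s =
      Dv * (s^(N-1) * Real.exp (s^2/(4*Dv)) * s^(η-1)) * (s * dφ s - η * φ s) := by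
    intro s hs0
    show Dv * (ρ s * dφ s) * s ^ η
      - Dv * η * (s ^ N * s ^ (η-2) * Real.exp (s^2/(4*Dv)) * φ s) = _
    have h1 : s ^ (η-2) * s = s ^ (η-1) := by
      rw [← Real.rpow_add_one hs0.ne']; congr 1; ring
    have h3' : s ^ (η-1) * s = s ^ η := by
      rw [← Real.rpow_add_one hs0.ne']; congr 1; ring
    have hXs : s ^ N = s ^ (N-1) * s := by rw [← pow_succ]; congr 1; omega
    rw [hρ, hXs, ← h3', ← h1]
    ring
  have hc₁ : 0 < κ - η/2 := by linarith
  have hBnn : (0:ℝ) ≤ |Dv*η*((N:ℝ)+η-2)| := abs_nonneg _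
  set R₆ : ℝ := max r₀ (1 + Real.sqrt (2*|Dv*η*((N:ℝ)+η-2)|/(κ - η/2))) with hR₆def
  have hR₆r₀ : r₀ ≤ R₆ := le_max_left _ _
  have hR₆1 : (1:ℝ) ≤ R₆ := le_trans hr₀1 hR₆r₀
  have hR₆0 : (0:ℝ) < R₆ := lt_of_lt_of_le one_pos hR₆1
  have hbr : ∀ s : ℝ, R₆ ≤ s →
      (κ - η/2)/2 ≤ κ - η/2 - Dv*η*((N:ℝ)+η-2)/s^2 := by
    intro s hs
    have hs1 : (1:ℝ) ≤ s := le_trans hR₆1 hs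
    have hs0 : (0:ℝ) < s := lt_of_lt_of_le one_pos hs1
    have h1 : Real.sqrt (2*|Dv*η*((N:ℝ)+η-2)|/(κ - η/2)) ≤ s := by
      have h1a := le_max_right r₀ (1 + Real.sqrt (2*|Dv*η*((N:ℝ)+η-2)|/(κ - η/2)))
      rw [← hR₆def] at h1a
      linarith
    have h2a : (0:ℝ) ≤ 2*|Dv*η*((N:ℝ)+η-2)|/(κ-η/2) := by positivity
    have h2 : 2*|Dv*η*((N:ℝ)+η-2)|/(κ - η/2) ≤ s^2 := by
      nlinarith [Real.sq_sqrt h2a, Real.sqrt_nonneg (2*|Dv*η*((N:ℝ)+η-2)|/(κ-η/2))]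
    have h4 : Dv*η*((N:ℝ)+η-2) ≤ |Dv*η*((N:ℝ)+η-2)| := le_abs_self _
    have h5 : 2*|Dv*η*((N:ℝ)+η-2)| ≤ (κ-η/2) * s^2 := by
      rw [div_le_iff₀ hc₁] at h2; linarith
    have h3 : Dv*η*((N:ℝ)+η-2)/s^2 ≤ (κ - η/2)/2 := by
      rw [div_le_div_iff₀ (by positivity) (by norm_num : (0:ℝ) < 2)]
      nlinarith
    linarith
  have hQ₃lb : ∀ s : ℝ, R₆ ≤ s →
      (κ - η/2)/2 * (s ^ N * s ^ (η-1) * Real.exp (s^2/(4*Dv)) * φ s) ≤ Q₃ s := by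
    intro s hs
    have hs1 : (1:ℝ) ≤ s := le_trans hR₆1 hs
    have hs0 : (0:ℝ) < s := lt_of_lt_of_le one_pos hs1
    have hφp : 0 < φ s := hpos s hs0.le
    have hWnn : (0:ℝ) ≤ s ^ N * s ^ (η-1) * Real.exp (s^2/(4*Dv)) :=
      mul_nonneg (mul_nonneg (pow_nonneg hs0.le N) (Real.rpow_nonneg hs0.le _))
        (Real.exp_pos _).le
    have h6 : (κ-η/2)/2 * φ s ≤ (κ - η/2 - Dv*η*((N:ℝ)+η-2)/s^2) * φ s :=
      mul_le_mul_of_nonneg_right (hbr s hs) hφp.le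
    have h7 : (0:ℝ) ≤ lam * Real.exp (-(s^2)/(4*Du)) * φ s ^ q := by
      have := Real.rpow_pos_of_pos hφp q
      positivity
    have h8 : (κ-η/2)/2 * φ s ≤ (κ - η/2 - Dv*η*((N:ℝ)+η-2)/s^2) * φ s
        + lam * Real.exp (-(s^2)/(4*Du)) * φ s ^ q := by linarith
    calc (κ - η/2)/2 * (s ^ N * s ^ (η-1) * Real.exp (s^2/(4*Dv)) * φ s)
        = (s ^ N * s ^ (η-1) * Real.exp (s^2/(4*Dv))) * ((κ-η/2)/2 * φ s) := by ring
      _ ≤ (s ^ N * s ^ (η-1) * Real.exp (s^2/(4*Dv))) *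
          ((κ - η/2 - Dv*η*((N:ℝ)+η-2)/s^2) * φ s
            + lam * Real.exp (-(s^2)/(4*Du)) * φ s ^ q) :=
          mul_le_mul_of_nonneg_left h8 hWnn
      _ = Q₃ s := by rw [hQ₃def]
  have hQ₃nn : ∀ s : ℝ, R₆ ≤ s → 0 ≤ Q₃ s := by
    intro s hs
    have hs0 : (0:ℝ) < s := lt_of_lt_of_le hR₆0 hs
    have hφp : 0 < φ s := hpos s hs0.le
    have hWnn : (0:ℝ) ≤ s ^ N * s ^ (η-1) * Real.exp (s^2/(4*Dv)) * φ s :=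
      mul_nonneg (mul_nonneg (mul_nonneg (pow_nonneg hs0.le N)
        (Real.rpow_nonneg hs0.le _)) (Real.exp_pos _).le) hφp.le
    have := hQ₃lb s hs
    nlinarith
  have hF₃mono : MonotoneOn F₃ (Ici R₆) :=
    mono R₆ F₃ Q₃ hR₆0 (fun s hs => hF₃d s (lt_of_lt_of_le hR₆0 hs)) hQ₃nn
  obtain ⟨Rg, hRg1, hRg⟩ := rpow_mul_exp_big Dv hDv (η-1)
  set R₇ : ℝ := max R₆ Rg with hR₇def
  have hR₆R₇ : R₆ ≤ R₇ := le_max_left _ _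
  have hR₇1 : (1:ℝ) ≤ R₇ := le_trans hR₆1 hR₆R₇
  have hR₇0 : (0:ℝ) < R₇ := lt_of_lt_of_le one_pos hR₇1
  set c₆ : ℝ := (κ - η/2)/2 * c₀ with hc₆def
  have hc₆pos : 0 < c₆ := by rw [hc₆def]; positivity
  have hQ₃growth : ∀ s : ℝ, R₇ ≤ s → c₆ * s ≤ Q₃ s := by
    intro s hs
    have hs1 : (1:ℝ) ≤ s := le_trans hR₇1 hs
    have hs0 : (0:ℝ) < s := lt_of_lt_of_le one_pos hs1
    have hsR₆ : R₆ ≤ s := le_trans hR₆R₇ hs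
    have hsRg : Rg ≤ s := le_trans (le_max_right R₆ Rg) hs
    have hsr₀ : r₀ ≤ s := le_trans hR₆r₀ hsR₆
    have e8 : Real.exp (s^2/(4*Dv)) = Real.exp (s^2/(8*Dv)) * Real.exp (s^2/(8*Dv)) := by
      rw [← Real.exp_add]; congr 1; field_simp; ring
    have hA := hRg s hsRg
    have hB := hGauss s hsr₀
    have hsN1 : (1:ℝ) ≤ s ^ N := one_le_pow₀ hs1
    have hkey : c₀ * s ≤ s ^ N * s ^ (η-1) * Real.exp (s^2/(4*Dv)) * φ s := by
      have step1 : c₀ * s ≤ (φ s * Real.exp (s^2/(8*Dv)))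
          * (s ^ (η-1) * Real.exp (s^2/(8*Dv))) :=
        mul_le_mul hB hA hs0.le
          (mul_nonneg (hpos s hs0.le).le (Real.exp_pos _).le)
      have step2 : (φ s * Real.exp (s^2/(8*Dv))) * (s ^ (η-1) * Real.exp (s^2/(8*Dv)))
          ≤ s ^ N * ((φ s * Real.exp (s^2/(8*Dv))) * (s ^ (η-1) * Real.exp (s^2/(8*Dv)))) := by
        apply le_mul_of_one_le_left _ hsN1
        have hφp : 0 < φ s := hpos s hs0.le
        exact mul_nonneg (mul_nonneg hφp.le (Real.exp_pos _).le)
          (mul_nonneg (Real.rpow_nonneg hs0.le _) (Real.exp_pos _).le)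
      have step3 : s ^ N * ((φ s * Real.exp (s^2/(8*Dv))) * (s ^ (η-1) * Real.exp (s^2/(8*Dv))))
          = s ^ N * s ^ (η-1) * Real.exp (s^2/(4*Dv)) * φ s := by
        rw [e8]; ring
      linarith
    have h10 := hQ₃lb s hsR₆
    have h11 : c₆ * s ≤ (κ - η/2)/2 * (s ^ N * s ^ (η-1) * Real.exp (s^2/(4*Dv)) * φ s) := by
      rw [hc₆def]
      calc (κ - η/2)/2 * c₀ * s = (κ - η/2)/2 * (c₀ * s) := by ring
        _ ≤ (κ - η/2)/2 * (s ^ N * s ^ (η-1) * Real.exp (s^2/(4*Dv)) * φ s) := by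
            apply mul_le_mul_of_nonneg_left hkey
            positivity
    linarith
  have hF₄d : ∀ s ∈ Ioi (0:ℝ), HasDerivAt (fun u => F₃ u - c₆*u^2/2) (Q₃ s - c₆*s) s := by
    intro s hs
    have raw := (hF₃d s hs).sub (((hasDerivAt_pow 2 s).const_mul c₆).div_const 2)
    refine raw.congr_deriv ?_
    symm
    push_cast
    ring
  have hF₄mono : MonotoneOn (fun u => F₃ u - c₆*u^2/2) (Ici R₇) := by
    apply mono R₇ _ (fun s => Q₃ s - c₆*s) hR₇0
      (fun s hs => hF₄d s (lt_of_lt_of_le hR₇0 hs))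
    intro s hs
    have := hQ₃growth s hs
    linarith
  set r₂ : ℝ := Real.sqrt (R₇^2 + 2*(1 + |F₃ R₇|)/c₆) with hr₂def
  have hargnn : (0:ℝ) ≤ R₇^2 + 2*(1+|F₃ R₇|)/c₆ := by positivity
  have hr₂R₇ : R₇ ≤ r₂ := by
    have h0 : (0:ℝ) ≤ 2*(1+|F₃ R₇|)/c₆ := by positivity
    have h1 : R₇^2 ≤ R₇^2 + 2*(1+|F₃ R₇|)/c₆ := by linarith
    have h2 := Real.sqrt_le_sqrt h1
    rw [Real.sqrt_sq hR₇0.le] at h2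
    exact h2
  have hr₂0 : (0:ℝ) < r₂ := lt_of_lt_of_le hR₇0 hr₂R₇
  have hr₂sq : r₂^2 = R₇^2 + 2*(1+|F₃ R₇|)/c₆ := Real.sq_sqrt hargnn
  have hF₃r₂ : 0 < F₃ r₂ := by
    have hm := hF₄mono self_mem_Ici hr₂R₇ hr₂R₇
    have hm' : F₃ R₇ - c₆*R₇^2/2 ≤ F₃ r₂ - c₆*r₂^2/2 := hm
    have hfs : c₆ * (2*(1+|F₃ R₇|)/c₆) = 2*(1+|F₃ R₇|) := by
      field_simp
    have hdiff : c₆ * r₂^2 - c₆ * R₇^2 = 2*(1+|F₃ R₇|) := by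
      calc c₆ * r₂^2 - c₆ * R₇^2 = c₆ * (2*(1+|F₃ R₇|)/c₆) := by rw [hr₂sq]; ring
        _ = 2*(1+|F₃ R₇|) := hfs
    have hna := neg_abs_le (F₃ R₇)
    clear_value F₃ c₆ r₂ R₇
    linarith only [hm', hdiff, hna]
  have hkeypos : ∀ s : ℝ, r₂ ≤ s → 0 < s * dφ s - η * φ s := by
    intro s hs
    have hsR₆ : R₆ ≤ s := le_trans hR₆R₇ (le_trans hr₂R₇ hs)
    have hs0 : (0:ℝ) < s := lt_of_lt_of_le hR₆0 hsR₆
    have h1 : 0 < F₃ s :=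
      lt_of_lt_of_le hF₃r₂ (hF₃mono (le_trans hR₆R₇ hr₂R₇) hsR₆ hs)
    rw [hF₃eq s hs0] at h1
    by_contra hcon
    push_neg at hcon
    have hCpos : 0 < Dv * (s^(N-1) * Real.exp (s^2/(4*Dv)) * s^(η-1)) :=
      mul_pos hDv (mul_pos (mul_pos (pow_pos hs0 _) (Real.exp_pos _))
        (Real.rpow_pos_of_pos hs0 _))
    have := mul_nonpos_iff.mpr (Or.inl ⟨hCpos.le, hcon⟩)
    linarith
  have hgmono : MonotoneOn (fun u => φ u * u ^ (-η)) (Ici r₂) := by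
    apply mono r₂ _ (fun s => dφ s * s^(-η) + φ s * (-η * s^(-η-1))) hr₂0
    · intro s hs
      have hs0 : (0:ℝ) < s := lt_of_lt_of_le hr₂0 hs
      exact (hφat s hs0).mul (Real.hasDerivAt_rpow_const (Or.inl hs0.ne'))
    · intro s hs
      have hs0 : (0:ℝ) < s := lt_of_lt_of_le hr₂0 hs
      have heq : dφ s * s^(-η) + φ s * (-η * s^(-η-1))
          = s^(-η-1) * (s * dφ s - η * φ s) := by
        rw [show s^(-η) = s^(-η-1) * s by rw [← Real.rpow_add_one hs0.ne']; congr 1; ring]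
        ring
      rw [heq]
      exact mul_nonneg (Real.rpow_nonneg hs0.le _) (hkeypos s hs).le
  have hφr₂ : 0 < φ r₂ := hpos r₂ hr₂0.le
  have hKpos : 0 < φ r₂ * r₂^(-η) := mul_pos hφr₂ (Real.rpow_pos_of_pos hr₂0 _)
  refine ⟨φ r₂ * r₂^(-η)/2, by positivity, r₂, hr₂0, ?_⟩
  intro r hr
  have hr0 : (0:ℝ) < r := lt_of_lt_of_le hr₂0 hr
  have h1 : φ r₂ * r₂^(-η) ≤ φ r * r^(-η) := hgmono self_mem_Ici hr hr
  have h2 : 0 < r ^ η := Real.rpow_pos_of_pos hr0 η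
  have h3 : r^(-η) * r^η = 1 := by
    rw [← Real.rpow_add hr0]
    simp
  have h4 : (φ r₂ * r₂^(-η)) * r^η ≤ φ r := by
    calc (φ r₂ * r₂^(-η)) * r^η ≤ (φ r * r^(-η)) * r^η :=
          mul_le_mul_of_nonneg_right h1 h2.le
      _ = φ r * (r^(-η) * r^η) := by ring
      _ = φ r := by rw [h3, mul_one]
  nlinarith
end
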